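/- arXiv:2108.07149 — 10 statements merged into one kernel-verified Lean document; each statement's English description precedes it below -/
import Mathlib

section
/- Let q ∈ ℂ with 0 < |q| < 1 and let y ∈ ℂ be such that y ≠ q^n for every n ∈ ℤ. Then the function s(·,y;q) : x ↦ Σ_{n∈ℤ} q^{n(n−1)/2}·(−x)^n / (q^n − y) is holomorphic on ℂ ∖ {0}, i.e. it is complex-differentiable at every point of the open set ℂ ∖ {0}. -/
open Filter Topology

/-- A generic helper: a positive function on `ℕ` eventually bounded below by a positive
constant has a uniform positive lower bound. -/
lemma pos_lower_bound {g : ℕ → ℝ} (hpos : ∀ k, 0 < g k) {b : ℝ} (hb : 0 < b)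
    {N : ℕ} (h : ∀ k ≥ N, b ≤ g k) : ∃ c > 0, ∀ k, c ≤ g k := by
  refine ⟨min b ((Finset.range (N + 1)).inf' (by simp) g), lt_min hb ?_, fun k => ?_⟩
  · exact (Finset.lt_inf'_iff _).2 fun i _ => hpos i
  · rcases le_or_gt N k with hk | hk
    · exact le_trans (min_le_left _ _) (h k hk)
    · exact le_trans (min_le_right _ _)
        (Finset.inf'_le _ (Finset.mem_range.2 (by omega)))

/-- Lower bound for the denominator `‖q ^ n - y‖`. -/
lemma den_bound (q y : ℂ) (hq0 : 0 < ‖q‖) (hq1 : ‖q‖ < 1)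
    (hy : ∀ n : ℤ, y ≠ q ^ n) :
    ∃ c > 0, ∀ n : ℤ, c * ‖q‖ ^ n.natAbs ≤ ‖q ^ n - y‖ := by
  have hqne : q ≠ 0 := by
    intro h; simp [h] at hq0
  have habs_le_one : ∀ k : ℕ, ‖q‖ ^ k ≤ 1 := fun k =>
    pow_le_one₀ hq0.le hq1.le
  -- L1 : lower bound for ‖1 - y * q ^ k‖
  have L1 : ∃ c > 0, ∀ k : ℕ, c ≤ ‖1 - y * q ^ k‖ := by
    have htend : Tendsto (fun k : ℕ => ‖1 - y * q ^ k‖) atTop (𝓝 1) := by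
      have h0 : Tendsto (fun k : ℕ => y * q ^ k) atTop (𝓝 0) := by
        simpa using (tendsto_pow_atTop_nhds_zero_of_norm_lt_one (x := q)
          (by simpa using hq1)).const_mul y
      have : Tendsto (fun k : ℕ => (1 : ℂ) - y * q ^ k) atTop (𝓝 1) := by
        simpa using (tendsto_const_nhds (x := (1:ℂ)) (f := atTop)).sub h0
      simpa [Function.comp_def] using (continuous_norm.tendsto 1).comp this
    obtain ⟨N, hN⟩ := (htend.eventually (eventually_ge_nhds (by norm_num : (1:ℝ)/2 < 1))).exists_forall_of_atTop
    refine pos_lower_bound (fun k => ?_) (by norm_num : (0:ℝ) < 1/2) hN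
    · rw [norm_pos_iff]
      intro h
      have : y * q ^ k = 1 := by linear_combination -h
      have : y = q ^ (-(k : ℤ)) := by
        rw [zpow_neg, zpow_natCast, ← one_div, eq_div_iff (pow_ne_zero k hqne)]
        linear_combination this
      exact hy _ this
  -- L2 : lower bound for ‖q ^ k - y‖ relative to ‖q‖ ^ k
  have L2 : ∃ c > 0, ∀ k : ℕ, c * ‖q‖ ^ k ≤ ‖q ^ k - y‖ := by
    rcases eq_or_ne y 0 with rfl | hy0
    · exact ⟨1, one_pos, fun k => by simp [map_pow]⟩
    · have htend : Tendsto (fun k : ℕ => ‖q ^ k - y‖) atTop (𝓝 (‖y‖)) := by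
        have h0 : Tendsto (fun k : ℕ => q ^ k - y) atTop (𝓝 (-y)) := by
          simpa using (tendsto_pow_atTop_nhds_zero_of_norm_lt_one (x := q)
            (by simpa using hq1)).sub (tendsto_const_nhds (x := y))
        simpa [Function.comp_def] using (continuous_norm.tendsto (-y)).comp h0
      have hypos : 0 < ‖y‖ / 2 := by
        exact half_pos (norm_pos_iff.mpr hy0)
      obtain ⟨N, hN⟩ := (htend.eventually (eventually_ge_nhds
        (by linarith : ‖y‖ / 2 < ‖y‖))).exists_forall_of_atTop
      obtain ⟨c, hc, hcle⟩ := pos_lower_bound (g := fun k => ‖q ^ k - y‖)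
        (fun k => by
          rw [norm_pos_iff, sub_ne_zero]
          intro h
          exact hy k (by rw [← h, zpow_natCast])) hypos hN
      exact ⟨c, hc, fun k => le_trans (by
        nlinarith [habs_le_one k, hc.le, pow_nonneg hq0.le k]) (hcle k)⟩
  obtain ⟨c₁, hc₁, h₁⟩ := L1
  obtain ⟨c₂, hc₂, h₂⟩ := L2
  refine ⟨min c₁ c₂, lt_min hc₁ hc₂, fun n => ?_⟩
  rcases le_or_gt 0 n with hn | hn
  · lift n to ℕ using hn
    rw [zpow_natCast, Int.natAbs_natCast]
    calc min c₁ c₂ * ‖q‖ ^ n ≤ c₂ * ‖q‖ ^ n := by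
          have := pow_nonneg hq0.le n
          nlinarith [min_le_right c₁ c₂]
      _ ≤ _ := h₂ n
  · set k := n.natAbs with hk
    have hnk : n = -(k : ℤ) := by omega
    have key : q ^ n - y = q ^ n * (1 - y * q ^ k) := by
      have h1 : q ^ n * (q ^ k : ℂ) = 1 := by
        rw [hnk, ← zpow_natCast q k, ← zpow_add₀ hqne]; simp
      rw [mul_sub, mul_one, mul_comm y, ← mul_assoc, h1, one_mul]
    rw [key, norm_mul]
    have hqn : ‖q ^ n‖ = (‖q‖) ^ n := by
      simp [map_zpow₀]
    have h1le : (1 : ℝ) ≤ ‖q ^ n‖ := by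
      rw [hqn, hnk]
      rw [zpow_neg, zpow_natCast, one_le_inv_iff₀]
      exact ⟨pow_pos hq0 k, habs_le_one k⟩
    calc min c₁ c₂ * ‖q‖ ^ k ≤ c₁ * 1 := by
          nlinarith [min_le_left c₁ c₂, habs_le_one k, pow_nonneg hq0.le k]
      _ ≤ ‖q ^ n‖ * ‖1 - y * q ^ k‖ := by
          have := h₁ k
          nlinarith

lemma nat_side_summable {t M C : ℝ} (ht0 : 0 < t) (ht1 : t < 1) (hM : 0 < M) (E : ℕ → ℤ)
    (hE : ∀ k : ℕ, E k + ((k : ℤ) - 1) ≤ E (k + 1)) :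
    Summable (fun k : ℕ => C * t ^ E k * M ^ k) := by
  apply summable_of_ratio_norm_eventually_le (r := 1/2) (by norm_num)
  have hev : ∀ᶠ k : ℕ in atTop, t ^ k * (t⁻¹ * M) ≤ 1/2 := by
    have h0 : Tendsto (fun k : ℕ => t ^ k * (t⁻¹ * M)) atTop (𝓝 0) := by
      simpa using (tendsto_pow_atTop_nhds_zero_of_lt_one ht0.le ht1).mul_const (t⁻¹ * M)
    exact h0.eventually (eventually_le_nhds (by norm_num))
  filter_upwards [hev] with k hk
  have h1 : ‖C * t ^ E (k+1) * M ^ (k+1)‖ = |C| * t ^ E (k+1) * M ^ (k+1) := by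
    rw [Real.norm_eq_abs, abs_mul, abs_mul, abs_of_pos (zpow_pos ht0 _),
      abs_of_pos (pow_pos hM _)]
  have h2 : ‖C * t ^ E k * M ^ k‖ = |C| * t ^ E k * M ^ k := by
    rw [Real.norm_eq_abs, abs_mul, abs_mul, abs_of_pos (zpow_pos ht0 _),
      abs_of_pos (pow_pos hM _)]
  rw [h1, h2]
  have hle : t ^ E (k+1) ≤ t ^ E k * (t ^ k * t⁻¹) := by
    calc t ^ E (k+1) ≤ t ^ (E k + ((k : ℤ) - 1)) :=
          zpow_le_zpow_right_of_le_one₀ ht0 ht1.le (hE k)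
      _ = t ^ E k * (t ^ k * t⁻¹) := by
          rw [zpow_add₀ ht0.ne', zpow_sub₀ ht0.ne', zpow_natCast, zpow_one,
            div_eq_mul_inv]
  calc |C| * t ^ E (k+1) * M ^ (k+1)
      ≤ |C| * (t ^ E k * (t ^ k * t⁻¹)) * M ^ (k+1) := by
        gcongr
    _ = (|C| * t ^ E k * M ^ k) * (t ^ k * (t⁻¹ * M)) := by
        rw [pow_succ]; ring
    _ ≤ (|C| * t ^ E k * M ^ k) * (1/2) :=
        mul_le_mul_of_nonneg_left hk (by positivity)
    _ = 1/2 * (|C| * t ^ E k * M ^ k) := by ring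

lemma int_summable_aux {t M C : ℝ} (ht0 : 0 < t) (ht1 : t < 1) (hM : 0 < M) :
    Summable (fun n : ℤ => C * t ^ (n * (n - 1) / 2 - (n.natAbs : ℤ)) * M ^ n.natAbs) := by
  apply Summable.of_nat_of_neg
  · have := nat_side_summable (C := C) ht0 ht1 hM
      (fun k => ((k : ℤ) * ((k : ℤ) - 1) / 2 - (k : ℤ)))
      (fun k => by
        have h : ((k : ℤ) + 1) * (((k : ℤ) + 1) - 1) = (k : ℤ) * ((k : ℤ) - 1) + 2 * k := by ring
        push_cast
        omega)
    refine this.congr fun k => ?_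
    simp
  · have := nat_side_summable (C := C) ht0 ht1 hM
      (fun k => ((k : ℤ) * ((k : ℤ) + 1) / 2 - (k : ℤ)))
      (fun k => by
        have h : ((k : ℤ) + 1) * (((k : ℤ) + 1) + 1) = (k : ℤ) * ((k : ℤ) + 1) + 2 * (k + 1) := by
          ring
        push_cast
        omega)
    refine this.congr fun k => ?_
    have h : (-(k : ℤ)) * ((-(k : ℤ)) - 1) = (k : ℤ) * ((k : ℤ) + 1) := by ring
    simp [h]

/-- `s(x,y;q) := Σ_{n∈ℤ} q^{n(n−1)/2}·(−x)^n / (q^n − y)`. -/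
noncomputable def appellS (q x y : ℂ) : ℂ :=
  ∑' n : ℤ, q ^ (n * (n - 1) / 2) * (-x) ^ n / (q ^ n - y)

/-- For `0 < |q| < 1` and `y ∉ q^ℤ`, the function `x ↦ s(x,y;q)` is holomorphic on
`ℂ ∖ {0}`: it is complex-differentiable at every point of this open set. -/
theorem appell_lerch_holomorphic_fst (q y : ℂ)
    (hq0 : 0 < ‖q‖) (hq1 : ‖q‖ < 1)
    (hy : ∀ n : ℤ, y ≠ q ^ n) :
    ∀ x : ℂ, x ≠ 0 → DifferentiableAt ℂ (fun x : ℂ => appellS q x y) x := by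
  intro x hx
  obtain ⟨c, hc, hden⟩ := den_bound q y hq0 hq1 hy
  set t := ‖q‖ with ht
  have hx0 : 0 < ‖x‖ := by simpa using hx
  set r : ℝ := ‖x‖ / 2 with hr
  have hr0 : 0 < r := by positivity
  set U : Set ℂ := Metric.ball x r with hU
  have hUopen : IsOpen U := Metric.isOpen_ball
  have hxU : x ∈ U := Metric.mem_ball_self hr0
  have hmem : ∀ w ∈ U, r < ‖w‖ ∧ ‖w‖ < 3 * r := by
    intro w hw
    rw [hU, Metric.mem_ball, Complex.dist_eq] at hw
    have e1 : ‖x‖ ≤ ‖x - w‖ + ‖w‖ := by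
      simpa using norm_add_le (x - w) w
    have e2 : ‖w‖ ≤ ‖w - x‖ + ‖x‖ := by
      simpa using norm_add_le (w - x) x
    have e3 : ‖x - w‖ = ‖w - x‖ := by
      rw [← neg_sub, norm_neg]
    have e4 : ‖x‖ = 2 * r := by rw [hr]; ring
    constructor
    · linarith
    · linarith
  set M : ℝ := max (3 * r) r⁻¹ with hM
  have hM0 : 0 < M := lt_of_lt_of_le (by positivity) (le_max_right _ _)
  -- pointwise bound on powers of w
  have hpow : ∀ w ∈ U, ∀ n : ℤ, ‖w‖ ^ n ≤ M ^ n.natAbs := by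
    intro w hw n
    obtain ⟨h1, h2⟩ := hmem w hw
    have hw0 : 0 < ‖w‖ := lt_trans hr0 h1
    rcases le_or_gt 0 n with hn | hn
    · lift n to ℕ using hn
      rw [zpow_natCast, Int.natAbs_natCast]
      calc ‖w‖ ^ n ≤ (3 * r) ^ n := pow_le_pow_left₀ hw0.le h2.le n
        _ ≤ M ^ n := pow_le_pow_left₀ (by positivity) (le_max_left _ _) n
    · set k := n.natAbs with hk
      have hnk : n = -(k : ℤ) := by omega
      rw [hnk, zpow_neg, zpow_natCast, ← inv_pow]
      calc (‖w‖)⁻¹ ^ k ≤ r⁻¹ ^ k :=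
            pow_le_pow_left₀ (by positivity) (by
              rw [inv_le_inv₀ hw0 hr0]; exact h1.le) k
        _ ≤ M ^ k := pow_le_pow_left₀ (by positivity) (le_max_right _ _) k
  -- the summable majorant
  set u : ℤ → ℝ := fun n => (1 / c) * t ^ (n * (n - 1) / 2 - (n.natAbs : ℤ)) * M ^ n.natAbs
    with hu
  have hsum : Summable u := int_summable_aux hq0 hq1 hM0
  have hdiff : ∀ n : ℤ,
      DifferentiableOn ℂ (fun z : ℂ => q ^ (n * (n - 1) / 2) * (-z) ^ n / (q ^ n - y)) U := by
    intro n z hz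
    have hz0 : z ≠ 0 := by
      intro h
      have := (hmem z hz).1
      rw [h] at this
      simp at this
      linarith
    apply DifferentiableAt.differentiableWithinAt
    have h1 : DifferentiableAt ℂ (fun z : ℂ => (-z) ^ n) z := by
      have h2 : DifferentiableAt ℂ (fun w : ℂ => w ^ n) (-z) :=
        differentiableAt_zpow.mpr (Or.inl (neg_ne_zero.mpr hz0))
      exact h2.comp z (differentiable_neg z)
    exact (h1.const_mul _).div_const _
  have hbound : ∀ (n : ℤ) (w : ℂ), w ∈ U →
      ‖q ^ (n * (n - 1) / 2) * (-w) ^ n / (q ^ n - y)‖ ≤ u n := by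
    intro n w hw
    set a := n.natAbs with ha
    have hwn := hpow w hw n
    have hd := hden n
    have hdpos : 0 < c * t ^ a := by positivity
    have hnorm : ‖q ^ (n * (n - 1) / 2) * (-w) ^ n / (q ^ n - y)‖
        = t ^ (n * (n - 1) / 2) * ‖w‖ ^ n / ‖q ^ n - y‖ := by
      rw [norm_div, norm_mul, norm_zpow, norm_zpow, norm_neg]
    rw [hnorm]
    have hAnn : (0:ℝ) ≤ t ^ (n * (n - 1) / 2) := (zpow_pos hq0 _).le
    calc t ^ (n * (n - 1) / 2) * ‖w‖ ^ n / ‖q ^ n - y‖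
        ≤ t ^ (n * (n - 1) / 2) * M ^ a / (c * t ^ a) := by
          apply div_le_div₀ (by positivity) (by
            exact mul_le_mul_of_nonneg_left hwn hAnn) hdpos hd
      _ = u n := by
          simp only [hu]
          rw [zpow_sub₀ hq0.ne', zpow_natCast]
          field_simp
          rw [ha]; ring
  have key : DifferentiableOn ℂ
      (fun w : ℂ => ∑' n : ℤ, q ^ (n * (n - 1) / 2) * (-w) ^ n / (q ^ n - y)) U :=
    Complex.differentiableOn_tsum_of_summable_norm hsum hdiff hUopen hbound
  exact (key.differentiableAt (hUopen.mem_nhds hxU))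
end

section
/- Let q ∈ ℂ with 0 < |q| < 1, let x ∈ ℂ with x ≠ 0, and let y ∈ ℂ be such that y ≠ q^n for every n ∈ ℤ. Then s(qx, y; q) = y·s(x, y; q) + ϑ(x; q). Equivalently, the function x ↦ ϑ(x;q)·κ(x,y;q) satisfies the difference equation f(qx) − y·f(x) = ϑ(x;q). -/
open Complex

/-- The theta function `ϑ(x;q) := Σ_{n∈ℤ} (−x)^n q^{n(n−1)/2}`. -/
noncomputable def theta (q x : ℂ) : ℂ := ∑' n : ℤ, (-x) ^ n * q ^ (n * (n - 1) / 2)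

private lemma cast_half_sq' {n : ℤ} : ((n * (n - 1) / 2 : ℤ) : ℂ) = (n ^ 2 - n) / 2 := by
  have hdvd : (2 : ℤ) ∣ n * (n - 1) := by
    have := Int.even_mul_succ_self (n - 1)
    simpa [sub_add_cancel, mul_comm] using this.two_dvd
  rw [Int.cast_div hdvd (by norm_num)]
  push_cast
  ring_nf

private lemma theta_term_eq_jacobi' (q x : ℂ) (hq0 : q ≠ 0) (hx : x ≠ 0) (n : ℤ) :
    (-x) ^ n * q ^ (n * (n - 1) / 2) =
      jacobiTheta₂_term n ((Complex.log (-x) - Complex.log q / 2) / (2 * ↑Real.pi * I))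
        (Complex.log q / (2 * ↑Real.pi * I)) := by
  have hpi : (2 * ↑Real.pi * I : ℂ) ≠ 0 := by
    simp [Real.pi_ne_zero, I_ne_zero]
  rw [jacobiTheta₂_term]
  rw [show 2 * ↑Real.pi * I * ↑n * ((Complex.log (-x) - Complex.log q / 2) / (2 * ↑Real.pi * I))
      = n * (Complex.log (-x) - Complex.log q / 2) by field_simp]
  rw [show (↑Real.pi : ℂ) * I * ↑n ^ 2 * (Complex.log q / (2 * ↑Real.pi * I))
      = n ^ 2 * Complex.log q / 2 by field_simp]
  rw [show (↑n : ℂ) * (Complex.log (-x) - Complex.log q / 2) + ↑n ^ 2 * Complex.log q / 2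
      = n * Complex.log (-x) + ((n ^ 2 - n) / 2) * Complex.log q by ring]
  rw [Complex.exp_add, ← cast_half_sq',
    Complex.exp_int_mul, Complex.exp_int_mul, Complex.exp_log hq0,
    Complex.exp_log (neg_ne_zero.mpr hx)]

private lemma summable_theta_term' {q : ℂ} (x : ℂ) (hq0 : q ≠ 0) (hq1 : ‖q‖ < 1)
    (hx : x ≠ 0) :
    Summable (fun n : ℤ => (-x) ^ n * q ^ (n * (n - 1) / 2)) := by
  have h := (summable_jacobiTheta₂_term_iff
      ((Complex.log (-x) - Complex.log q / 2) / (2 * ↑Real.pi * I))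
      (Complex.log q / (2 * ↑Real.pi * I))).mpr ?_
  · exact h.congr fun n => (theta_term_eq_jacobi' q x hq0 hx n).symm
  · have heq : Complex.log q / (2 * ↑Real.pi * I) =
        (Complex.log q * (-I)) / (2 * ↑Real.pi) := by
      rw [div_eq_div_iff (by simp [Real.pi_ne_zero, I_ne_zero]) (by simp [Real.pi_ne_zero])]
      have : (-I) * I = 1 := by rw [neg_mul, I_mul_I]; ring
      calc Complex.log q * (2 * ↑Real.pi) = Complex.log q * ((-I) * I) * (2 * ↑Real.pi) := by
            rw [this]; ring
        _ = Complex.log q * -I * (2 * ↑Real.pi * I) := by ring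
    rw [heq]
    have h2 : ((Complex.log q * -I) / (2 * ↑Real.pi)).im
        = -(Complex.log q).re / (2 * Real.pi) := by
      rw [show ((2 : ℂ) * ↑Real.pi) = ((2 * Real.pi : ℝ) : ℂ) by push_cast; ring,
        Complex.div_ofReal_im]
      simp [Complex.mul_im]
    rw [h2, Complex.log_re]
    have hln : Real.log ‖q‖ < 0 :=
      Real.log_neg (norm_pos_iff.mpr hq0) hq1
    exact div_pos (by linarith) (by positivity)

private lemma summable_appell_term' {q : ℂ} (x y : ℂ) (hq0 : q ≠ 0) (hq1 : ‖q‖ < 1)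
    (hx : x ≠ 0) :
    Summable (fun n : ℤ => q ^ (n * (n - 1) / 2) * (-x) ^ n / (q ^ n - y)) := by
  have hq1' : ‖q‖ < 1 := hq1
  have hqn : (0:ℝ) < ‖q‖ := by simpa using norm_pos_iff.mpr hq0
  have hxq : x / q ≠ 0 := div_ne_zero hx hq0
  have hT := summable_theta_term' x hq0 hq1 hx
  have hT' := summable_theta_term' (x / q) hq0 hq1 hxq
  by_cases hy0 : y = 0
  · subst hy0
    refine hT'.congr fun n => ?_
    rw [sub_zero, show -(x/q) = -x / q by ring, div_zpow]
    field_simp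
  · rw [summable_int_iff_summable_nat_and_neg]
    have hyn : 0 < ‖y‖ := norm_pos_iff.mpr hy0
    constructor
    · -- positive side
      have hnorm : Summable (fun n : ℕ =>
          2 / ‖y‖ * ‖(-x) ^ (n : ℤ) * q ^ ((n : ℤ) * ((n : ℤ) - 1) / 2)‖) :=
        ((summable_int_iff_summable_nat_and_neg.mp hT.norm).1).mul_left _
      refine Summable.of_norm_bounded_eventually_nat hnorm ?_
      have hq : Filter.Tendsto (fun n : ℕ => q ^ (n : ℤ) - y) Filter.atTop (nhds (0 - y)) := by
        apply Filter.Tendsto.sub_const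
        have := tendsto_pow_atTop_nhds_zero_of_norm_lt_one hq1'
        simpa [zpow_natCast] using this
      have hev : ∀ᶠ n : ℕ in Filter.atTop, ‖y‖ / 2 ≤ ‖q ^ (n : ℤ) - y‖ :=
        hq.norm.eventually (eventually_ge_nhds (by rw [zero_sub, norm_neg]; linarith))
      filter_upwards [hev] with n hn
      rw [norm_div]
      rw [div_le_iff₀ (by linarith)]
      calc ‖q ^ ((n:ℤ) * ((n:ℤ) - 1) / 2) * (-x) ^ (n:ℤ)‖
          = 2 / ‖y‖ * ‖(-x) ^ (n:ℤ) * q ^ ((n:ℤ) * ((n:ℤ) - 1) / 2)‖ * (‖y‖ / 2) := by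
            have hyne : ‖y‖ ≠ 0 := by
              simpa using hyn.ne'
            rw [mul_comm ((-x) ^ (n:ℤ)) _]; field_simp
        _ ≤ 2 / ‖y‖ * ‖(-x) ^ (n:ℤ) * q ^ ((n:ℤ) * ((n:ℤ) - 1) / 2)‖ * ‖q ^ (n:ℤ) - y‖ := by
            gcongr
    · -- negative side
      have hnorm : Summable (fun n : ℕ =>
          2 * ‖(-(x / q)) ^ (-n : ℤ) * q ^ ((-n : ℤ) * ((-n : ℤ) - 1) / 2)‖) :=
        ((summable_int_iff_summable_nat_and_neg.mp hT'.norm).2).mul_left _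
      refine Summable.of_norm_bounded_eventually_nat hnorm ?_
      have h1 : 1 < ‖q‖⁻¹ := (one_lt_inv₀ hqn).mpr hq1'
      have hev : ∀ᶠ n : ℕ in Filter.atTop, 2 * ‖y‖ ≤ (‖q‖⁻¹) ^ n :=
        (tendsto_pow_atTop_atTop_of_one_lt h1).eventually_ge_atTop _
      filter_upwards [hev] with n hn
      have hqnorm : ‖q ^ (-n : ℤ)‖ = (‖q‖⁻¹) ^ n := by
        rw [norm_zpow, zpow_neg, zpow_natCast, inv_pow]
      have hden : ‖q ^ (-n : ℤ)‖ / 2 ≤ ‖q ^ (-n : ℤ) - y‖ := by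
        have := norm_sub_norm_le (q ^ (-n : ℤ)) y
        rw [hqnorm] at *
        linarith
      have hpos : 0 < ‖q ^ (-n : ℤ)‖ := by rw [hqnorm]; positivity
      rw [norm_div]
      calc ‖q ^ ((-n:ℤ) * ((-n:ℤ) - 1) / 2) * (-x) ^ (-n:ℤ)‖ / ‖q ^ (-n:ℤ) - y‖
          ≤ ‖q ^ ((-n:ℤ) * ((-n:ℤ) - 1) / 2) * (-x) ^ (-n:ℤ)‖ / (‖q ^ (-n:ℤ)‖ / 2) := by
            gcongr
        _ = 2 * (‖q ^ ((-n:ℤ) * ((-n:ℤ) - 1) / 2) * (-x) ^ (-n:ℤ)‖ / ‖q ^ (-n:ℤ)‖) := by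
            field_simp
        _ = 2 * ‖(-(x / q)) ^ (-n : ℤ) * q ^ ((-n : ℤ) * ((-n : ℤ) - 1) / 2)‖ := by
            rw [← norm_div]
            congr 1
            rw [show -(x/q) = -x / q by ring, div_zpow]
            field_simp

/-- The difference equation `s(qx,y;q) = y·s(x,y;q) + ϑ(x;q)` for `0 < |q| < 1`,
`x ≠ 0`, `y ∉ q^ℤ`. -/
theorem appell_lerch_difference_equation (q x y : ℂ)
    (hq0 : 0 < ‖q‖) (hq1 : ‖q‖ < 1)
    (hx : x ≠ 0) (hy : ∀ n : ℤ, y ≠ q ^ n) :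
    appellS q (q * x) y = y * appellS q x y + theta q x := by
  have hq0' : q ≠ 0 := norm_pos_iff.mp hq0
  have hS := summable_appell_term' x y hq0' hq1 hx
  have hT := summable_theta_term' x hq0' hq1 hx
  rw [appellS, appellS, theta]
  calc (∑' n : ℤ, q ^ (n * (n - 1) / 2) * (-(q * x)) ^ n / (q ^ n - y))
      = ∑' n : ℤ, (y * (q ^ (n * (n - 1) / 2) * (-x) ^ n / (q ^ n - y))
          + (-x) ^ n * q ^ (n * (n - 1) / 2)) := by
        refine tsum_congr fun n => ?_
        have hne : q ^ n - y ≠ 0 := sub_ne_zero.mpr (Ne.symm (hy n))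
        rw [show -(q * x) = -x * q by ring, mul_zpow]
        field_simp
        ring
    _ = y * (∑' n : ℤ, q ^ (n * (n - 1) / 2) * (-x) ^ n / (q ^ n - y))
        + ∑' n : ℤ, (-x) ^ n * q ^ (n * (n - 1) / 2) := by
        rw [(hS.mul_left y).tsum_add hT, tsum_mul_left]
end

section
/- Let q ∈ ℂ with 0 < |q| < 1, let x ∈ ℂ with x ≠ 0, and let y ∈ ℂ be such that y ≠ q^n for every n ∈ ℤ. Then s(x, qy; q) = −(x·y/q)·s(x, y; q) − (x/q)·ϑ(x; q). (This is the elliptic transformation of the Appell–Lerch numerator in the second variable.) -/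
open Filter Topology

private lemma exp_shift (n : ℤ) : (n+1) * ((n+1)-1) / 2 = n*(n-1)/2 + n := by
  have h : (n+1) * ((n+1)-1) = n*(n-1) + n*2 := by ring
  rw [h, Int.add_mul_ediv_right _ _ (by norm_num : (2:ℤ) ≠ 0)]

private lemma summable_int_of_ratio (f : ℤ → ℂ) (c : ℤ → ℝ)
    (hrec : ∀ n : ℤ, ‖f (n+1)‖ = c n * ‖f n‖)
    (hpos : ∀ᶠ n : ℕ in atTop, c n ≤ 2⁻¹)
    (hneg : ∀ᶠ n : ℕ in atTop, 2 ≤ c (-(n:ℤ)-1)) : Summable f := by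
  refine Summable.of_nat_of_neg ?_ ?_
  · refine summable_of_ratio_norm_eventually_le (r := 2⁻¹) (by norm_num) ?_
    filter_upwards [hpos] with n hn
    have h := hrec n
    have h2 : ((n:ℤ)+1) = ((n+1 : ℕ) : ℤ) := by push_cast; ring
    rw [h2] at h
    rw [h]
    exact mul_le_mul_of_nonneg_right hn (norm_nonneg _)
  · refine summable_of_ratio_norm_eventually_le (r := 2⁻¹) (by norm_num) ?_
    filter_upwards [hneg] with n hn
    have h := hrec (-(n:ℤ)-1)
    have h2 : (-(n:ℤ)-1) + 1 = -(n:ℤ) := by ring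
    rw [h2] at h
    have h3 : (-((n+1:ℕ):ℤ)) = -(n:ℤ)-1 := by push_cast; ring
    rw [h3]
    nlinarith [norm_nonneg (f (-(n:ℤ)-1)), norm_nonneg (f (-(n:ℤ)))]

-- t tendsto atTop
private lemma t_tendsto {q : ℂ} (hq0 : 0 < ‖q‖) (hq1 : ‖q‖ < 1) :
    Tendsto (fun n : ℕ => ‖q‖ ^ (-(n:ℤ)-1)) atTop atTop := by
  have h1 : (1:ℝ) < ‖q‖⁻¹ := (one_lt_inv₀ hq0).mpr hq1
  have h2 := (tendsto_pow_atTop_atTop_of_one_lt h1).comp (tendsto_add_atTop_nat 1)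
  refine h2.congr fun n => ?_
  show (‖q‖⁻¹) ^ (n+1) = _
  rw [show (-(n:ℤ)-1) = -((n+1:ℕ):ℤ) by push_cast; ring, zpow_neg, zpow_natCast, ← inv_pow]

private lemma theta_summable {q x : ℂ} (hq0 : 0 < ‖q‖) (hq1 : ‖q‖ < 1) (hx : x ≠ 0) :
    Summable (fun n : ℤ => (-x) ^ n * q ^ (n * (n - 1) / 2)) := by
  have hq : q ≠ 0 := norm_pos_iff.mp hq0
  have hx' : (-x) ≠ 0 := neg_ne_zero.mpr hx
  have hxn : 0 < ‖x‖ := norm_pos_iff.mpr hx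
  apply summable_int_of_ratio _ (fun n => ‖x‖ * ‖q‖ ^ n)
  · intro n
    rw [exp_shift, zpow_add₀ hq, zpow_add_one₀ hx']
    simp only [norm_mul, norm_zpow, norm_neg]
    ring
  · have ht : Tendsto (fun n : ℕ => ‖x‖ * ‖q‖ ^ n) atTop (𝓝 0) := by
      simpa using (tendsto_pow_atTop_nhds_zero_of_lt_one (norm_nonneg q) hq1).const_mul ‖x‖
    filter_upwards [ht.eventually_le_const (by norm_num : (0:ℝ) < 2⁻¹)] with n hn
    rw [zpow_natCast]
    exact hn
  · have ht := (t_tendsto hq0 hq1).const_mul_atTop hxn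
    exact ht.eventually_ge_atTop 2

private lemma appell_summable {q x y : ℂ} (hq0 : 0 < ‖q‖) (hq1 : ‖q‖ < 1) (hx : x ≠ 0)
    (hy : ∀ n : ℤ, y ≠ q ^ n) :
    Summable (fun n : ℤ => q ^ (n * (n - 1) / 2) * (-x) ^ n / (q ^ n - y)) := by
  have hq : q ≠ 0 := norm_pos_iff.mp hq0
  have hxn : 0 < ‖x‖ := norm_pos_iff.mpr hx
  have hD : ∀ n : ℤ, 0 < ‖q ^ n - y‖ := fun n =>
    norm_pos_iff.mpr (sub_ne_zero.mpr (Ne.symm (hy n)))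
  have hnorm : ∀ n : ℤ, ‖q ^ (n * (n - 1) / 2) * (-x) ^ n / (q ^ n - y)‖
      = ‖q‖ ^ (n * (n - 1) / 2) * ‖x‖ ^ n / ‖q ^ n - y‖ := by
    intro n
    rw [norm_div, norm_mul, norm_zpow, norm_zpow, norm_neg]
  apply summable_int_of_ratio _
    (fun n => ‖x‖ * ‖q‖ ^ n * ‖q ^ n - y‖ / ‖q ^ (n+1) - y‖)
  · intro n
    rw [hnorm, hnorm, exp_shift, zpow_add₀ (ne_of_gt hq0),
      zpow_add_one₀ (ne_of_gt hxn)]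
    have h' : ∀ k : ℤ, ‖q ^ k - y‖ ≠ 0 := fun k => by
      exact ne_of_gt (hD k)
    field_simp
    rw [div_eq_div_iff (h' (n+1)) (mul_ne_zero (h' (n+1)) (h' n))]
    ring
  · -- positive side
    by_cases hy0 : y = 0
    · subst hy0
      have ht : Tendsto (fun n : ℕ => ‖x‖ / ‖q‖ * ‖q‖ ^ n) atTop (𝓝 0) := by
        simpa using (tendsto_pow_atTop_nhds_zero_of_lt_one (norm_nonneg q) hq1).const_mul
          (‖x‖ / ‖q‖)
      filter_upwards [ht.eventually_le_const (by norm_num : (0:ℝ) < 2⁻¹)] with n hn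
      have e1 : ‖q ^ ((n:ℤ)) - 0‖ = ‖q‖ ^ (n:ℤ) := by rw [sub_zero, norm_zpow]
      have e2 : ‖q ^ ((n:ℤ)+1) - 0‖ = ‖q‖ ^ ((n:ℤ)+1) := by rw [sub_zero, norm_zpow]
      rw [e1, e2]
      calc ‖x‖ * ‖q‖ ^ (n:ℤ) * ‖q‖ ^ (n:ℤ) / ‖q‖ ^ ((n:ℤ)+1)
          = ‖x‖ / ‖q‖ * ‖q‖ ^ (n:ℕ) := by
            rw [zpow_add_one₀ (ne_of_gt hq0), zpow_natCast]
            rw [div_mul_eq_mul_div, div_eq_div_iff (by positivity) (ne_of_gt hq0)]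
            ring
        _ ≤ 2⁻¹ := hn
    · have hyn : 0 < ‖y‖ := norm_pos_iff.mpr hy0
      have ht1 : Tendsto (fun n : ℕ => ‖q‖ ^ n) atTop (𝓝 0) :=
        tendsto_pow_atTop_nhds_zero_of_lt_one (norm_nonneg q) hq1
      have ht2 : Tendsto (fun n : ℕ => ‖x‖ * ‖q‖ ^ n) atTop (𝓝 0) := by
        simpa using ht1.const_mul ‖x‖
      filter_upwards [ht1.eventually_le_const (by positivity : (0:ℝ) < ‖y‖/2),
        ht2.eventually_le_const (by norm_num : (0:ℝ) < 6⁻¹)] with n h1 h2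
      have hqn : ‖q‖ ^ ((n:ℤ)) = ‖q‖ ^ (n:ℕ) := zpow_natCast _ _
      have hb1 : ‖q ^ ((n:ℤ)) - y‖ ≤ 3/2 * ‖y‖ := by
        calc ‖q ^ ((n:ℤ)) - y‖ ≤ ‖q ^ ((n:ℤ))‖ + ‖y‖ := norm_sub_le _ _
          _ ≤ ‖y‖/2 + ‖y‖ := by rw [norm_zpow, hqn]; linarith
          _ = 3/2 * ‖y‖ := by ring
      have hq1' : ‖q ^ ((n:ℤ)+1)‖ ≤ ‖y‖/2 := by
        rw [norm_zpow, zpow_add_one₀ (ne_of_gt hq0), hqn]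
        nlinarith [pow_nonneg (norm_nonneg q) n]
      have hb2 : ‖y‖/2 ≤ ‖q ^ ((n:ℤ)+1) - y‖ := by
        have := norm_sub_norm_le y (q ^ ((n:ℤ)+1))
        rw [norm_sub_rev] at this
        linarith
      have hdiv : ‖q ^ ((n:ℤ)) - y‖ / ‖q ^ ((n:ℤ)+1) - y‖ ≤ 3 := by
        rw [div_le_iff₀ (lt_of_lt_of_le (by positivity) hb2)]
        nlinarith
      calc ‖x‖ * ‖q‖ ^ ((n:ℤ)) * ‖q ^ ((n:ℤ)) - y‖ / ‖q ^ ((n:ℤ)+1) - y‖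
          = (‖x‖ * ‖q‖ ^ ((n:ℤ))) * (‖q ^ ((n:ℤ)) - y‖ / ‖q ^ ((n:ℤ)+1) - y‖) := by ring
        _ ≤ 6⁻¹ * 3 := by
            apply mul_le_mul _ hdiv (by positivity) (by norm_num)
            rw [hqn]; exact h2
        _ = 2⁻¹ := by norm_num
  · -- negative side
    have ht := t_tendsto hq0 hq1
    filter_upwards [ht.eventually_ge_atTop (2 * ‖y‖),
      (ht.const_mul_atTop hxn).eventually_ge_atTop 6] with n hA hC
    set m : ℤ := -(n:ℤ) - 1 with hm
    set t : ℝ := ‖q‖ ^ m with htdef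
    have ht0 : 0 < t := by positivity
    have hDm : t - ‖y‖ ≤ ‖q ^ m - y‖ := by
      have := norm_sub_norm_le (q ^ m) y
      rw [norm_zpow] at this
      linarith
    have hDm1 : ‖q ^ (m+1) - y‖ ≤ ‖q‖ * t + ‖y‖ := by
      calc ‖q ^ (m+1) - y‖ ≤ ‖q ^ (m+1)‖ + ‖y‖ := norm_sub_le _ _
        _ = ‖q‖ * t + ‖y‖ := by rw [norm_zpow, zpow_add_one₀ (ne_of_gt hq0)]; ring
    have hy2 : ‖y‖ ≤ t / 2 := by linarith
    have h1 : t / 2 ≤ ‖q ^ m - y‖ := by linarith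
    have h2 : ‖q ^ (m+1) - y‖ ≤ 3/2 * t := by nlinarith [norm_nonneg y]
    rw [le_div_iff₀ (norm_pos_iff.mpr (sub_ne_zero.mpr (Ne.symm (hy (m+1)))))]
    calc 2 * ‖q ^ (m+1) - y‖ ≤ 3 * t := by linarith
      _ ≤ (‖x‖ * t) * (t / 2) := by nlinarith
      _ ≤ ‖x‖ * ‖q‖ ^ m * ‖q ^ m - y‖ := by
          have : (‖x‖ * t) * (t/2) ≤ (‖x‖ * t) * ‖q ^ m - y‖ :=
            mul_le_mul_of_nonneg_left h1 (by positivity)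
          linarith [this]


/-- Elliptic transformation in the second variable:
`s(x, qy; q) = −(x·y/q)·s(x, y; q) − (x/q)·ϑ(x; q)` for `0 < |q| < 1`, `x ≠ 0`,
`y ∉ q^ℤ`. -/
theorem appell_lerch_second_variable (q x y : ℂ)
    (hq0 : 0 < ‖q‖) (hq1 : ‖q‖ < 1)
    (hx : x ≠ 0) (hy : ∀ n : ℤ, y ≠ q ^ n) :
    appellS q x (q * y) = -(x * y / q) * appellS q x y - (x / q) * theta q x := by
  have hq0' : 0 < ‖q‖ := by exact hq0
  have hq1' : ‖q‖ < 1 := by exact hq1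
  have hq : q ≠ 0 := norm_pos_iff.mp hq0'
  have hA := appell_summable hq0' hq1' hx hy
  have hB := theta_summable hq0' hq1' hx
  have key : ∀ m : ℤ,
      q ^ ((m+1) * ((m+1) - 1) / 2) * (-x) ^ (m+1) / (q ^ (m+1) - q * y)
      = -(x * y / q) * (q ^ (m * (m - 1) / 2) * (-x) ^ m / (q ^ m - y))
        - (x / q) * ((-x) ^ m * q ^ (m * (m - 1) / 2)) := by
    intro m
    have hd : q ^ m - y ≠ 0 := sub_ne_zero.mpr (Ne.symm (hy m))
    rw [exp_shift, zpow_add₀ hq, zpow_add_one₀ hq, zpow_add_one₀ (neg_ne_zero.mpr hx)]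
    have hd' : q ^ m * q - q * y ≠ 0 := by
      rw [show q ^ m * q - q * y = q * (q ^ m - y) from by ring]
      exact mul_ne_zero hq hd
    field_simp
    ring
  calc appellS q x (q * y)
      = ∑' m : ℤ, (q ^ ((m+1) * ((m+1) - 1) / 2) * (-x) ^ (m+1) / (q ^ (m+1) - q * y)) := by
        rw [appellS]
        exact ((Equiv.addRight (1:ℤ)).tsum_eq
          (fun n : ℤ => q ^ (n * (n - 1) / 2) * (-x) ^ n / (q ^ n - q * y))).symm
    _ = ∑' m : ℤ, (-(x * y / q) * (q ^ (m * (m - 1) / 2) * (-x) ^ m / (q ^ m - y))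
          - (x / q) * ((-x) ^ m * q ^ (m * (m - 1) / 2))) := tsum_congr key
    _ = -(x * y / q) * appellS q x y - (x / q) * theta q x := by
        rw [Summable.tsum_sub (hA.mul_left _) (hB.mul_left _), tsum_mul_left, tsum_mul_left,
          appellS, theta]
end

section
/- Let q ∈ ℂ with 0 < |q| < 1, let x ∈ ℂ with x ≠ 0, and let y ∈ ℂ be such that y ≠ q^n for every n ∈ ℤ. Assume ϑ(x;q) ≠ 0 and ϑ(qx;q) ≠ 0. Then the Appell–Lerch sum κ(x,y;q) := s(x,y;q)/ϑ(x;q) satisfies κ(qx, y; q) = −x·y·κ(x, y; q) − x. -/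
open Filter Topology

/-- The Appell–Lerch sum `κ(x,y;q) := s(x,y;q)/ϑ(x;q)`. -/
noncomputable def appellLerch (q x y : ℂ) : ℂ := appellS q x y / theta q x

private lemma half_succ (n : ℤ) : (n + 1) * ((n + 1) - 1) / 2 = n * (n - 1) / 2 + n := by
  obtain ⟨k, hk⟩ := Int.even_mul_succ_self (n - 1)
  have h1 : n * (n - 1) = k + k := by linear_combination hk
  have h2 : (n + 1) * ((n + 1) - 1) = k + k + 2 * n := by linear_combination h1
  rw [h2, h1]; omega

private lemma step_lemma (q x : ℂ) (hq : q ≠ 0) (hx : x ≠ 0) (n : ℤ) :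
    x ^ (n + 1) * q ^ ((n + 1) * ((n + 1) - 1) / 2)
      = (x * q ^ n) * (x ^ n * q ^ (n * (n - 1) / 2)) := by
  rw [half_succ, zpow_add₀ hq, zpow_add₀ hx, zpow_one]
  ring

private lemma tendsto_toNat' : Tendsto Int.toNat atTop atTop := by
  refine tendsto_atTop_atTop.mpr fun b => ⟨(b : ℤ), fun a ha => ?_⟩
  omega

private lemma tendsto_zpow_zero' {c : ℝ} (h0 : 0 ≤ c) (h1 : c < 1) :
    Tendsto (fun n : ℤ => c ^ n) atTop (𝓝 0) := by
  have hN : Tendsto (fun n : ℕ => c ^ n) atTop (𝓝 0) :=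
    tendsto_pow_atTop_nhds_zero_of_lt_one h0 h1
  refine (hN.comp tendsto_toNat').congr' ?_
  filter_upwards [eventually_ge_atTop (0 : ℤ)] with n hn
  simp only [Function.comp]
  rw [← zpow_natCast, Int.toNat_of_nonneg hn]

private lemma tendsto_zpow_top' {c : ℝ} (h1 : 1 < c) :
    Tendsto (fun n : ℤ => c ^ n) atTop atTop := by
  have hN : Tendsto (fun n : ℕ => c ^ n) atTop atTop :=
    tendsto_pow_atTop_atTop_of_one_lt h1
  refine (hN.comp tendsto_toNat').congr' ?_
  filter_upwards [eventually_ge_atTop (0 : ℤ)] with n hn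
  simp only [Function.comp]
  rw [← zpow_natCast, Int.toNat_of_nonneg hn]

private lemma tendsto_zpow_bot' {c : ℝ} (h0 : 0 < c) (h1 : c < 1) :
    Tendsto (fun n : ℤ => c ^ n) atBot atTop := by
  have hinv : 1 < c⁻¹ := (one_lt_inv₀ h0).mpr h1
  have h := (tendsto_zpow_top' hinv).comp tendsto_neg_atBot_atTop
  refine h.congr fun n => ?_
  show c⁻¹ ^ (-n) = c ^ n
  rw [inv_zpow, zpow_neg, inv_inv]

private lemma summable_main (q x : ℂ) (hq : q ≠ 0) (hq1 : ‖q‖ < 1) (hx : x ≠ 0) :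
    Summable (fun n : ℤ => x ^ n * q ^ (n * (n - 1) / 2)) := by
  set f : ℤ → ℂ := fun n => x ^ n * q ^ (n * (n - 1) / 2) with hfdef
  have hne : ∀ n : ℤ, f n ≠ 0 := fun n => mul_ne_zero (zpow_ne_zero _ hx) (zpow_ne_zero _ hq)
  apply Summable.of_nat_of_neg
  · apply summable_of_ratio_test_tendsto_lt_one (l := 0) zero_lt_one
      (Eventually.of_forall fun n => hne n)
    have key : ∀ n : ℕ, ‖f ↑(n + 1)‖ / ‖f ↑n‖ = ‖x‖ * ‖q‖ ^ n := by
      intro n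
      have h : f (↑n + 1) = (x * q ^ (n : ℤ)) * f ↑n := step_lemma q x hq hx n
      push_cast
      rw [h, norm_mul, mul_div_assoc, div_self (norm_ne_zero_iff.mpr (hne n)), mul_one,
        norm_mul, norm_zpow, zpow_natCast]
    have := (tendsto_pow_atTop_nhds_zero_of_lt_one (norm_nonneg q) hq1).const_mul ‖x‖
    rw [mul_zero] at this
    exact Tendsto.congr (fun n => (key n).symm) this
  · apply summable_of_ratio_test_tendsto_lt_one (l := 0) zero_lt_one
      (Eventually.of_forall fun n => hne _)
    have key : ∀ n : ℕ, ‖f (-↑(n + 1))‖ / ‖f (-↑n)‖ = (‖x‖⁻¹ * ‖q‖) * ‖q‖ ^ n := by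
      intro n
      have h2 : f (-↑n) = (x * q ^ (-(↑n : ℤ) - 1)) * f (-(↑n + 1)) := by
        have h := step_lemma q x hq hx (-(↑n + 1))
        rw [show (-(↑n:ℤ) - 1) = -(↑n + 1) by ring, show (-(↑n:ℤ)) = -(↑n + 1) + 1 by ring]
        exact h
      have hfn : ‖f (-((↑n:ℤ) + 1))‖ ≠ 0 := norm_ne_zero_iff.mpr (hne _)
      have hval : ‖f (-↑n)‖ = ‖x‖ * (‖q‖ ^ (n + 1))⁻¹ * ‖f (-((↑n:ℤ) + 1))‖ := by
        rw [h2, norm_mul, norm_mul, norm_zpow,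
          show (-(↑n:ℤ) - 1) = -((↑n:ℤ) + 1) by ring, zpow_neg,
          show ((↑n:ℤ) + 1) = ((n + 1 : ℕ) : ℤ) by push_cast; ring, zpow_natCast]
      rw [show (↑(n + 1) : ℤ) = ↑n + 1 by push_cast; ring, hval]
      rw [mul_comm (‖x‖ * (‖q‖ ^ (n + 1))⁻¹) ‖f (-((↑n:ℤ) + 1))‖, div_mul_eq_div_div,
        div_self hfn, one_div, mul_inv, inv_inv, pow_succ]
      ring
    have := (tendsto_pow_atTop_nhds_zero_of_lt_one (norm_nonneg q) hq1).const_mul (‖x‖⁻¹ * ‖q‖)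
    rw [mul_zero] at this
    exact Tendsto.congr (fun n => (key n).symm) this

private lemma eventually_lb (q y : ℂ) (hq : q ≠ 0) (hq1 : ‖q‖ < 1) (hy0 : y ≠ 0) :
    ∀ᶠ n : ℤ in cofinite, ‖y‖ / 2 ≤ ‖q ^ n - y‖ := by
  have hy : 0 < ‖y‖ := norm_pos_iff.mpr hy0
  rw [Int.cofinite_eq, eventually_sup]
  constructor
  · have h := (tendsto_zpow_bot' (norm_pos_iff.mpr hq) hq1).eventually_ge_atTop (‖y‖ / 2 + ‖y‖)
    filter_upwards [h] with n hn
    have h2 : ‖q ^ n‖ - ‖y‖ ≤ ‖q ^ n - y‖ := norm_sub_norm_le _ _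
    rw [norm_zpow] at h2
    linarith
  · have h := (tendsto_zpow_zero' (norm_nonneg q) hq1).eventually
      (gt_mem_nhds (show (0:ℝ) < ‖y‖ / 2 by positivity))
    filter_upwards [h] with n hn
    have h2 : ‖y‖ - ‖q ^ n‖ ≤ ‖y - q ^ n‖ := norm_sub_norm_le _ _
    rw [norm_sub_rev, norm_zpow] at h2
    linarith

private lemma summable_S (q x y : ℂ) (hq : q ≠ 0) (hq1 : ‖q‖ < 1) (hx : x ≠ 0)
    (hy : ∀ n : ℤ, y ≠ q ^ n) :
    Summable (fun n : ℤ => q ^ (n * (n - 1) / 2) * (-x) ^ n / (q ^ n - y)) := by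
  by_cases hy0 : y = 0
  · subst hy0
    have h := summable_main q (-x / q) hq hq1 (by simp [hx, hq])
    refine h.congr fun n => ?_
    rw [sub_zero, div_zpow]
    ring
  · apply Summable.of_norm_bounded_eventually
      (g := fun n => (2 / ‖y‖) * ‖(-x) ^ n * q ^ (n * (n - 1) / 2)‖)
      (((summable_main q (-x) hq hq1 (neg_ne_zero.mpr hx)).norm).mul_left _)
    filter_upwards [eventually_lb q y hq hq1 hy0] with n hn
    have hy : 0 < ‖y‖ := norm_pos_iff.mpr hy0
    rw [norm_div]
    calc ‖q ^ (n * (n - 1) / 2) * (-x) ^ n‖ / ‖q ^ n - y‖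
        ≤ ‖q ^ (n * (n - 1) / 2) * (-x) ^ n‖ / (‖y‖ / 2) :=
          div_le_div_of_nonneg_left (norm_nonneg _) (by positivity) hn
      _ = (2 / ‖y‖) * ‖(-x) ^ n * q ^ (n * (n - 1) / 2)‖ := by
          rw [mul_comm ((-x) ^ n)]
          field_simp

private lemma appellS_shift (q x y : ℂ) (hq : q ≠ 0) (hq1 : ‖q‖ < 1) (hx : x ≠ 0)
    (hy : ∀ n : ℤ, y ≠ q ^ n) :
    appellS q (q * x) y = y * appellS q x y + theta q x := by
  have hS := summable_S q x y hq hq1 hx hy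
  have hT := summable_main q (-x) hq hq1 (neg_ne_zero.mpr hx)
  rw [appellS, theta, appellS, ← tsum_mul_left, ← Summable.tsum_add (hS.mul_left y) hT]
  congr 1; funext n
  have hne : q ^ n - y ≠ 0 := sub_ne_zero_of_ne (Ne.symm (hy n))
  rw [show -(q * x) = q * -x by ring, mul_zpow]
  field_simp
  ring

private lemma theta_shift (q x : ℂ) (hq : q ≠ 0) (hx : x ≠ 0) :
    theta q x = -x * theta q (q * x) := by
  have hx' : -x ≠ 0 := neg_ne_zero.mpr hx
  calc theta q x
      = ∑' n : ℤ, (-x) ^ (n + 1) * q ^ ((n + 1) * ((n + 1) - 1) / 2) := by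
        rw [theta]
        exact ((Equiv.addRight (1 : ℤ)).tsum_eq
          (fun n => (-x) ^ n * q ^ (n * (n - 1) / 2))).symm
    _ = ∑' n : ℤ, -x * ((-(q * x)) ^ n * q ^ (n * (n - 1) / 2)) := by
        congr 1; funext n
        rw [step_lemma q (-x) hq hx' n, show -(q * x) = q * -x by ring, mul_zpow]
        ring
    _ = -x * theta q (q * x) := by rw [theta, tsum_mul_left]

/-- Elliptic transformation of the Appell–Lerch sum:
`κ(qx, y; q) = −x·y·κ(x, y; q) − x` for `0 < |q| < 1`, `x ≠ 0`, `y ∉ q^ℤ`,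
provided `ϑ(x;q) ≠ 0` and `ϑ(qx;q) ≠ 0`. -/
theorem appell_lerch_elliptic_transformation (q x y : ℂ)
    (hq0 : 0 < ‖q‖) (hq1 : ‖q‖ < 1)
    (hx : x ≠ 0) (hy : ∀ n : ℤ, y ≠ q ^ n)
    (hθ : theta q x ≠ 0) (hθ' : theta q (q * x) ≠ 0) :
    appellLerch q (q * x) y = -x * y * appellLerch q x y - x := by
  have hqn : ‖q‖ < 1 := by exact hq1
  have hq : q ≠ 0 := by
    intro h; rw [h] at hq0; simp at hq0
  have h1 := appellS_shift q x y hq hqn hx hy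
  have h2 := theta_shift q x hq hx
  rw [appellLerch, appellLerch, h1, h2]
  have hθ'' : theta q (x * q) ≠ 0 := by rwa [mul_comm x q]
  field_simp
  ring
end

section
/- Let q ∈ ℂ with 0 < |q| < 1 and let y ∈ ℂ be such that y ≠ q^n for every n ∈ ℤ. If g : ℂ → ℂ is holomorphic on ℂ ∖ {0} and satisfies g(qx) = y·g(x) for all x ∈ ℂ ∖ {0}, then g(x) = 0 for all x ∈ ℂ ∖ {0}. (In geometric terms: the degree-zero line bundle L_y on the elliptic curve E_q = ℂ*/q^ℤ determined by the automorphy factor q^n ↦ y^n has no nonzero global sections when y ∉ q^ℤ.) -/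
open Complex Filter Metric Set Topology

lemma aux_main (q y : ℂ) (hq0 : 0 < ‖q‖) (hq1 : ‖q‖ < 1)
    (hylb : ‖q‖ < ‖y‖) (hyub : ‖y‖ ≤ 1) (hy1 : y ≠ 1)
    (g : ℂ → ℂ)
    (hg : ∀ x : ℂ, x ≠ 0 → DifferentiableAt ℂ g x)
    (heq : ∀ x : ℂ, x ≠ 0 → g (q * x) = y * g x) :
    ∀ x : ℂ, x ≠ 0 → g x = 0 := by
  have hqne : q ≠ 0 := by
    intro h; rw [h] at hq0; simp at hq0
  have hyne : y ≠ 0 := by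
    intro h; rw [h] at hylb; simp at hylb; linarith
  -- iterated functional equation
  have hiter : ∀ n : ℕ, ∀ x : ℂ, x ≠ 0 → g (q ^ n * x) = y ^ n * g x := by
    intro n
    induction n with
    | zero => intro x hx; simp
    | succ n ih =>
      intro x hx
      have hqx : q ^ n * x ≠ 0 := mul_ne_zero (pow_ne_zero _ hqne) hx
      calc g (q ^ (n+1) * x) = g (q * (q ^ n * x)) := by ring_nf
        _ = y * g (q ^ n * x) := heq _ hqx
        _ = y * (y ^ n * g x) := by rw [ih x hx]
        _ = y ^ (n+1) * g x := by ring
  -- bound on the fundamental annulus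
  obtain ⟨M, hM⟩ : ∃ M, ∀ w ∈ closedBall (0:ℂ) 1 \ ball 0 (‖q‖), ‖g w‖ ≤ M := by
    have hcomp : IsCompact (closedBall (0:ℂ) 1 \ ball 0 (‖q‖)) :=
      (isCompact_closedBall _ _).diff isOpen_ball
    have hcont : ContinuousOn g (closedBall (0:ℂ) 1 \ ball 0 (‖q‖)) := by
      intro w hw
      have hw0 : w ≠ 0 := by
        intro h; subst h
        exact hw.2 (by simpa [mem_ball] using hq0)
      exact ((hg w hw0).continuousAt).continuousWithinAt
    exact hcomp.exists_bound_of_continuousOn hcont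
  have hM0 : 0 ≤ M := by
    have : (1:ℂ) ∈ closedBall (0:ℂ) 1 \ ball 0 (‖q‖) := by
      constructor
      · simp
      · simp [mem_ball]; linarith
    exact le_trans (norm_nonneg _) (hM 1 this)
  -- boundedness near 0
  have hbdd : ∀ z : ℂ, z ≠ 0 → ‖z‖ ≤ 1 → ‖g z‖ ≤ M := by
    have key : ∀ n : ℕ, ∀ z : ℂ, z ≠ 0 → ‖q‖ ^ n < ‖z‖ →
        ‖z‖ ≤ 1 → ‖g z‖ ≤ M := by
      intro n
      induction n with
      | zero =>
        intro z hz h1 h2; simp at h1; linarith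
      | succ n ih =>
        intro z hz h1 h2
        by_cases hc : ‖q‖ < ‖z‖
        · exact hM z ⟨by simpa [mem_closedBall] using h2, by simp [mem_ball]; linarith⟩
        · push_neg at hc
          set w := z / q with hw
          have hwne : w ≠ 0 := div_ne_zero hz hqne
          have habsw : ‖w‖ = ‖z‖ / ‖q‖ := by
            simp [hw, norm_div]
          have hw1 : ‖w‖ ≤ 1 := by
            rw [habsw]; rw [div_le_one hq0]; exact hc
          have hw2 : ‖q‖ ^ n < ‖w‖ := by
            rw [habsw, lt_div_iff₀ hq0]
            calc ‖q‖ ^ n * ‖q‖ = ‖q‖ ^ (n+1) := by ring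
              _ < ‖z‖ := h1
          have hgz : g z = y * g w := by
            have : z = q * w := by rw [hw]; field_simp
            rw [this]; exact heq w hwne
          rw [hgz, norm_mul]
          calc ‖y‖ * ‖g w‖ ≤ 1 * M :=
                mul_le_mul hyub (ih w hwne hw2 hw1) (norm_nonneg _) zero_le_one
            _ = M := one_mul M
    intro z hz h1
    obtain ⟨n, hn⟩ : ∃ n : ℕ, ‖q‖ ^ n < ‖z‖ := by
      have : Tendsto (fun n : ℕ => ‖q‖ ^ n) atTop (nhds 0) :=
        tendsto_pow_atTop_nhds_zero_of_lt_one (le_of_lt hq0) hq1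
      have hz0 : 0 < ‖z‖ := norm_pos_iff.mpr hz
      obtain ⟨n, hn⟩ := ((this.eventually (eventually_lt_nhds hz0)).exists)
      exact ⟨n, hn⟩
    exact key n z hz hn h1
  -- removable singularity
  set G : ℂ → ℂ := Function.update g 0 (limUnder (𝓝[≠] (0:ℂ)) g) with hG
  have hGd : DifferentiableOn ℂ G (ball (0:ℂ) 1) := by
    apply Complex.differentiableOn_update_limUnder_of_bddAbove (ball_mem_nhds _ one_pos)
    · intro z hz
      exact (hg z hz.2).differentiableWithinAt
    · rw [bddAbove_def]
      refine ⟨M, ?_⟩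
      rintro m ⟨z, hz, rfl⟩
      exact hbdd z hz.2 (le_of_lt (by simpa [mem_ball] using hz.1))
  have hGeq : ∀ z : ℂ, z ≠ 0 → G z = g z := fun z hz => Function.update_of_ne hz _ _
  have hGat0 : DifferentiableAt ℂ G 0 :=
    hGd.differentiableAt (ball_mem_nhds _ one_pos)
  -- G 0 = 0
  have hG00 : G 0 = 0 := by
    have hcont : Tendsto G (𝓝[≠] (0:ℂ)) (nhds (G 0)) :=
      hGat0.continuousAt.continuousWithinAt.tendsto
    have hmap : Tendsto (fun x : ℂ => q * x) (𝓝[≠] (0:ℂ)) (𝓝[≠] (0:ℂ)) := by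
      rw [tendsto_nhdsWithin_iff]
      constructor
      · have : Tendsto (fun x : ℂ => q * x) (𝓝 (0:ℂ)) (𝓝 (q * 0)) :=
          (continuous_const.mul continuous_id).tendsto 0
        simpa using this.mono_left nhdsWithin_le_nhds
      · filter_upwards [self_mem_nhdsWithin] with x hx
        exact mul_ne_zero hqne hx
    have h1 : Tendsto (fun x : ℂ => G (q * x)) (𝓝[≠] (0:ℂ)) (nhds (G 0)) :=
      hcont.comp hmap
    have h2 : Tendsto (fun x : ℂ => G (q * x)) (𝓝[≠] (0:ℂ)) (nhds (y * G 0)) := by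
      have heqG : ∀ᶠ x in 𝓝[≠] (0:ℂ), G (q * x) = y * G x := by
        filter_upwards [self_mem_nhdsWithin] with x hx
        rw [hGeq _ (mul_ne_zero hqne hx), hGeq _ hx]
        exact heq x hx
      have : Tendsto (fun x : ℂ => y * G x) (𝓝[≠] (0:ℂ)) (nhds (y * G 0)) :=
        hcont.const_mul y
      exact Tendsto.congr' (heqG.mono fun x hx => hx.symm) this
    have huniq : G 0 = y * G 0 := tendsto_nhds_unique h1 h2
    have : (1 - y) * G 0 = 0 := by linear_combination huniq
    rcases mul_eq_zero.1 this with h | h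
    · exact absurd (by linear_combination -h) hy1
    · exact h
  -- big-O bound near 0
  have hbigO : (fun z : ℂ => G z) =O[nhds (0:ℂ)] (fun z : ℂ => z) := by
    have h := hGat0.isBigO_sub
    simp only [hG00, sub_zero] at h
    exact h
  obtain ⟨C, hC0, hCbound⟩ := hbigO.exists_pos
  rw [Asymptotics.isBigOWith_iff] at hCbound
  obtain ⟨ε, hε, hball⟩ := eventually_nhds_iff_ball.1 hCbound
  -- conclude
  intro x hx
  have hyabs : 0 < ‖y‖ := lt_trans hq0 hylb
  have hxabs : 0 < ‖x‖ := norm_pos_iff.mpr hx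
  have hterm : ∀ᶠ n : ℕ in atTop, ‖g x‖ ≤
      C * ‖x‖ * (‖q‖ / ‖y‖) ^ n := by
    have hsmall : Tendsto (fun n : ℕ => ‖q‖ ^ n * ‖x‖) atTop (nhds 0) := by
      have := tendsto_pow_atTop_nhds_zero_of_lt_one (le_of_lt hq0) hq1
      simpa using this.mul_const (‖x‖)
    filter_upwards [hsmall.eventually (eventually_lt_nhds hε)] with n hn
    have hqnx : q ^ n * x ≠ 0 := mul_ne_zero (pow_ne_zero _ hqne) hx
    have hmem : q ^ n * x ∈ ball (0:ℂ) ε := by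
      simp only [mem_ball, dist_zero_right, norm_mul, norm_pow]
      exact hn
    have hGb := hball _ hmem
    rw [hGeq _ hqnx] at hGb
    have hiter' := hiter n x hx
    have hgx : ‖g x‖ = ‖g (q ^ n * x)‖ / ‖y‖ ^ n := by
      rw [hiter', norm_mul, norm_pow]
      field_simp
    rw [hgx]
    rw [div_le_iff₀ (pow_pos hyabs n)]
    calc ‖g (q ^ n * x)‖ ≤ C * ‖q ^ n * x‖ := by
          simpa using hGb
      _ = C * ‖x‖ * ‖q‖ ^ n := by rw [norm_mul, norm_pow]; ring
      _ = C * ‖x‖ * (‖q‖ / ‖y‖) ^ n * ‖y‖ ^ n := by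
          rw [div_pow]
          field_simp
  have htend : Tendsto (fun n : ℕ => C * ‖x‖ * (‖q‖ / ‖y‖) ^ n)
      atTop (nhds 0) := by
    have hr : ‖q‖ / ‖y‖ < 1 := by
      rw [div_lt_one hyabs]; exact hylb
    have := tendsto_pow_atTop_nhds_zero_of_lt_one (div_nonneg (le_of_lt hq0) (le_of_lt hyabs)) hr
    simpa using (this.const_mul (C * ‖x‖))
  have : ‖g x‖ ≤ 0 := ge_of_tendsto htend hterm
  have := le_antisymm this (norm_nonneg _)
  exact norm_eq_zero.1 this

/-- For `0 < |q| < 1` and `y ∉ q^ℤ`, any function holomorphic on `ℂ ∖ {0}` satisfying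
`g(qx) = y·g(x)` vanishes identically on `ℂ ∖ {0}`: the degree-zero line bundle `L_y`
on `E_q = ℂ*/q^ℤ` has no nonzero global sections. -/
theorem no_sections_degree_zero (q y : ℂ)
    (hq0 : 0 < ‖q‖) (hq1 : ‖q‖ < 1)
    (hy : ∀ n : ℤ, y ≠ q ^ n)
    (g : ℂ → ℂ)
    (hg : ∀ x : ℂ, x ≠ 0 → DifferentiableAt ℂ g x)
    (heq : ∀ x : ℂ, x ≠ 0 → g (q * x) = y * g x) :
    ∀ x : ℂ, x ≠ 0 → g x = 0 := by
  have hqne : q ≠ 0 := by intro h; rw [h] at hq0; simp at hq0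
  by_cases hy0 : y = 0
  · intro x hx
    have hx' : x / q ≠ 0 := div_ne_zero hx hqne
    have h := heq _ hx'
    rw [hy0, zero_mul] at h
    have hxq : q * (x / q) = x := by field_simp
    rwa [hxq] at h
  · set r := ‖q‖ with hr
    set s := ‖y‖ with hs'
    have hs : 0 < s := norm_pos_iff.mpr hy0
    have hlogr : Real.log r < 0 := Real.log_neg hq0 hq1
    have hlogrne : Real.log r ≠ 0 := ne_of_lt hlogr
    set t := Real.log s / Real.log r with ht
    set k := ⌊t⌋ with hk
    have htlog : t * Real.log r = Real.log s := div_mul_cancel₀ _ hlogrne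
    have hub : s ≤ r ^ k := by
      have h1 : (k : ℝ) ≤ t := Int.floor_le t
      have h2 : t * Real.log r ≤ (k : ℝ) * Real.log r :=
        mul_le_mul_of_nonpos_right h1 (le_of_lt hlogr)
      rw [htlog] at h2
      have h3 : Real.log s ≤ Real.log (r ^ k) := by rw [Real.log_zpow]; exact h2
      exact (Real.log_le_log_iff hs (zpow_pos hq0 k)).1 h3
    have hlb : r ^ (k + 1) < s := by
      have h1 : t < (k : ℝ) + 1 := Int.lt_floor_add_one t
      have h2 : ((k : ℝ) + 1) * Real.log r < t * Real.log r :=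
        mul_lt_mul_of_neg_right h1 hlogr
      rw [htlog] at h2
      have h3 : Real.log (r ^ (k + 1)) < Real.log s := by
        rw [Real.log_zpow]; push_cast; exact h2
      exact (Real.log_lt_log_iff (zpow_pos hq0 _) hs).1 h3
    set y' : ℂ := y / q ^ k with hy'
    have hqk : (q : ℂ) ^ k ≠ 0 := zpow_ne_zero k hqne
    have habs' : ‖y'‖ = s / r ^ k := by
      rw [hy', norm_div, norm_zpow]
    have hrk : (0:ℝ) < r ^ k := zpow_pos hq0 k
    have hub' : ‖y'‖ ≤ 1 := by
      rw [habs', div_le_one hrk]; exact hub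
    have hlb' : r < ‖y'‖ := by
      rw [habs', lt_div_iff₀ hrk]
      calc r * r ^ k = r ^ (k + 1) := by rw [zpow_add_one₀ (ne_of_gt hq0)]; ring
        _ < s := hlb
    have hy1' : y' ≠ 1 := by
      intro h
      have : y = q ^ k := by
        rw [hy', div_eq_one_iff_eq hqk] at h
        exact h
      exact hy k this
    set h : ℂ → ℂ := fun x => g x / x ^ k with hdefh
    have hgd : ∀ x : ℂ, x ≠ 0 → DifferentiableAt ℂ h x := by
      intro x hx
      exact (hg x hx).div (differentiableAt_zpow.2 (Or.inl hx)) (zpow_ne_zero k hx)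
    have heq' : ∀ x : ℂ, x ≠ 0 → h (q * x) = y' * h x := by
      intro x hx
      have hxk : (x : ℂ) ^ k ≠ 0 := zpow_ne_zero k hx
      simp only [hdefh, hy']
      rw [mul_zpow, heq x hx]
      field_simp
    have hzero := aux_main q y' hq0 hq1 hlb' hub' hy1' h hgd heq'
    intro x hx
    have := hzero x hx
    rw [hdefh] at this
    rcases div_eq_zero_iff.1 this with h1 | h1
    · exact h1
    · exact absurd h1 (zpow_ne_zero k hx)
end

section
/- Let q ∈ ℂ with 0 < |q| < 1 and let y ∈ ℂ be such that y ≠ q^n for every n ∈ ℤ. Then s(·,y;q) is the unique holomorphic solution of the theta difference equation: if g : ℂ → ℂ is holomorphic on ℂ ∖ {0} and satisfies g(qx) = y·g(x) + ϑ(x;q) for all x ∈ ℂ ∖ {0}, then g(x) = s(x, y; q) for all x ∈ ℂ ∖ {0}. -/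
open Filter Set Metric Bornology Topology


lemma summable_aux (a b : ℝ) (ha0 : 0 < a) (ha1 : a < 1) (hb : 0 < b) (c : ℤ) (e : ℕ → ℤ)
    (he : ∀ k, e (k + 1) = e k + k + c) :
    Summable (fun k : ℕ => a ^ e k * b ^ k) := by
  have ha : a ≠ 0 := ha0.ne'
  have hpos : ∀ k : ℕ, 0 < a ^ e k * b ^ k := fun k =>
    mul_pos (zpow_pos ha0 _) (pow_pos hb _)
  apply summable_of_ratio_test_tendsto_lt_one (l := 0) one_pos
  · exact Eventually.of_forall fun k => (hpos k).ne'
  · have : (fun k : ℕ => ‖a ^ e (k + 1) * b ^ (k + 1)‖ / ‖a ^ e k * b ^ k‖)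
        = fun k : ℕ => a ^ k * (a ^ c * b) := by
      funext k
      rw [Real.norm_eq_abs, Real.norm_eq_abs, abs_of_pos (hpos _), abs_of_pos (hpos _),
        he k, zpow_add₀ ha, zpow_add₀ ha, pow_succ, zpow_natCast]
      field_simp
    rw [this]
    simpa using (tendsto_pow_atTop_nhds_zero_of_lt_one ha0.le ha1).mul_const (a ^ c * b)

lemma summable_quad (a b : ℝ) (ha0 : 0 < a) (ha1 : a < 1) (hb : 0 < b) :
    Summable (fun n : ℤ => a ^ (n * (n - 1) / 2) * b ^ n) := by
  apply Summable.of_nat_of_neg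
  · have := summable_aux a b ha0 ha1 hb 0 (fun k => (k : ℤ) * ((k : ℤ) - 1) / 2)
      (fun k => by
        beta_reduce
        push_cast
        have h : ((k:ℤ) + 1) * ((k:ℤ) + 1 - 1) = (k:ℤ) * ((k:ℤ) - 1) + 2 * k := by ring
        omega)
    simpa [zpow_natCast] using this
  · have := summable_aux a b⁻¹ ha0 ha1 (inv_pos.2 hb) 1
      (fun k => (-(k : ℤ)) * (-(k : ℤ) - 1) / 2) (fun k => by
        beta_reduce
        push_cast
        have h : (-((k:ℤ) + 1)) * (-((k:ℤ) + 1) - 1) = (-(k:ℤ)) * (-(k:ℤ) - 1) + 2 * (k + 1) := by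
          ring
        omega)
    refine this.congr fun k => ?_
    rw [zpow_neg, zpow_natCast, inv_pow]

lemma abs_q_zpow (q : ℂ) (n : ℤ) : ‖q ^ n‖ = ‖q‖ ^ n := norm_zpow q n

lemma lower_bound (q y : ℂ) (hq0 : 0 < ‖q‖) (hq1 : ‖q‖ < 1)
    (hy : ∀ n : ℤ, y ≠ q ^ n) :
    ∃ c > 0, ∀ n : ℤ, c * ‖q‖ ^ n ≤ ‖q ^ n - y‖ := by
  set a := ‖q‖ with ha
  rcases eq_or_ne y 0 with rfl | hy0
  · exact ⟨1, one_pos, fun n => by simp [abs_q_zpow, ha]⟩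
  have hy0' : 0 < ‖y‖ := by simpa using hy0
  obtain ⟨N, hN⟩ := exists_pow_lt_of_lt_one
    (lt_min (by positivity : (0:ℝ) < (‖y‖)/2)
      (by positivity : (0:ℝ) < 1 / (2 * (‖y‖ + 1)))) hq1
  have hN1 : a ^ N < ‖y‖ / 2 := lt_of_lt_of_le hN (min_le_left _ _)
  have hN2 : a ^ N < 1 / (2 * (‖y‖ + 1)) := lt_of_lt_of_le hN (min_le_right _ _)
  -- finite part
  have hne : (Finset.Icc (-(N:ℤ)) N).Nonempty := ⟨0, by simp⟩
  set c₃ : ℝ := (Finset.Icc (-(N:ℤ)) N).inf' hne (fun n => ‖q ^ n - y‖ / a ^ n)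
  have hc₃ : 0 < c₃ := by
    rw [Finset.lt_inf'_iff]
    intro n _
    have h1 : q ^ n - y ≠ 0 := sub_ne_zero.2 fun h => (hy n) h.symm
    have : 0 < ‖q ^ n - y‖ := by simpa using h1
    positivity
  refine ⟨min (min (‖y‖ / 2) (1/2)) c₃, lt_min (lt_min (by positivity) (by norm_num)) hc₃,
    fun n => ?_⟩
  rcases le_or_gt n (-(N:ℤ)) with hn | hn
  · -- very negative n : a^n huge
    have h1 : a ^ (-(N:ℤ)) ≤ a ^ n := zpow_le_zpow_right_of_le_one₀ hq0 hq1.le hn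
    have h2 : (2 * (‖y‖ + 1)) < a ^ (-(N:ℤ)) := by
      rw [zpow_neg, zpow_natCast, lt_inv_comm₀ (by positivity) (by positivity), ← one_div]
      exact hN2
    have h3 : ‖y‖ ≤ a ^ n / 2 := by nlinarith [norm_nonneg y]
    calc min (min (‖y‖ / 2) (1/2)) c₃ * a ^ n ≤ (1/2) * a ^ n := by
          apply mul_le_mul_of_nonneg_right _ (by positivity)
          exact le_trans (min_le_left _ _) (min_le_right _ _)
      _ ≤ ‖q ^ n‖ - ‖y‖ := by
          rw [abs_q_zpow]; linarith
      _ ≤ ‖q ^ n - y‖ := by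
          have := norm_sub_norm_le (q ^ n) y
          linarith
  rcases le_or_gt (N:ℤ) n with hn' | hn'
  · -- large n : q^n small
    have h1 : a ^ n ≤ a ^ (N:ℤ) := zpow_le_zpow_right_of_le_one₀ hq0 hq1.le hn'
    have h2 : a ^ (N:ℤ) < ‖y‖ / 2 := by rw [zpow_natCast]; exact hN1
    have h4 : a ^ n ≤ 1 := zpow_le_one₀ hq0 hq1.le ((Int.natCast_nonneg N).trans hn')
    calc min (min (‖y‖ / 2) (1/2)) c₃ * a ^ n ≤ (‖y‖ / 2) * 1 := by
          exact mul_le_mul (le_trans (min_le_left _ _) (min_le_left _ _)) h4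
            (zpow_pos hq0 n).le (by positivity)
      _ ≤ ‖y‖ - ‖q ^ n‖ := by rw [abs_q_zpow]; linarith
      _ ≤ ‖y - q ^ n‖ := by
          have := norm_sub_norm_le y (q ^ n)
          linarith
      _ = ‖q ^ n - y‖ := by rw [← norm_neg, neg_sub]
  · -- middle
    have hmem : n ∈ Finset.Icc (-(N:ℤ)) N := Finset.mem_Icc.2 ⟨hn.le, hn'.le⟩
    have h1 : c₃ ≤ ‖q ^ n - y‖ / a ^ n := Finset.inf'_le _ hmem
    have h2 : 0 < a ^ n := zpow_pos hq0 n
    calc min (min (‖y‖ / 2) (1/2)) c₃ * a ^ n ≤ c₃ * a ^ n :=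
          mul_le_mul_of_nonneg_right (min_le_right _ _) h2.le
      _ ≤ ‖q ^ n - y‖ := (le_div_iff₀ h2).mp h1

lemma zpow_le_add (s t v : ℝ) (hs : 0 < s) (hv1 : s ≤ v) (hv2 : v ≤ t) (n : ℤ) :
    v ^ n ≤ s ^ n + t ^ n := by
  have hv : 0 < v := hs.trans_le hv1
  rcases le_or_gt 0 n with hn | hn
  · obtain ⟨k, rfl⟩ := Int.eq_ofNat_of_zero_le hn
    have h1 : v ^ (k:ℤ) ≤ t ^ (k:ℤ) := by
      rw [zpow_natCast, zpow_natCast]; exact pow_le_pow_left₀ hv.le hv2 k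
    have h2 : 0 < s ^ (k:ℤ) := zpow_pos hs _
    linarith
  · have h1 : v ^ n ≤ s ^ n := by
      rw [← neg_neg n, zpow_neg v, zpow_neg s]
      have h3 : s ^ (-n) ≤ v ^ (-n) := by
        obtain ⟨k, hk⟩ := Int.eq_ofNat_of_zero_le (by omega : (0:ℤ) ≤ -n)
        rw [hk, zpow_natCast, zpow_natCast]
        exact pow_le_pow_left₀ hs.le hv1 k
      exact inv_anti₀ (zpow_pos hs _) h3
    have h2 : 0 < t ^ n := zpow_pos (hs.trans_le (hv1.trans hv2)) _
    linarith

lemma summable_theta (q x : ℂ) (hq0 : 0 < ‖q‖) (hq1 : ‖q‖ < 1)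
    (hx : x ≠ 0) :
    Summable (fun n : ℤ => (-x) ^ n * q ^ (n * (n - 1) / 2)) := by
  apply Summable.of_norm
  have hxa : 0 < ‖x‖ := by simpa using hx
  refine ((summable_quad (‖q‖) (‖x‖) hq0 hq1 hxa).congr fun n => ?_)
  rw [norm_mul, norm_zpow, norm_zpow, norm_neg, mul_comm]

set_option maxHeartbeats 1000000 in
lemma summable_appell (q y : ℂ) (hq0 : 0 < ‖q‖) (hq1 : ‖q‖ < 1)
    (hy : ∀ n : ℤ, y ≠ q ^ n) (x : ℂ) (hx : x ≠ 0) :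
    Summable (fun n : ℤ => q ^ (n * (n - 1) / 2) * (-x) ^ n / (q ^ n - y)) := by
  obtain ⟨c, hc, hcb⟩ := lower_bound q y hq0 hq1 hy
  apply Summable.of_norm
  set a := ‖q‖ with ha
  have hxa : 0 < ‖x‖ := by simpa using hx
  have hb : 0 < ‖x‖ / a := by positivity
  refine Summable.of_nonneg_of_le (f := fun n : ℤ =>
      (1/c) * (a ^ (n * (n - 1) / 2) * (‖x‖ / a) ^ n))
    (fun n => norm_nonneg _) (fun n => ?_)
    ((summable_quad a _ hq0 hq1 hb).mul_left _)
  have hd : c * a ^ n ≤ ‖q ^ n - y‖ := hcb n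
  have hd0 : 0 < c * a ^ n := mul_pos hc (zpow_pos hq0 _)
  rw [norm_div, norm_mul, norm_zpow, norm_zpow, norm_neg]
  have key : a ^ (n * (n - 1) / 2) * ‖x‖ ^ n / (c * a ^ n)
      = (1/c) * (a ^ (n * (n - 1) / 2) * (‖x‖ / a) ^ n) := by
    rw [div_zpow]
    field_simp
  beta_reduce
  rw [← ha, ← key]
  exact div_le_div_of_nonneg_left (by positivity) hd0 hd

lemma appell_fe (q y : ℂ) (hq0 : 0 < ‖q‖) (hq1 : ‖q‖ < 1)
    (hy : ∀ n : ℤ, y ≠ q ^ n) (x : ℂ) (hx : x ≠ 0) :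
    appellS q (q * x) y = y * appellS q x y + theta q x := by
  have hq : q ≠ 0 := by
    intro h; rw [h] at hq0; simp at hq0
  have ht := summable_theta q x hq0 hq1 hx
  have hs := summable_appell q y hq0 hq1 hy x hx
  unfold appellS theta
  have key : ∀ n : ℤ, q ^ (n * (n - 1) / 2) * (-(q * x)) ^ n / (q ^ n - y)
      = y * (q ^ (n * (n - 1) / 2) * (-x) ^ n / (q ^ n - y)) + (-x) ^ n * q ^ (n * (n - 1) / 2) := by
    intro n
    have hqn : q ^ n - y ≠ 0 := sub_ne_zero.2 fun h => hy n h.symm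
    have h1 : (-(q * x)) ^ n = q ^ n * (-x) ^ n := by
      rw [show -(q * x) = q * (-x) by ring, mul_zpow]
    rw [h1]
    field_simp
    ring
  rw [tsum_congr key, Summable.tsum_add (hs.mul_left y) ht, tsum_mul_left]

lemma appell_diff (q y : ℂ) (hq0 : 0 < ‖q‖) (hq1 : ‖q‖ < 1)
    (hy : ∀ n : ℤ, y ≠ q ^ n) (x : ℂ) (hx : x ≠ 0) :
    DifferentiableAt ℂ (fun z => appellS q z y) x := by
  obtain ⟨c, hc, hcb⟩ := lower_bound q y hq0 hq1 hy
  set a := ‖q‖ with ha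
  have hxa : 0 < ‖x‖ := by simpa using hx
  set r := ‖x‖ / 2 with hr
  set R := 2 * ‖x‖ with hR
  have hr0 : 0 < r := by positivity
  set U : Set ℂ := norm ⁻¹' (Ioo r R) with hUdef
  have hU : IsOpen U := isOpen_Ioo.preimage continuous_norm
  have hxU : x ∈ U := by
    refine ⟨?_, ?_⟩ <;> simp only [hr, hR] <;> linarith
  have hzne : ∀ z ∈ U, z ≠ 0 := by
    intro z hz h0
    rw [h0] at hz
    have h1 : ‖(0:ℂ)‖ ∈ Ioo r R := hz
    simp only [norm_zero, mem_Ioo] at h1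
    linarith [h1.1]
  have hdon : DifferentiableOn ℂ
      (fun w : ℂ => ∑' n : ℤ, q ^ (n * (n - 1) / 2) * (-w) ^ n / (q ^ n - y)) U := by
    apply Complex.differentiableOn_tsum_of_summable_norm
      (u := fun n : ℤ => (1/c) * (a ^ (n * (n - 1) / 2) * (r/a) ^ n)
        + (1/c) * (a ^ (n * (n - 1) / 2) * (R/a) ^ n))
    · exact ((summable_quad a (r/a) hq0 hq1 (by positivity)).mul_left _).add
        ((summable_quad a (R/a) hq0 hq1 (by positivity)).mul_left _)
    · intro n
      intro z hz
      apply DifferentiableAt.differentiableWithinAt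
      have hz0 : z ≠ 0 := hzne z hz
      exact ((differentiableAt_id.neg.zpow (Or.inl (by simpa using hz0))).const_mul _).div_const _
    · exact hU
    · intro n w hw
      have hw1 : r < ‖w‖ := hw.1
      have hw2 : ‖w‖ < R := hw.2
      have hd : c * a ^ n ≤ ‖q ^ n - y‖ := hcb n
      have hd0 : 0 < c * a ^ n := mul_pos hc (zpow_pos hq0 _)
      rw [norm_div, norm_mul, norm_zpow, norm_zpow, norm_neg]
      have hnum : ‖w‖ ^ n ≤ r ^ n + R ^ n :=
        zpow_le_add r R _ hr0 hw1.le hw2.le n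
      have step : a ^ (n * (n - 1) / 2) * ‖w‖ ^ n / ‖q ^ n - y‖
          ≤ a ^ (n * (n - 1) / 2) * (r ^ n + R ^ n) / (c * a ^ n) := by
        apply div_le_div₀ (by positivity) _ hd0 hd
        exact mul_le_mul_of_nonneg_left hnum (zpow_nonneg (by positivity) _)
      have step2 : a ^ (n * (n - 1) / 2) * (r ^ n + R ^ n) / (c * a ^ n)
          = 1/c * (a ^ (n * (n - 1) / 2) * (r/a) ^ n)
            + 1/c * (a ^ (n * (n - 1) / 2) * (R/a) ^ n) := by
        have h2 : ((2:ℝ)) ^ n ≠ 0 := (zpow_pos two_pos n).ne'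
        simp only [hr, hR, div_zpow, mul_zpow]
        field_simp
      rw [← ha, ← step2]
      exact step
  have := hdon.differentiableAt (hU.mem_nhds hxU)
  unfold appellS
  exact this

-- helper: find scale
lemma scale_exists (a t : ℝ) (ha0 : 0 < a) (ha1 : a < 1) (ht : 0 < t) :
    ∃ n : ℤ, a ^ (n + 1) < t ∧ t ≤ a ^ n := by
  obtain ⟨k, hk⟩ := exists_mem_Ioc_zpow ht (one_lt_inv₀ ha0 |>.mpr ha1)
  refine ⟨-(k + 1), ?_, ?_⟩
  · have h1 : (a⁻¹) ^ k < t := hk.1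
    rw [inv_zpow, ← zpow_neg] at h1
    simpa using h1
  · have h2 : t ≤ (a⁻¹) ^ (k + 1) := hk.2
    rw [inv_zpow, ← zpow_neg] at h2
    exact h2

lemma mono_zpow_base_nonpos (s t : ℝ) (hs : 0 < s) (hst : s ≤ t) (n : ℤ) (hn : n ≤ 0) :
    t ^ n ≤ s ^ n := by
  obtain ⟨k, hk⟩ := Int.eq_ofNat_of_zero_le (by omega : (0:ℤ) ≤ -n)
  have h : n = -(k : ℤ) := by omega
  rw [h, zpow_neg, zpow_neg, zpow_natCast, zpow_natCast]
  exact inv_anti₀ (pow_pos hs k) (pow_le_pow_left₀ hs.le hst k)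

lemma uniq_zero (q y : ℂ) (hq0 : 0 < ‖q‖) (hq1 : ‖q‖ < 1)
    (hy : ∀ n : ℤ, y ≠ q ^ n)
    (h : ℂ → ℂ) (hd : ∀ z : ℂ, z ≠ 0 → DifferentiableAt ℂ h z)
    (hfe : ∀ z : ℂ, z ≠ 0 → h (q * z) = y * h z) :
    ∀ z : ℂ, z ≠ 0 → h z = 0 := by
  have hq : q ≠ 0 := by intro h0; rw [h0] at hq0; simp at hq0
  set a := ‖q‖ with ha
  rcases eq_or_ne y 0 with rfl | hy0
  · intro z hz
    have h1 := hfe (z / q) (div_ne_zero hz hq)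
    rw [mul_div_cancel₀ z hq] at h1
    simpa using h1
  · -- choose m
    have hya : 0 < ‖y‖ := by simpa using hy0
    obtain ⟨m, hm1, hm2⟩ := scale_exists a (‖y‖) hq0 hq1 hya
    set lam := y / q ^ m with hlam
    have hqm : q ^ m ≠ 0 := zpow_ne_zero m hq
    have hlam0 : lam ≠ 0 := div_ne_zero hy0 hqm
    have hlam_abs : ‖lam‖ = ‖y‖ / a ^ m := by
      rw [hlam, norm_div, norm_zpow, ha]
    have hapos : ∀ n : ℤ, (0:ℝ) < a ^ n := fun n => zpow_pos hq0 n
    have hlam_le1 : ‖lam‖ ≤ 1 := by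
      rw [hlam_abs, div_le_one (hapos m)]; exact hm2
    have hlam_gt : a < ‖lam‖ := by
      rw [hlam_abs, lt_div_iff₀ (hapos m)]
      calc a * a ^ m = a ^ (m + 1) := by rw [zpow_add_one₀ hq0.ne']; ring
        _ < ‖y‖ := hm1
    have hlam_pos : 0 < ‖lam‖ := hq0.trans hlam_gt
    have hlam1 : lam ≠ 1 := by
      intro h1
      exact hy m (by rw [hlam, div_eq_one_iff_eq hqm] at h1; rw [h1])
    have hlamq : lam ≠ q := by
      intro h1
      apply hy (m + 1)
      have : y = q * q ^ m := by
        rw [hlam, div_eq_iff hqm] at h1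
        linear_combination h1
      rw [this, zpow_add_one₀ hq, mul_comm]
    -- the function H
    set H : ℂ → ℂ := fun z => h z / z ^ m with hH
    have hHd : ∀ z : ℂ, z ≠ 0 → DifferentiableAt ℂ H z := fun z hz =>
      (hd z hz).div (differentiableAt_id.zpow (Or.inl hz)) (zpow_ne_zero m hz)
    have hHfe : ∀ z : ℂ, z ≠ 0 → H (q * z) = lam * H z := by
      intro z hz
      have hzm : z ^ m ≠ 0 := zpow_ne_zero m hz
      rw [hH]
      beta_reduce
      rw [hfe z hz, mul_zpow, hlam]
      field_simp
    have hHiter : ∀ (n : ℤ) (z : ℂ), z ≠ 0 → H (q ^ n * z) = lam ^ n * H z := by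
      intro n
      induction n using Int.induction_on with
      | zero => intro z hz; simp
      | succ k ih =>
        intro z hz
        have h1 : q ^ ((k : ℤ) + 1) * z = q * (q ^ (k : ℤ) * z) := by
          rw [zpow_add_one₀ hq]; ring
        rw [h1, hHfe _ (mul_ne_zero (zpow_ne_zero _ hq) hz), ih z hz,
          zpow_add_one₀ hlam0]
        ring
      | pred k ih =>
        intro z hz
        have hz2 : q ^ (-(k : ℤ) - 1) * z ≠ 0 := mul_ne_zero (zpow_ne_zero _ hq) hz
        have h1 := hHfe _ hz2
        have he : (-(k : ℤ) - 1) + 1 = -(k : ℤ) := by ring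
        have h2 : q * (q ^ (-(k : ℤ) - 1) * z) = q ^ (-(k : ℤ)) * z := by
          rw [← mul_assoc, mul_comm q (q ^ (-(k : ℤ) - 1)), ← zpow_add_one₀ hq, he]
        rw [h2, ih z hz] at h1
        have h3 : lam ^ (-(k : ℤ)) = lam * lam ^ (-(k : ℤ) - 1) := by
          rw [mul_comm, ← zpow_add_one₀ hlam0, he]
        rw [h3, mul_assoc] at h1
        exact (mul_left_cancel₀ hlam0 h1).symm
    -- sup on annulus
    set A : Set ℂ := norm ⁻¹' (Icc a 1) with hA
    have hAcl : IsClosed A := isClosed_Icc.preimage continuous_norm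
    have hAcp : IsCompact A := by
      apply (isCompact_closedBall (0:ℂ) 1).of_isClosed_subset hAcl
      intro z hz
      have : ‖z‖ ≤ 1 := hz.2
      simpa [Complex.dist_eq] using this
    have hAne : ∀ z ∈ A, z ≠ 0 := by
      intro z hz h0
      rw [h0] at hz
      have := hz.1
      simp at this
      linarith
    obtain ⟨M, hM⟩ := hAcp.exists_bound_of_continuousOn
      (fun z hz => ((hHd z (hAne z hz)).continuousAt).continuousWithinAt)
    have h1A : (1:ℂ) ∈ A := by
      constructor <;> simp <;> linarith
    have hM0 : 0 ≤ M := (norm_nonneg _).trans (hM 1 h1A)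
    -- decomposition of arbitrary z
    have hdec : ∀ z : ℂ, z ≠ 0 → ∃ (n : ℤ) (w : ℂ), w ∈ A ∧ z = q ^ n * w ∧
        (‖z‖ ≤ 1 → 0 ≤ n) ∧ (1 ≤ ‖z‖ → n ≤ 0 ∧ a ^ n < ‖z‖ / a) := by
      intro z hz
      have hza : 0 < ‖z‖ := by simpa using hz
      obtain ⟨n, hn1, hn2⟩ := scale_exists a (‖z‖) hq0 hq1 hza
      refine ⟨n, z / q ^ n, ?_, ?_, ?_, ?_⟩
      · constructor
        · rw [norm_div, norm_zpow, ← ha, le_div_iff₀ (hapos n)]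
          calc a * a ^ n = a ^ (n + 1) := by rw [zpow_add_one₀ hq0.ne']; ring
            _ ≤ ‖z‖ := hn1.le
        · rw [norm_div, norm_zpow, ← ha, div_le_one (hapos n)]
          exact hn2
      · rw [mul_div_cancel₀ _ (zpow_ne_zero n hq)]
      · intro hz1
        by_contra hcon
        push_neg at hcon
        have : a ^ (n + 1) ≥ 1 := one_le_zpow_of_nonpos₀ hq0 hq1.le (by omega)
        linarith
      · intro hz1
        have hn0 : n ≤ 0 := by
          by_contra hcon
          push_neg at hcon
          have : a ^ n ≤ a ^ (1:ℤ) := zpow_le_zpow_right_of_le_one₀ hq0 hq1.le (by omega)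
          rw [zpow_one] at this
          linarith
        refine ⟨hn0, ?_⟩
        have h4 : a ^ n = a ^ (n + 1) / a := by
          rw [zpow_add_one₀ hq0.ne']; field_simp
        rw [h4]
        gcongr
    -- bound for |z| ≤ 1
    have hbdd1 : ∀ z : ℂ, z ≠ 0 → ‖z‖ ≤ 1 → ‖H z‖ ≤ M := by
      intro z hz hz1
      obtain ⟨n, w, hwA, hzw, hpos, _⟩ := hdec z hz
      have hn0 : 0 ≤ n := hpos hz1
      have hw0 : w ≠ 0 := hAne w hwA
      have hHz : H z = lam ^ n * H w := by rw [hzw]; exact hHiter n w hw0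
      rw [hHz]
      calc ‖lam ^ n * H w‖ = ‖lam‖ ^ n * ‖H w‖ := by
            rw [norm_mul, norm_zpow]
        _ ≤ 1 * M := by
            apply mul_le_mul (zpow_le_one₀ hlam_pos hlam_le1 hn0) (hM w hwA)
              (norm_nonneg _) zero_le_one
        _ = M := one_mul M
    -- bound for |z| ≥ 1
    have hbdd2 : ∀ z : ℂ, 1 ≤ ‖z‖ → ‖H z‖ ≤ M / a * ‖z‖ := by
      intro z hz1
      have hz : z ≠ 0 := by
        intro h0; rw [h0] at hz1; simp at hz1; linarith
      obtain ⟨n, w, hwA, hzw, _, hneg⟩ := hdec z hz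
      obtain ⟨hn0, hlt⟩ := hneg hz1
      have hw0 : w ≠ 0 := hAne w hwA
      have hHz : H z = lam ^ n * H w := by rw [hzw]; exact hHiter n w hw0
      rw [hHz]
      calc ‖lam ^ n * H w‖ = ‖lam‖ ^ n * ‖H w‖ := by
            rw [norm_mul, norm_zpow]
        _ ≤ a ^ n * M := by
            apply mul_le_mul (mono_zpow_base_nonpos a (‖lam‖) hq0 hlam_gt.le n hn0)
              (hM w hwA) (norm_nonneg _) (hapos n).le
        _ ≤ (‖z‖ / a) * M := by
            apply mul_le_mul_of_nonneg_right hlt.le hM0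
        _ = M / a * ‖z‖ := by ring
    -- removable singularity
    have hball : Metric.ball (0:ℂ) 2 ∈ 𝓝 (0:ℂ) := isOpen_ball.mem_nhds (Metric.mem_ball_self (by norm_num))
    have hHdOn : DifferentiableOn ℂ H (Metric.ball (0:ℂ) 2 \ {0}) := by
      intro z hz
      exact (hHd z hz.2).differentiableWithinAt
    have hbb : BddAbove (norm ∘ H '' (Metric.ball (0:ℂ) 2 \ {0})) := by
      refine ⟨M / a * 2 + M, ?_⟩
      rintro b ⟨z, ⟨hzb, hz0⟩, rfl⟩
      have hz0' : z ≠ 0 := hz0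
      have hMa : 0 ≤ M / a := by positivity
      have hz2 : ‖z‖ < 2 := by
        simpa [Complex.dist_eq] using hzb
      rcases le_or_gt (‖z‖) 1 with hc | hc
      · have := hbdd1 z hz0' hc
        simp only [Function.comp_apply]
        nlinarith
      · have := hbdd2 z hc.le
        simp only [Function.comp_apply]
        nlinarith
    have hFOn := Complex.differentiableOn_update_limUnder_of_bddAbove hball hHdOn hbb
    set F : ℂ → ℂ := Function.update H 0 (limUnder (𝓝[≠] (0:ℂ)) H) with hF
    have hFH : ∀ z : ℂ, z ≠ 0 → F z = H z := fun z hz => Function.update_of_ne hz _ _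
    have hFd : Differentiable ℂ F := by
      intro z
      rcases eq_or_ne z 0 with rfl | hz
      · exact hFOn.differentiableAt hball
      · refine (hHd z hz).congr_of_eventuallyEq ?_
        filter_upwards [compl_singleton_mem_nhds hz] with w hw
        exact hFH w hw
    -- bounds on F
    have hF0 : ‖F 0‖ ≤ M := by
      have hcont : Tendsto F (𝓝[≠] (0:ℂ)) (𝓝 (F 0)) :=
        ((hFd 0).continuousAt.continuousWithinAt : ContinuousWithinAt F _ 0)
      refine le_of_tendsto hcont.norm ?_
      have hmem : Metric.ball (0:ℂ) 1 \ {0} ∈ 𝓝[≠] (0:ℂ) :=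
        diff_mem_nhdsWithin_compl (isOpen_ball.mem_nhds (Metric.mem_ball_self one_pos)) {0}
      filter_upwards [hmem] with w hw
      have hw0 : w ≠ 0 := hw.2
      have hw1 : ‖w‖ ≤ 1 := by
        have : ‖w‖ < 1 := by simpa [Complex.dist_eq] using hw.1
        linarith
      rw [hFH w hw0]
      exact hbdd1 w hw0 hw1
    have hFbd : ∀ z : ℂ, ‖F z‖ ≤ M / a * ‖z‖ + M := by
      intro z
      have hMa : 0 ≤ M / a := by positivity
      have habs : 0 ≤ ‖z‖ := norm_nonneg z
      have hprod : 0 ≤ M / a * ‖z‖ := mul_nonneg hMa habs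
      rcases eq_or_ne z 0 with rfl | hz
      · simpa using hF0
      · rw [hFH z hz]
        rcases le_or_gt (‖z‖) 1 with hc | hc
        · have := hbdd1 z hz hc
          linarith
        · have := hbdd2 z hc.le
          linarith
    -- dslope is entire and bounded
    set G : ℂ → ℂ := dslope F 0 with hG
    have hGd : Differentiable ℂ G := by
      have := (Complex.differentiableOn_dslope (s := univ)
        (by simp : (univ : Set ℂ) ∈ 𝓝 (0:ℂ))).mpr hFd.differentiableOn
      rw [← differentiableOn_univ]
      exact this
    obtain ⟨C₁, hC₁⟩ := (isCompact_closedBall (0:ℂ) 1).exists_bound_of_continuousOn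
      hGd.continuous.continuousOn
    have hGbd : ∀ z : ℂ, ‖G z‖ ≤ max C₁ (M / a + (M + ‖F 0‖)) := by
      intro z
      rcases le_or_gt (‖z‖) 1 with hc | hc
      · refine le_trans (hC₁ z ?_) (le_max_left _ _)
        simpa [Complex.dist_eq] using hc
      · have hz0 : z ≠ 0 := by
          intro h0; rw [h0] at hc; simp at hc; linarith
        refine le_trans ?_ (le_max_right _ _)
        rw [hG, dslope_of_ne _ hz0, slope_def_field]
        have habs : 0 < ‖z‖ := by positivity
        rw [norm_div]
        have h5 : ‖F z - F 0‖ ≤ M / a * ‖z‖ + M + ‖F 0‖ := by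
          have := hFbd z
          have h6 := norm_sub_le (F z) (F 0)
          linarith
        rw [sub_zero]
        rw [div_le_iff₀ habs]
        have hMa : 0 ≤ M / a := by positivity
        have hF0' : 0 ≤ ‖F 0‖ := norm_nonneg _
        nlinarith
    have hGrange : IsBounded (range G) := by
      rw [isBounded_iff_forall_norm_le]
      exact ⟨_, by rintro _ ⟨z, rfl⟩; exact hGbd z⟩
    have hGconst : ∀ z : ℂ, G z = G 0 := fun z =>
      hGd.apply_eq_apply_of_bounded hGrange z 0
    -- so F z = F 0 + G 0 * z
    have hFaff : ∀ z : ℂ, z ≠ 0 → F z = F 0 + G 0 * z := by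
      intro z hz
      have h7 := hGconst z
      rw [hG, dslope_of_ne _ hz, slope_def_field, sub_zero] at h7
      rw [div_eq_iff hz] at h7
      linear_combination h7
    -- functional equation for affine function
    have E : ∀ z : ℂ, z ≠ 0 → F 0 + G 0 * (q * z) = lam * (F 0 + G 0 * z) := by
      intro z hz
      have h8 : F (q * z) = lam * F z := by
        rw [hFH _ (mul_ne_zero hq hz), hFH z hz]
        exact hHfe z hz
      rw [hFaff _ (mul_ne_zero hq hz), hFaff z hz] at h8
      exact h8
    have E1 := E 1 one_ne_zero
    have E2 := E (-1) (neg_ne_zero.2 one_ne_zero)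
    have hu : F 0 = 0 := by
      have h9 : F 0 * (1 - lam) = 0 := by
        linear_combination (E1 + E2) / 2
      rcases mul_eq_zero.mp h9 with h | h
      · exact h
      · exact absurd (by linear_combination -h : lam = 1) hlam1
    have hv : G 0 = 0 := by
      have h9 : G 0 * (q - lam) = 0 := by
        linear_combination (E1 - E2) / 2
      rcases mul_eq_zero.mp h9 with h | h
      · exact h
      · exact absurd (by linear_combination -h : lam = q) hlamq
    intro z hz
    have hH0 : H z = 0 := by
      rw [← hFH z hz, hFaff z hz, hu, hv]
      ring
    have hH0' : h z / z ^ m = 0 := hH0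
    exact (div_eq_zero_iff.mp hH0').resolve_right (zpow_ne_zero m hz)

/-- Uniqueness: for `0 < |q| < 1` and `y ∉ q^ℤ`, any function holomorphic on `ℂ ∖ {0}`
satisfying the theta difference equation `g(qx) = y·g(x) + ϑ(x;q)` agrees with
`s(·,y;q)` on `ℂ ∖ {0}`. -/
theorem appell_lerch_unique_solution (q y : ℂ)
    (hq0 : 0 < ‖q‖) (hq1 : ‖q‖ < 1)
    (hy : ∀ n : ℤ, y ≠ q ^ n)
    (g : ℂ → ℂ)
    (hg : ∀ x : ℂ, x ≠ 0 → DifferentiableAt ℂ g x)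
    (heq : ∀ x : ℂ, x ≠ 0 → g (q * x) = y * g x + theta q x) :
    ∀ x : ℂ, x ≠ 0 → g x = appellS q x y := by
  intro x hx
  set h : ℂ → ℂ := fun z => g z - appellS q z y with hh
  have hd : ∀ z : ℂ, z ≠ 0 → DifferentiableAt ℂ h z := fun z hz =>
    (hg z hz).sub (appell_diff q y hq0 hq1 hy z hz)
  have hfe : ∀ z : ℂ, z ≠ 0 → h (q * z) = y * h z := by
    intro z hz
    have h1 := heq z hz
    have h2 := appell_fe q y hq0 hq1 hy z hz
    simp only [hh]
    rw [h1, h2]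
    ring
  have h3 : g x - appellS q x y = 0 := uniq_zero q y hq0 hq1 hy h hd hfe x hx
  linear_combination h3
end

section
/- Let q ∈ ℂ with 0 < |q| < 1. There is no function g : ℂ → ℂ, holomorphic on ℂ ∖ {0}, such that g(qx) − g(x) = ϑ(x;q) for all x ∈ ℂ ∖ {0}. (This is the case y = 1 of the non-splitness of the extension defining the universal N=2 curve, proved by considering Laurent expansions around 0.) -/
open Complex Metric Set Function intervalIntegral Real MeasureTheory
open scoped ENNReal NNReal

lemma exp_idx_ge (n : ℤ) : |n| - 1 ≤ n * (n - 1) / 2 := by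
  rw [Int.le_ediv_iff_mul_le (by norm_num : (0:ℤ) < 2)]
  rcases le_or_gt 0 n with h | h
  · rw [abs_of_nonneg h]
    rcases le_or_gt n 1 with h1 | h1 <;> nlinarith
  · rw [abs_of_neg h]; nlinarith

lemma summable_aux_s8 {a : ℝ} (h0 : 0 < a) (h1 : a < 1) :
    Summable (fun n : ℤ => a ^ (n * (n - 1) / 2)) := by
  have hmaj : Summable (fun n : ℤ => a⁻¹ * a ^ n.natAbs) := by
    apply Summable.mul_left
    apply Summable.of_nat_of_neg <;>
      simpa using summable_geometric_of_lt_one h0.le h1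
  refine Summable.of_nonneg_of_le (fun n => zpow_nonneg h0.le _) (fun n => ?_) hmaj
  have h2 : a ^ (n * (n - 1) / 2) ≤ a ^ (|n| - 1) :=
    zpow_le_zpow_right_of_le_one₀ h0 h1.le (exp_idx_ge n)
  refine h2.trans_eq ?_
  rw [Int.abs_eq_natAbs, zpow_sub₀ h0.ne', zpow_natCast, zpow_one]
  ring

lemma theta_integral (q : ℂ) (hq0 : 0 < ‖q‖) (hq1 : ‖q‖ < 1) :
    (∮ z in C((0:ℂ), 1), theta q z / z) = 2 * π * I := by
  have hq : q ≠ 0 := by simpa using hq0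
  set F : ℤ → ℝ → ℂ := fun n θ => I * ((-circleMap 0 1 θ) ^ n * q ^ (n * (n - 1) / 2)) with hF
  have hne : ∀ θ : ℝ, circleMap (0:ℂ) 1 θ ≠ 0 := fun θ => circleMap_ne_center one_ne_zero
  have habs : ∀ θ : ℝ, ‖circleMap (0:ℂ) 1 θ‖ = 1 := fun θ => by
    simpa using norm_circleMap_zero 1 θ
  have hqk : ∀ n : ℤ, ‖q ^ (n * (n - 1) / 2)‖ = ‖q‖ ^ (n * (n - 1) / 2) :=
    fun n => by rw [norm_zpow]
  -- Step 1 : the circle integral as a set integral of a tsum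
  have step1 : (∮ z in C((0:ℂ), 1), theta q z / z)
      = ∫ θ in Ioc (0:ℝ) (2 * π), ∑' n : ℤ, F n θ := by
    rw [circleIntegral, intervalIntegral.integral_of_le Real.two_pi_pos.le]
    refine setIntegral_congr_fun measurableSet_Ioc fun θ _ => ?_
    rw [deriv_circleMap, smul_eq_mul]
    have h2 : circleMap 0 1 θ * I * (theta q (circleMap 0 1 θ) / circleMap 0 1 θ)
        = I * theta q (circleMap 0 1 θ) := by
      field_simp [hne θ]
    rw [h2, theta, ← tsum_mul_left]
  -- norms of the terms
  have hnorm : ∀ n : ℤ, ∀ θ : ℝ, ‖F n θ‖ = ‖q‖ ^ (n * (n - 1) / 2) := by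
    intro n θ
    have h1 : ‖-circleMap (0:ℂ) 1 θ‖ = 1 := by simp [habs θ]
    simp only [hF, norm_mul, norm_zpow, h1, Complex.norm_I, one_mul,
      one_zpow]
  have hsum : Summable (fun n : ℤ => ‖q‖ ^ (n * (n - 1) / 2)) :=
    summable_aux_s8 hq0 hq1
  -- Step 2 : interchange integral and sum
  have step2 : (∫ θ in Ioc (0:ℝ) (2 * π), ∑' n : ℤ, F n θ)
      = ∑' n : ℤ, ∫ θ in Ioc (0:ℝ) (2 * π), F n θ := by
    refine MeasureTheory.integral_tsum (fun n => Continuous.aestronglyMeasurable ?_) ?_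
    · refine continuous_const.mul (Continuous.mul ?_ continuous_const)
      refine Continuous.zpow₀ (continuous_circleMap 0 1).neg n fun θ => Or.inl ?_
      simpa using hne θ
    · have hnn : ∀ n : ℤ, ∀ θ : ℝ, ‖F n θ‖₊ = ‖q ^ (n * (n - 1) / 2)‖₊ := by
        intro n θ
        ext
        rw [coe_nnnorm, coe_nnnorm, hnorm n θ, hqk n]
      have hcalc : ∀ n : ℤ, (∫⁻ θ in Ioc (0:ℝ) (2 * π), ‖F n θ‖ₑ)
          = (‖q ^ (n * (n - 1) / 2)‖₊ : ℝ≥0∞) * ENNReal.ofReal (2 * π) := by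
        intro n
        simp only [enorm_eq_nnnorm, hnn n]
        rw [MeasureTheory.setLIntegral_const, Real.volume_Ioc]
        norm_num
      simp only [hcalc]
      rw [ENNReal.tsum_mul_right]
      refine ENNReal.mul_ne_top ?_ ENNReal.ofReal_ne_top
      rw [ENNReal.tsum_coe_ne_top_iff_summable]
      rw [← NNReal.summable_coe]
      simpa only [coe_nnnorm, hqk] using hsum
  -- Step 3 : evaluate each term
  have step3 : ∀ n : ℤ, (∫ θ in Ioc (0:ℝ) (2 * π), F n θ)
      = ∮ z in C((0:ℂ), 1), ((-1 : ℂ) ^ n * q ^ (n * (n - 1) / 2)) * (z - 0) ^ (n - 1) := by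
    intro n
    rw [circleIntegral, intervalIntegral.integral_of_le Real.two_pi_pos.le]
    refine (setIntegral_congr_fun measurableSet_Ioc fun θ _ => ?_)
    rw [deriv_circleMap, smul_eq_mul]
    have hz := hne θ
    set z := circleMap (0:ℂ) 1 θ
    rw [sub_zero]
    have hnegz : (-z) ^ n = (-1 : ℂ) ^ n * z ^ n := by
      rw [← mul_zpow]
      norm_num
    have hz1 : z ^ (n - 1) = z ^ n * z⁻¹ := zpow_sub_one₀ hz n
    rw [hF]
    simp only
    rw [hnegz, hz1]
    field_simp
  have step4 : ∀ n : ℤ, n ≠ 0 →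
      (∮ z in C((0:ℂ), 1), ((-1 : ℂ) ^ n * q ^ (n * (n - 1) / 2)) * (z - 0) ^ (n - 1)) = 0 := by
    intro n hn
    rw [circleIntegral.integral_const_mul,
      circleIntegral.integral_sub_zpow_of_ne (by omega) 0 0 1, mul_zero]
  have step5 : (∮ z in C((0:ℂ), 1), ((-1 : ℂ) ^ (0:ℤ) * q ^ ((0:ℤ) * (0 - 1) / 2)) * (z - 0) ^ ((0:ℤ) - 1))
      = 2 * π * I := by
    norm_num
    have h5 : (∮ z in C((0:ℂ), 1), (z - 0)⁻¹) = 2 * π * I :=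
      circleIntegral.integral_sub_inv_of_mem_ball (mem_ball_self one_pos)
    simpa using h5
  rw [step1, step2, tsum_congr step3, tsum_eq_single (0:ℤ) (fun n hn => step4 n hn)]
  exact step5

lemma rotate_integral (q : ℂ) (hq : q ≠ 0) (g : ℂ → ℂ) :
    (∮ z in C((0:ℂ), 1), g (q * z) / z) = ∮ z in C((0:ℂ), ‖q‖), g z / z := by
  have h1 : ∀ θ : ℝ, q * circleMap 0 1 θ = circleMap 0 (‖q‖) (θ + Complex.arg q) := by
    intro θ
    rw [circleMap, circleMap]
    nth_rewrite 1 [← Complex.norm_mul_exp_arg_mul_I q]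
    simp only [zero_add, one_mul, ofReal_add, add_mul, Complex.exp_add]
    push_cast
    ring
  have hne : ∀ θ : ℝ, circleMap (0:ℂ) 1 θ ≠ 0 := fun θ => circleMap_ne_center one_ne_zero
  calc (∮ z in C((0:ℂ), 1), g (q * z) / z)
      = ∫ θ in (0:ℝ)..2 * π, I * g (circleMap 0 (‖q‖) (θ + Complex.arg q)) := by
        simp only [circleIntegral, deriv_circleMap, smul_eq_mul]
        refine intervalIntegral.integral_congr fun θ _ => ?_
        rw [h1 θ]
        field_simp [hne θ]
    _ = ∫ θ in (0:ℝ) + Complex.arg q..2 * π + Complex.arg q,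
          I * g (circleMap 0 (‖q‖) θ) :=
        intervalIntegral.integral_comp_add_right
          (fun θ => I * g (circleMap 0 (‖q‖) θ)) (Complex.arg q)
    _ = ∫ θ in (0:ℝ)..2 * π, I * g (circleMap 0 (‖q‖) θ) := by
        have hper : Periodic (fun θ : ℝ => I * g (circleMap 0 (‖q‖) θ)) (2 * π) :=
          fun θ => by simp [periodic_circleMap 0 (‖q‖) θ]
        have h2 := hper.intervalIntegral_add_eq (Complex.arg q) 0
        simpa [add_comm] using h2
    _ = ∮ z in C((0:ℂ), ‖q‖), g z / z := by
        simp only [circleIntegral, deriv_circleMap, smul_eq_mul]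
        refine intervalIntegral.integral_congr fun θ _ => ?_
        have h3 : circleMap (0:ℂ) (‖q‖) θ ≠ 0 :=
          circleMap_ne_center (by simpa using hq)
        field_simp [h3]

/-- For `0 < |q| < 1`, there is no function holomorphic on `ℂ ∖ {0}` satisfying
`g(qx) − g(x) = ϑ(x;q)` for all `x ≠ 0` (the case `y = 1` of the non-splitness of the
extension defining the universal `N=2` curve). -/
theorem no_solution_y_eq_one (q : ℂ)
    (hq0 : 0 < ‖q‖) (hq1 : ‖q‖ < 1) :
    ¬ ∃ g : ℂ → ℂ, (∀ x : ℂ, x ≠ 0 → DifferentiableAt ℂ g x) ∧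
      (∀ x : ℂ, x ≠ 0 → g (q * x) - g x = theta q x) := by
  rintro ⟨g, hg, hfe⟩
  have hq : q ≠ 0 := by simpa using hq0
  have hgd : ∀ z : ℂ, z ≠ 0 → DifferentiableAt ℂ (fun z => g z / z) z := fun z hz =>
    (hg z hz).div differentiableAt_id hz
  -- radius independence
  have hA : (∮ z in C((0:ℂ), 1), g z / z) = ∮ z in C((0:ℂ), ‖q‖), g z / z := by
    refine circleIntegral_eq_of_differentiable_on_annulus_off_countable hq0 hq1.le
      Set.countable_empty ?_ ?_
    · intro z hz
      have hz0 : z ≠ 0 := by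
        rintro rfl
        exact hz.2 (by simpa using hq0)
      exact (hgd z hz0).continuousAt.continuousWithinAt
    · intro z hz
      have hz0 : z ≠ 0 := by
        rintro rfl
        exact hz.1.2 (by simpa using hq0.le)
      exact hgd z hz0
  -- integrability on the unit circle
  have hz0' : ∀ z : ℂ, z ∈ sphere (0:ℂ) 1 → z ≠ 0 := by
    intro z hz
    rintro rfl
    simp at hz
  have hint1 : CircleIntegrable (fun z => g (q * z) / z) 0 1 := by
    refine ContinuousOn.circleIntegrable zero_le_one fun z hz => ?_
    have hz0 : z ≠ 0 := hz0' z hz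
    exact ((((hg (q * z) (mul_ne_zero hq hz0)).comp z
      ((differentiableAt_id.const_mul q))).div differentiableAt_id
        hz0).continuousAt.continuousWithinAt)
  have hint2 : CircleIntegrable (fun z => g z / z) 0 1 := by
    refine ContinuousOn.circleIntegrable zero_le_one fun z hz => ?_
    exact (hgd z (hz0' z hz)).continuousAt.continuousWithinAt
  -- the key vanishing
  have key : (∮ z in C((0:ℂ), 1), theta q z / z) = 0 := by
    have e1 : (∮ z in C((0:ℂ), 1), theta q z / z)
        = ∮ z in C((0:ℂ), 1), (g (q * z) / z - g z / z) := by
      refine circleIntegral.integral_congr zero_le_one fun z hz => ?_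
      rw [← sub_div, hfe z (hz0' z hz)]
    rw [e1, circleIntegral.integral_sub hint1 hint2, rotate_integral q hq g, ← hA, sub_self]
  rw [theta_integral q hq0 hq1] at key
  exact Complex.two_pi_I_ne_zero (by simpa using key)
end

section
/- Let q ∈ ℂ with 0 < |q| < 1 and let y ∈ ℂ with y ≠ 0. There is no function h : ℂ → ℂ, holomorphic on ℂ ∖ {0}, such that h(qx) = −x·y·h(x) − x for all x ∈ ℂ ∖ {0}. (Equivalently: for every point y of the dual elliptic curve E^∨ = ℂ*/q^ℤ, the extension 𝒪 → 𝒦_y → Θ·L_y^{−1} of line bundles on the elliptic curve E_q = ℂ*/q^ℤ defined by the automorphy factor [[−xy, −x],[0,1]] is non-split, so the corresponding odd deformation of the N=2 curve (E_q | Θ·L_y^{−1}) is nontrivial.) -/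
open Complex Set Bornology Filter Function
open scoped Topology

/-- A function differentiable away from 0 is bounded on every closed annulus
not containing 0. -/
private lemma bound_on_annulus {h : ℂ → ℂ} (hd : ∀ x : ℂ, x ≠ 0 → DifferentiableAt ℂ h x)
    {r1 r2 : ℝ} (hr1 : 0 < r1) :
    ∃ M : ℝ, 0 ≤ M ∧ ∀ z : ℂ, r1 ≤ ‖z‖ → ‖z‖ ≤ r2 →
      ‖h z‖ ≤ M := by
  set K : Set ℂ := (fun z : ℂ => ‖z‖) ⁻¹' Set.Icc r1 r2 with hKdef
  have hK : IsCompact K := by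
    have hcl : IsClosed K := isClosed_Icc.preimage continuous_norm
    have hbd : IsBounded K := by
      apply (Metric.isBounded_closedBall (x := (0 : ℂ)) (r := r2)).subset
      intro z hz
      simpa [Metric.mem_closedBall, Complex.dist_eq] using hz.2
    exact Metric.isCompact_of_isClosed_isBounded hcl hbd
  have hcont : ContinuousOn h K := by
    intro z hz
    have hz0 : z ≠ 0 := by
      intro h0
      rw [h0] at hz
      simp only [hKdef, Set.mem_preimage, norm_zero, Set.mem_Icc] at hz
      linarith [hz.1]
    exact (hd z hz0).continuousAt.continuousWithinAt
  obtain ⟨M, hM⟩ := hK.exists_bound_of_continuousOn hcont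
  refine ⟨max M 0, le_max_right _ _, fun z h1 h2 => ?_⟩
  calc ‖h z‖ = ‖h z‖ := rfl
    _ ≤ M := hM z ⟨h1, h2⟩
    _ ≤ max M 0 := le_max_left _ _

/-- For `0 < a < 1` and `0 < w ≤ r` there is `n` with `a^(n+1) * r < w ≤ a^n * r`. -/
private lemma exists_pow_between {a : ℝ} (ha0 : 0 < a) (ha1 : a < 1) {w r : ℝ} (hw : 0 < w)
    (hwr : w ≤ r) : ∃ n : ℕ, a ^ (n + 1) * r < w ∧ w ≤ a ^ n * r := by
  have hr : 0 < r := lt_of_lt_of_le hw hwr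
  have hex : ∃ m : ℕ, a ^ (m + 1) * r < w := by
    obtain ⟨m, hm⟩ := exists_pow_lt_of_lt_one (div_pos hw hr) ha1
    refine ⟨m, ?_⟩
    have h1 : a ^ (m + 1) ≤ a ^ m := pow_le_pow_of_le_one ha0.le ha1.le (Nat.le_succ m)
    have h2 : a ^ m * r < (w / r) * r := by nlinarith
    have h3 : (w / r) * r = w := by field_simp
    nlinarith
  refine ⟨Nat.find hex, Nat.find_spec hex, ?_⟩
  rcases Nat.eq_zero_or_pos (Nat.find hex) with h0 | hpos
  · rw [h0]; simpa using hwr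
  · have hmin := Nat.find_min hex (Nat.sub_lt hpos one_pos)
    have heq : (Nat.find hex - 1) + 1 = Nat.find hex := Nat.succ_pred_eq_of_pos hpos
    rw [heq] at hmin
    linarith [not_lt.mp hmin]

set_option maxHeartbeats 1000000 in
/-- For `0 < |q| < 1` and `y ≠ 0`, there is no function holomorphic on `ℂ ∖ {0}`
satisfying `h(qx) = −x·y·h(x) − x`: the extension `𝒪 → 𝒦_y → Θ·L_y⁻¹` of line bundles
on `E_q = ℂ*/q^ℤ` given by the automorphy factor `[[−xy, −x],[0,1]]` is non-split, so
the corresponding odd deformation of the `N=2` curve `(E_q | Θ·L_y⁻¹)` is nontrivial. -/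
theorem extension_non_split (q y : ℂ)
    (hq0 : 0 < ‖q‖) (hq1 : ‖q‖ < 1) (hy : y ≠ 0) :
    ¬ ∃ h : ℂ → ℂ, (∀ x : ℂ, x ≠ 0 → DifferentiableAt ℂ h x) ∧
      (∀ x : ℂ, x ≠ 0 → h (q * x) = -x * y * h x - x) := by
  rintro ⟨h, hd, heq⟩
  set a : ℝ := ‖q‖ with ha
  have hq : q ≠ 0 := fun h0 => by simp [ha, h0] at hq0
  have hy0 : 0 < ‖y‖ := norm_pos_iff.mpr hy
  have habs : ∀ u v : ℂ, ‖u - v‖ ≤ ‖u‖ + ‖v‖ := by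
    intro u v
    simpa [sub_eq_add_neg] using norm_add_le u (-v)
  -- Step 1 : boundedness of h near 0.
  obtain ⟨N, hN⟩ : ∃ N : ℕ, a ^ N * (‖y‖ + 1) ≤ 1 := by
    obtain ⟨N, hN⟩ := exists_pow_lt_of_lt_one
      (show (0:ℝ) < (‖y‖ + 1)⁻¹ by positivity) hq1
    refine ⟨N, ?_⟩
    rw [← le_div_iff₀ (by positivity : (0:ℝ) < ‖y‖ + 1)]
    simpa [one_div] using hN.le
  obtain ⟨M, hM0, hM⟩ := bound_on_annulus hd (r2 := a ^ N) (pow_pos hq0 (N + 1))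
  set C : ℝ := max M 1 with hC
  have hC1 : (1:ℝ) ≤ C := le_max_right _ _
  have key : ∀ n : ℕ, ∀ z : ℂ, a ^ (N + 1) ≤ ‖z‖ → ‖z‖ ≤ a ^ N →
      ‖h (q ^ n * z)‖ ≤ C := by
    intro n
    induction n with
    | zero =>
      intro z h1 h2
      simp only [pow_zero, one_mul]
      exact le_trans (hM z h1 h2) (le_max_left _ _)
    | succ n ih =>
      intro z h1 h2
      have hz0 : z ≠ 0 := by
        intro h0; rw [h0] at h1; simp only [norm_zero] at h1
        nlinarith [pow_pos hq0 (N + 1)]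
      have hx0 : q ^ n * z ≠ 0 := mul_ne_zero (pow_ne_zero n hq) hz0
      have e : q ^ (n + 1) * z = q * (q ^ n * z) := by ring
      rw [e, heq _ hx0]
      have hih := ih z h1 h2
      have hxabs : ‖q ^ n * z‖ ≤ a ^ N := by
        rw [norm_mul, norm_pow]
        have hpn : a ^ n ≤ 1 := pow_le_one₀ hq0.le hq1.le
        nlinarith [norm_nonneg z, pow_pos hq0 N]
      calc ‖-(q ^ n * z) * y * h (q ^ n * z) - (q ^ n * z)‖
          ≤ ‖-(q ^ n * z) * y * h (q ^ n * z)‖ + ‖q ^ n * z‖ :=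
            habs _ _
        _ = ‖q ^ n * z‖ * (‖y‖ * ‖h (q ^ n * z)‖ + 1) := by
            rw [norm_mul, norm_mul, norm_neg]; ring
        _ ≤ a ^ N * (‖y‖ * C + 1) := by
            apply mul_le_mul hxabs ?_ ?_ (pow_nonneg hq0.le N)
            · nlinarith [hy0]
            · nlinarith [norm_nonneg y, norm_nonneg (h (q ^ n * z))]
        _ ≤ a ^ N * ((‖y‖ + 1) * C) := by nlinarith [pow_pos hq0 N]
        _ ≤ 1 * C := by nlinarith [pow_pos hq0 N]
        _ = C := one_mul _
  have hb0 : ∀ w : ℂ, w ≠ 0 → ‖w‖ ≤ a ^ N → ‖h w‖ ≤ C := by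
    intro w hw0 hw
    obtain ⟨n, hn1, hn2⟩ := exists_pow_between hq0 hq1 (norm_pos_iff.mpr hw0) hw
    have hqn : (q : ℂ) ^ n ≠ 0 := pow_ne_zero n hq
    have h1' : a ^ (N + 1) ≤ ‖w / q ^ n‖ := by
      rw [norm_div, norm_pow, le_div_iff₀ (pow_pos hq0 n)]
      calc a ^ (N + 1) * a ^ n = a ^ (n + 1) * a ^ N := by ring
        _ ≤ ‖w‖ := hn1.le
    have h2' : ‖w / q ^ n‖ ≤ a ^ N := by
      rw [norm_div, norm_pow, div_le_iff₀ (pow_pos hq0 n)]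
      calc ‖w‖ ≤ a ^ n * a ^ N := hn2
        _ = a ^ N * a ^ n := by ring
    have := key n (w / q ^ n) h1' h2'
    rwa [mul_div_cancel₀ w hqn] at this
  -- Step 2: removable singularity; extend h to an entire function f.
  set f : ℂ → ℂ := Function.update h 0 (limUnder (𝓝[≠] (0:ℂ)) h) with hf
  have hball : DifferentiableOn ℂ f (Metric.ball 0 (a ^ N)) := by
    apply Complex.differentiableOn_update_limUnder_of_bddAbove
    · exact Metric.ball_mem_nhds _ (pow_pos hq0 N)
    · intro z hz
      exact (hd z hz.2).differentiableWithinAt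
    · refine ⟨C, ?_⟩
      rintro x ⟨z, ⟨hz1, hz2⟩, rfl⟩
      have hz0 : z ≠ 0 := hz2
      simp only [Function.comp_apply]
      rw [show ‖h z‖ = ‖h z‖ from rfl]
      apply hb0 z hz0
      have hzb := Metric.mem_ball.mp hz1
      rw [Complex.dist_eq, sub_zero] at hzb
      exact hzb.le
  have hfd : Differentiable ℂ f := by
    intro z
    rcases eq_or_ne z 0 with rfl | hz
    · exact (hball 0 (Metric.mem_ball_self (pow_pos hq0 N))).differentiableAt
        (Metric.isOpen_ball.mem_nhds (Metric.mem_ball_self (pow_pos hq0 N)))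
    · have hev : f =ᶠ[𝓝 z] h := by
        filter_upwards [eventually_ne_nhds hz] with w hw
        exact Function.update_of_ne hw _ _
      exact (hd z hz).congr_of_eventuallyEq hev
  have hfh : ∀ z : ℂ, z ≠ 0 → f z = h z := fun z hz => Function.update_of_ne hz _ _
  -- Step 3: boundedness of h near infinity.
  obtain ⟨N', hN'⟩ : ∃ N' : ℕ, a ^ N' < ‖y‖ / 2 :=
    exists_pow_lt_of_lt_one (by positivity) hq1
  have hRpos : (0:ℝ) < (a ^ N')⁻¹ := by positivity
  obtain ⟨M', hM'0, hM'⟩ := bound_on_annulus hd (r2 := (a ^ (N' + 1))⁻¹) hRpos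
  set C' : ℝ := max M' (2 / ‖y‖) with hC'
  have hC'2 : 2 / ‖y‖ ≤ C' := le_max_right _ _
  have hC'0 : 0 ≤ C' := le_trans hM'0 (le_max_left _ _)
  have hinvbig : 2 / ‖y‖ < (a ^ N')⁻¹ := by
    have h1 : (‖y‖ / 2)⁻¹ < (a ^ N')⁻¹ := inv_strictAnti₀ (pow_pos hq0 N') hN'
    rwa [inv_div] at h1
  have key2 : ∀ n : ℕ, ∀ z : ℂ, (a ^ N')⁻¹ ≤ ‖z‖ →
      ‖z‖ ≤ (a ^ (N' + 1))⁻¹ → ‖h (z / q ^ n)‖ ≤ C' := by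
    intro n
    induction n with
    | zero =>
      intro z h1 h2
      simp only [pow_zero, div_one]
      exact le_trans (hM' z h1 h2) (le_max_left _ _)
    | succ n ih =>
      intro z h1 h2
      have hz0 : z ≠ 0 := by
        intro h0; rw [h0] at h1; simp only [norm_zero] at h1; nlinarith
      set x : ℂ := z / q ^ (n + 1) with hx
      have hx0 : x ≠ 0 := div_ne_zero hz0 (pow_ne_zero _ hq)
      have hqx : q * x = z / q ^ n := by
        rw [hx]; field_simp; ring
      have hsolve : h x = -(h (q * x) + x) / (x * y) := by
        rw [eq_div_iff (mul_ne_zero hx0 hy)]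
        linear_combination heq x hx0
      have hxlarge : 2 / ‖y‖ ≤ ‖x‖ := by
        have h1' : (a ^ N')⁻¹ ≤ ‖x‖ := by
          rw [hx, norm_div, norm_pow, le_div_iff₀ (pow_pos hq0 (n + 1))]
          have hpn : a ^ (n + 1) ≤ 1 := pow_le_one₀ hq0.le hq1.le
          nlinarith [hRpos, mul_le_mul_of_nonneg_left hpn hRpos.le]
        linarith [hinvbig]
      have hih : ‖h (q * x)‖ ≤ C' := by rw [hqx]; exact ih z h1 h2
      have hxpos : 0 < ‖x‖ := norm_pos_iff.mpr hx0
      rw [hsolve, norm_div, norm_neg, norm_mul]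
      rw [div_le_iff₀ (mul_pos hxpos hy0)]
      have ht : 2 ≤ ‖x‖ * ‖y‖ := by
        rw [div_le_iff₀ hy0] at hxlarge; linarith
      have hcy : 2 ≤ C' * ‖y‖ := by
        have := hC'2
        rw [div_le_iff₀ hy0] at this; linarith
      calc ‖h (q * x) + x‖ ≤ ‖h (q * x)‖ + ‖x‖ :=
            norm_add_le _ _
        _ ≤ C' + ‖x‖ := by linarith
        _ ≤ C' * (‖x‖ * ‖y‖) := by
            nlinarith [mul_nonneg hC'0 (by linarith : (0:ℝ) ≤ ‖x‖ * ‖y‖ - 2),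
              mul_nonneg hxpos.le (by linarith : (0:ℝ) ≤ C' * ‖y‖ - 2)]
  have hbinf : ∀ w : ℂ, (a ^ N')⁻¹ ≤ ‖w‖ → ‖h w‖ ≤ C' := by
    intro w hw
    have hw0 : w ≠ 0 := by
      intro h0; rw [h0] at hw; simp only [norm_zero] at hw; nlinarith
    have hwpos : 0 < ‖w‖ := norm_pos_iff.mpr hw0
    have hwinv : (‖w‖)⁻¹ ≤ a ^ N' := by
      have h := inv_anti₀ hRpos hw
      rwa [inv_inv] at h
    obtain ⟨n, hn1, hn2⟩ := exists_pow_between hq0 hq1 (inv_pos.mpr hwpos) hwinv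
    have h1' : (a ^ N')⁻¹ ≤ ‖w * q ^ n‖ := by
      rw [norm_mul, norm_pow, inv_eq_one_div, div_le_iff₀ (pow_pos hq0 N')]
      have e1 : 1 ≤ a ^ n * a ^ N' * ‖w‖ := by
        have h := mul_le_mul_of_nonneg_right hn2 hwpos.le
        rwa [inv_mul_cancel₀ hwpos.ne'] at h
      nlinarith
    have h2' : ‖w * q ^ n‖ ≤ (a ^ (N' + 1))⁻¹ := by
      rw [norm_mul, norm_pow, inv_eq_one_div, le_div_iff₀ (pow_pos hq0 (N' + 1))]
      have e2 : a ^ (n + 1) * a ^ N' * ‖w‖ < 1 := by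
        have h := mul_lt_mul_of_pos_right hn1 hwpos
        rwa [inv_mul_cancel₀ hwpos.ne'] at h
      have epow : a ^ n * a ^ (N' + 1) = a ^ (n + 1) * a ^ N' := by ring
      nlinarith
    have h3 := key2 n (w * q ^ n) h1' h2'
    rwa [mul_div_cancel_right₀ w (pow_ne_zero n hq)] at h3
  -- Step 4: f is a bounded entire function, hence constant (Liouville).
  obtain ⟨M'', hM''⟩ := (isCompact_closedBall (0:ℂ) ((a ^ N')⁻¹)).exists_bound_of_continuousOn
    hfd.continuous.continuousOn
  have hbounded : IsBounded (range f) := by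
    apply (Metric.isBounded_closedBall (x := (0:ℂ)) (r := max M'' C')).subset
    rintro _ ⟨w, rfl⟩
    rw [Metric.mem_closedBall, dist_zero_right]
    rcases le_or_gt (‖w‖) ((a ^ N')⁻¹) with hw | hw
    · refine le_trans (hM'' w ?_) (le_max_left _ _)
      simpa [Metric.mem_closedBall, Complex.dist_eq] using hw
    · have hw0 : w ≠ 0 := by
        intro h0; rw [h0] at hw; simp only [norm_zero] at hw; linarith [hRpos]
      rw [hfh w hw0]
      exact le_trans (hbinf w hw.le) (le_max_right _ _)
  have hconst : ∀ z : ℂ, f z = f 1 := fun z => hfd.apply_eq_apply_of_bounded hbounded z 1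
  have hch : ∀ x : ℂ, x ≠ 0 → h x = h 1 := by
    intro x hx
    rw [← hfh x hx, ← hfh 1 one_ne_zero, hconst]
  -- Step 5: the functional equation has no constant solution.
  have hc1 : h 1 = -1 * y * h 1 - 1 := by
    have e := heq 1 one_ne_zero
    rwa [hch (q * 1) (by simp [hq])] at e
  have hc2 : h 1 = -2 * y * h 1 - 2 := by
    have e := heq 2 two_ne_zero
    rwa [hch (q * 2) (mul_ne_zero hq two_ne_zero), hch 2 two_ne_zero] at e
  exact one_ne_zero (α := ℂ) (by linear_combination (-1 - 2*y) * hc1 + (1 + y) * hc2)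
end

section
/- Let q ∈ ℂ with 0 < |q| < 1 and let y ∈ ℂ with y ≠ 0. If g : ℂ → ℂ is holomorphic on ℂ ∖ {0} and satisfies g(qx) = −(x·y)^{−1}·g(x) for all x ∈ ℂ ∖ {0}, then there exists c ∈ ℂ such that g(x) = c·ϑ(x·y; q) for all x ∈ ℂ ∖ {0}. (In geometric terms: the space of global sections of the degree-one line bundle Θ(x)⊗L_y^{−1} on the elliptic curve E_q = ℂ*/q^ℤ is one-dimensional, spanned by x ↦ ϑ(xy).) -/
open Complex Metric Set MeasureTheory intervalIntegral Function Real


section ThetaHelpers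

lemma exp_step (n : ℤ) : (n + 1) * n / 2 = n * (n - 1) / 2 + n := by
  obtain ⟨k, hk⟩ : 2 ∣ n * (n - 1) := by
    have h := Int.even_mul_succ_self (n - 1)
    have : (n - 1) * (n - 1 + 1) = n * (n - 1) := by ring
    rw [this] at h
    exact h.two_dvd
  have e1 : n * (n - 1) / 2 = k := by rw [hk]; exact Int.mul_ediv_cancel_left _ two_ne_zero
  have e2 : (n + 1) * n = 2 * (k + n) := by linear_combination hk
  rw [e2, Int.mul_ediv_cancel_left _ two_ne_zero, e1]

lemma radius_indep {h : ℂ → ℂ} (hd : ∀ z : ℂ, z ≠ 0 → DifferentiableAt ℂ h z)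
    {r R : ℝ} (hr : 0 < r) (hR : 0 < R) :
    (∮ z in C(0, R), h z) = ∮ z in C(0, r), h z := by
  have key : ∀ r R : ℝ, 0 < r → r ≤ R → (∮ z in C(0, R), h z) = ∮ z in C(0, r), h z := by
    intro r R hr hle
    refine Complex.circleIntegral_eq_of_differentiable_on_annulus_off_countable hr hle
      countable_empty ?_ ?_
    · intro z hz
      have hz0 : z ≠ 0 := by
        rintro rfl; exact hz.2 (mem_ball_self hr)
      exact ((hd z hz0).continuousAt).continuousWithinAt
    · intro z hz
      have hz0 : z ≠ 0 := by
        rintro rfl; exact hz.1.2 (mem_closedBall_self hr.le)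
      exact hd z hz0
  rcases le_total r R with hle | hle
  · exact key r R hr hle
  · exact (key R r hR hle).symm

lemma circleIntegral_comp_mul_left (h : ℂ → ℂ) {q : ℂ} (hq : q ≠ 0) (ρ : ℝ) :
    (∮ z in C(0, ρ), h (q * z)) = q⁻¹ * ∮ z in C(0, ‖q‖ * ρ), h z := by
  set a : ℝ := ‖q‖ * ρ with ha
  have key : ∀ θ : ℝ, circleMap 0 a (θ + q.arg) = q * circleMap 0 ρ θ := by
    intro θ
    simp only [circleMap_zero, ha]
    conv_rhs => rw [← Complex.norm_mul_exp_arg_mul_I q]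
    push_cast
    rw [add_mul, Complex.exp_add]
    ring
  set F : ℝ → ℂ := fun t => circleMap 0 a t * I * h (circleMap 0 a t) with hF
  have h1 : ∀ θ : ℝ, deriv (circleMap 0 ρ) θ • h (q * circleMap 0 ρ θ) = q⁻¹ * F (θ + q.arg) := by
    intro θ
    rw [deriv_circleMap, smul_eq_mul, hF]
    simp only [key]
    field_simp
  have hper : Periodic F (2 * π) := by
    intro t
    simp only [hF, periodic_circleMap 0 a t]
  calc (∮ z in C(0, ρ), h (q * z))
      = ∫ θ in (0:ℝ)..2 * π, q⁻¹ * F (θ + q.arg) := by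
        rw [circleIntegral]; exact intervalIntegral.integral_congr fun θ _ => h1 θ
    _ = q⁻¹ * ∫ θ in (0:ℝ)..2 * π, F (θ + q.arg) := intervalIntegral.integral_const_mul _ _
    _ = q⁻¹ * ∫ θ in q.arg..(q.arg + 2 * π), F θ := by
        rw [intervalIntegral.integral_comp_add_right F q.arg]
        norm_num [add_comm]
    _ = q⁻¹ * ∫ θ in (0:ℝ)..(0 + 2 * π), F θ := by
        rw [hper.intervalIntegral_add_eq q.arg 0]
    _ = q⁻¹ * ∮ z in C(0, a), h z := by
        rw [circleIntegral, zero_add]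
        congr 1
        refine intervalIntegral.integral_congr fun θ _ => ?_
        rw [deriv_circleMap, smul_eq_mul]

lemma hasSum_inv_sub {z x : ℂ} (h : ‖x‖ < ‖z‖) :
    HasSum (fun n : ℕ => x ^ n * z ^ (-(n : ℤ) - 1)) ((z - x)⁻¹) := by
  have hz : z ≠ 0 := by
    intro h0
    rw [h0] at h
    simp only [norm_zero] at h
    exact absurd h (not_lt.mpr (norm_nonneg x))
  have hzx : z - x ≠ 0 := by
    intro h0
    rw [sub_eq_zero] at h0
    rw [h0] at h
    exact lt_irrefl _ h
  have hlt : ‖x / z‖ < 1 := by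
    rw [norm_div, div_lt_one (by simpa using (norm_nonneg x).trans_lt h)]
    exact h
  have hgeo := (hasSum_geometric_of_norm_lt_one hlt).mul_left z⁻¹
  have heq : ∀ n : ℕ, z⁻¹ * (x / z) ^ n = x ^ n * z ^ (-(n : ℤ) - 1) := by
    intro n
    rw [div_pow, zpow_sub₀ hz, zpow_neg, zpow_natCast, zpow_one]
    field_simp
  have hval : z⁻¹ * (1 - x / z)⁻¹ = (z - x)⁻¹ := by
    rw [← mul_inv]
    congr 1
    field_simp
  rw [hval] at hgeo
  simpa only [heq] using hgeo

lemma hasSum_circleIntegral_pow {g : ℂ → ℂ} {ρ : ℝ} (hρ : 0 < ρ)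
    (hc : ContinuousOn g (sphere (0:ℂ) ρ)) {c : ℕ → ℂ} {e : ℕ → ℤ} {b : ℕ → ℝ}
    {v : ℂ → ℂ}
    (hb : Summable b)
    (hbd : ∀ (n : ℕ) (z : ℂ), z ∈ sphere (0:ℂ) ρ → ‖c n * z ^ (e n)‖ ≤ b n)
    (hv : ∀ z ∈ sphere (0:ℂ) ρ, HasSum (fun n => c n * z ^ (e n)) (v z)) :
    HasSum (fun n : ℕ => c n * ∮ z in C(0, ρ), z ^ (e n) * g z)
      (∮ z in C(0, ρ), v z * g z) := by
  obtain ⟨M, hM⟩ := (isCompact_sphere (0:ℂ) ρ).exists_bound_of_continuousOn hc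
  have hmem : ∀ θ : ℝ, circleMap 0 ρ θ ∈ sphere (0:ℂ) ρ := fun θ =>
    circleMap_mem_sphere 0 hρ.le θ
  have hM0 : 0 ≤ M := le_trans (norm_nonneg _) (hM _ (hmem 0))
  have hcm : Continuous fun θ : ℝ => g (circleMap 0 ρ θ) :=
    hc.comp_continuous (continuous_circleMap 0 ρ) hmem
  have hne : ∀ θ : ℝ, circleMap 0 ρ θ ≠ 0 := fun θ => by
    intro h0
    have := hmem θ
    rw [h0] at this
    simp only [mem_sphere_iff_norm, sub_zero, norm_zero] at this
    exact hρ.ne this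
  have key : HasSum
      (fun n : ℕ => ∫ θ in (0:ℝ)..2 * π,
        deriv (circleMap 0 ρ) θ • (c n * ((circleMap 0 ρ θ) ^ (e n) * g (circleMap 0 ρ θ))))
      (∫ θ in (0:ℝ)..2 * π,
        deriv (circleMap 0 ρ) θ • (v (circleMap 0 ρ θ) * g (circleMap 0 ρ θ))) := by
    apply intervalIntegral.hasSum_integral_of_dominated_convergence
      (bound := fun n (_ : ℝ) => ρ * (b n * M))
    · intro n
      apply Continuous.aestronglyMeasurable
      have : Continuous fun θ : ℝ => (circleMap 0 ρ θ) ^ (e n) := by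
        rw [continuous_iff_continuousAt]
        intro θ
        exact ((continuous_circleMap 0 ρ).continuousAt).zpow₀ _ (Or.inl (hne θ))
      continuity
    · intro n
      filter_upwards with θ _
      rw [norm_smul]
      have h1 : ‖deriv (circleMap 0 ρ) θ‖ = ρ := by
        simp [deriv_circleMap, abs_of_pos hρ]
      rw [h1]
      have h2 : ‖c n * ((circleMap 0 ρ θ) ^ (e n) * g (circleMap 0 ρ θ))‖ ≤ b n * M := by
        rw [show c n * ((circleMap 0 ρ θ) ^ (e n) * g (circleMap 0 ρ θ))
              = (c n * (circleMap 0 ρ θ) ^ (e n)) * g (circleMap 0 ρ θ) by ring, norm_mul]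
        exact mul_le_mul (hbd n _ (hmem θ)) (hM _ (hmem θ)) (norm_nonneg _)
          ((norm_nonneg _).trans (hbd n _ (hmem θ)))
      exact mul_le_mul_of_nonneg_left h2 hρ.le
    · filter_upwards with θ _
      exact ((hb.mul_right M).mul_left ρ)
    · exact intervalIntegrable_const
    · filter_upwards with θ _
      have := ((hv _ (hmem θ)).mul_right (g (circleMap 0 ρ θ))).mul_left
        (deriv (circleMap 0 ρ) θ)
      convert this using 2 with n
      · rfl
      · simp only [smul_eq_mul]; ring
      · simp only [smul_eq_mul]
  have hrw : ∀ n : ℕ, (∫ θ in (0:ℝ)..2 * π,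
        deriv (circleMap 0 ρ) θ • (c n * ((circleMap 0 ρ θ) ^ (e n) * g (circleMap 0 ρ θ))))
      = c n * ∮ z in C(0, ρ), z ^ (e n) * g z := by
    intro n
    rw [← circleIntegral.integral_const_mul]
    rfl
  simp only [hrw] at key
  exact key

lemma circleIntegral_add' {f g : ℂ → ℂ} {c : ℂ} {R : ℝ} (hf : CircleIntegrable f c R)
    (hg : CircleIntegrable g c R) :
    (∮ z in C(c, R), (f z + g z)) = (∮ z in C(c, R), f z) + ∮ z in C(c, R), g z := by
  simp only [circleIntegral, smul_add]
  exact intervalIntegral.integral_add hf.out hg.out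

lemma cauchy_annulus {g : ℂ → ℂ} (hd : ∀ z : ℂ, z ≠ 0 → DifferentiableAt ℂ g z)
    {x : ℂ} {r R : ℝ} (hr : 0 < r) (hxr : r < ‖x‖) (hxR : ‖x‖ < R) :
    (∮ z in C(0, R), (z - x)⁻¹ * g z) - (∮ z in C(0, r), (z - x)⁻¹ * g z)
      = (2 * π * I) * g x := by
  have hx0 : x ≠ 0 := by
    intro h0; rw [h0] at hxr; simp only [norm_zero] at hxr
    exact absurd hxr (not_lt.mpr hr.le)
  have hR : (0:ℝ) < R := (norm_nonneg x).trans_lt hxR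
  set d : ℂ → ℂ := dslope g x with hdd
  -- the key pointwise identity on spheres avoiding x
  have eqOn : ∀ z : ℂ, z ≠ x → (z - x)⁻¹ * g z = d z + (z - x)⁻¹ * g x := by
    intro z hzx
    rw [hdd, dslope_of_ne g hzx, slope_def_field]
    have : z - x ≠ 0 := sub_ne_zero.mpr hzx
    field_simp
    ring
  -- d is as nice as needed on the annulus
  have hDeq : (∮ z in C(0, R), d z) = ∮ z in C(0, r), d z := by
    apply Complex.circleIntegral_eq_of_differentiable_on_annulus_off_countable hr
      (hxr.trans hxR).le (countable_singleton x)
    · intro z hz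
      have hz0 : z ≠ 0 := by rintro rfl; exact hz.2 (mem_ball_self hr)
      rcases eq_or_ne z x with rfl | hzx
      · exact (continuousAt_dslope_same.mpr (hd z hz0)).continuousWithinAt
      · exact (((continuousAt_dslope_of_ne hzx).mpr (hd z hz0).continuousAt)).continuousWithinAt
    · intro z hz
      have hz0 : z ≠ 0 := by rintro rfl; exact hz.1.2 (mem_closedBall_self hr.le)
      have hzx : z ≠ x := hz.2
      exact (differentiableAt_dslope_of_ne hzx).mpr (hd z hz0)
  have hd_cont : ∀ ρ : ℝ, 0 < ρ → ContinuousOn d (sphere (0:ℂ) ρ) := by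
    intro ρ hρ z hz
    have hz0 : z ≠ 0 := by
      rintro rfl
      rw [mem_sphere_iff_norm, sub_zero, norm_zero] at hz
      exact hρ.ne hz
    rcases eq_or_ne z x with rfl | hzx
    · exact (continuousAt_dslope_same.mpr (hd z hz0)).continuousWithinAt
    · exact (((continuousAt_dslope_of_ne hzx).mpr (hd z hz0).continuousAt)).continuousWithinAt
  have habs : ∀ (ρ : ℝ) (z : ℂ), z ∈ sphere (0:ℂ) ρ → ‖z‖ = ρ := by
    intro ρ z hz
    rwa [mem_sphere_iff_norm, sub_zero] at hz
  -- inverse function integrable on spheres not containing x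
  have hinv_cont : ∀ ρ : ℝ, ρ ≠ ‖x‖ →
      ContinuousOn (fun z : ℂ => (z - x)⁻¹) (sphere (0:ℂ) ρ) := by
    intro ρ hρ z hz
    have hzx : z - x ≠ 0 := sub_ne_zero.mpr (by
      rintro rfl; exact hρ (habs ρ z hz).symm)
    exact ((continuousAt_id.sub continuousAt_const).inv₀ hzx).continuousWithinAt
  -- split the integrals
  have split : ∀ ρ : ℝ, 0 < ρ → ρ ≠ ‖x‖ →
      (∮ z in C(0, ρ), (z - x)⁻¹ * g z)
        = (∮ z in C(0, ρ), d z) + (∮ z in C(0, ρ), (z - x)⁻¹) * g x := by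
    intro ρ hρ hρx
    have h1 : (∮ z in C(0, ρ), (z - x)⁻¹ * g z)
        = ∮ z in C(0, ρ), (d z + (z - x)⁻¹ * g x) := by
      apply circleIntegral.integral_congr hρ.le
      intro z hz
      exact eqOn z (by rintro rfl; exact hρx (habs ρ z hz).symm)
    rw [h1, circleIntegral_add' (f := d) (g := fun z => (z - x)⁻¹ * g x) ((hd_cont ρ hρ).circleIntegrable hρ.le)
      (((hinv_cont ρ hρx).mul continuousOn_const).circleIntegrable hρ.le)]
    congr 1
    have := circleIntegral.integral_smul_const (fun z : ℂ => (z - x)⁻¹) (g x) 0 ρ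
    simpa only [smul_eq_mul] using this
  have hvR : (∮ z in C(0, R), (z - x)⁻¹) = 2 * π * I := by
    apply circleIntegral.integral_sub_inv_of_mem_ball
    simpa [mem_ball, Complex.dist_eq] using hxR
  have hvr : (∮ z in C(0, r), (z - x)⁻¹) = 0 := by
    apply Complex.circleIntegral_eq_zero_of_differentiable_on_off_countable hr.le countable_empty
    · intro z hz
      have hzx : z - x ≠ 0 := sub_ne_zero.mpr (by
        rintro rfl
        rw [mem_closedBall, Complex.dist_eq, sub_zero] at hz
        exact absurd (lt_of_lt_of_le hxr hz) (lt_irrefl _))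
      exact ((continuousAt_id.sub continuousAt_const).inv₀ hzx).continuousWithinAt
    · intro z hz
      have hzx : z - x ≠ 0 := sub_ne_zero.mpr (by
        rintro rfl
        have hz1 := hz.1
        rw [mem_ball, Complex.dist_eq, sub_zero] at hz1
        exact absurd (hxr.trans hz1) (lt_irrefl _))
      exact (differentiableAt_id.sub_const x).inv hzx
  rw [split R hR hxR.ne', split r hr hxr.ne, hDeq, hvR, hvr]
  ring

lemma coeff_rec {q y : ℂ} (hq0 : 0 < ‖q‖) (hy : y ≠ 0)
    {g : ℂ → ℂ} (hg : ∀ x : ℂ, x ≠ 0 → DifferentiableAt ℂ g x)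
    (heq : ∀ x : ℂ, x ≠ 0 → g (q * x) = -(x * y)⁻¹ * g x) (n : ℤ) :
    (∮ z in C(0,1), z ^ (-(n+1) - 1) * g z)
      = -y * q ^ n * ∮ z in C(0,1), z ^ (-n - 1) * g z := by
  have hq : q ≠ 0 := by simpa using hq0.ne'
  set h : ℂ → ℂ := fun w => w ^ (-n-1) * g w with hh
  have hdh : ∀ w : ℂ, w ≠ 0 → DifferentiableAt ℂ h w := by
    intro w hw
    exact ((differentiableAt_zpow.mpr (Or.inl hw)).mul (hg w hw))
  have step1 : (∮ z in C(0,1), z ^ (-(n+1) - 1) * g z)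
      = ∮ z in C(0,1), (-y * q ^ (n+1)) * h (q * z) := by
    apply circleIntegral.integral_congr zero_le_one
    intro z hz
    have hz0 : z ≠ 0 := by
      intro h0
      rw [mem_sphere_iff_norm, sub_zero, h0, norm_zero] at hz
      norm_num at hz
    have hzy : z * y ≠ 0 := mul_ne_zero hz0 hy
    have hgz : g z = -(z * y) * g (q * z) := by
      rw [heq z hz0]
      field_simp
    have e1 : (q * z) ^ (-n - 1) = q ^ (-n-1) * z ^ (-n-1) := mul_zpow q z (-n-1)
    have e2 : z ^ (-(n+1) - 1) * z = z ^ (-n - 1) := by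
      rw [← zpow_add_one₀ hz0]
      congr 1
      ring
    have e3 : q ^ (n+1) * q ^ (-n-1) = 1 := by
      have h0 : (n+1) + (-n-1) = 0 := by ring
      rw [← zpow_add₀ hq, h0, zpow_zero]
    have hb : h (q * z) = (q * z) ^ (-n-1) * g (q * z) := rfl
    calc z ^ (-(n+1) - 1) * g z
        = -y * ((z ^ (-(n+1) - 1) * z) * g (q * z)) := by rw [hgz]; ring
      _ = -y * (z ^ (-n - 1) * g (q * z)) := by rw [e2]
      _ = -y * ((q ^ (n+1) * q ^ (-n-1)) * z ^ (-n-1) * g (q * z)) := by rw [e3]; ring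
      _ = (-y * q ^ (n+1)) * ((q ^ (-n-1) * z ^ (-n-1)) * g (q * z)) := by ring
      _ = (-y * q ^ (n+1)) * h (q * z) := by rw [hb, e1]
  calc (∮ z in C(0,1), z ^ (-(n+1) - 1) * g z)
      = ∮ z in C(0,1), (-y * q ^ (n+1)) * h (q * z) := step1
    _ = (-y * q ^ (n+1)) * ∮ z in C(0,1), h (q * z) :=
        circleIntegral.integral_const_mul _ _ 0 1
    _ = (-y * q ^ (n+1)) * (q⁻¹ * ∮ z in C(0, ‖q‖ * 1), h z) := by
        rw [circleIntegral_comp_mul_left h hq 1]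
    _ = (-y * q ^ (n+1)) * (q⁻¹ * ∮ z in C(0, 1), h z) := by
        rw [radius_indep hdh one_pos (by positivity)]
    _ = -y * q ^ n * ∮ z in C(0,1), h z := by
        rw [zpow_add_one₀ hq n]
        field_simp

lemma coeff_closed {q y : ℂ} (hq0 : 0 < ‖q‖) (hy : y ≠ 0)
    {g : ℂ → ℂ} (hg : ∀ x : ℂ, x ≠ 0 → DifferentiableAt ℂ g x)
    (heq : ∀ x : ℂ, x ≠ 0 → g (q * x) = -(x * y)⁻¹ * g x) (n : ℤ) :
    (∮ z in C(0,1), z ^ (-n - 1) * g z)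
      = (∮ z in C(0,1), z ^ (-(0:ℤ) - 1) * g z) * ((-y) ^ n * q ^ (n * (n - 1) / 2)) := by
  have hq : q ≠ 0 := by simpa using hq0.ne'
  have hy' : -y ≠ 0 := neg_ne_zero.mpr hy
  induction n using Int.induction_on with
  | zero => simp
  | succ k ih =>
      rw [coeff_rec hq0 hy hg heq (k : ℤ), ih]
      have e2' : q ^ (((k:ℤ)+1) * (((k:ℤ)+1) - 1) / 2)
          = q ^ ((k:ℤ)*((k:ℤ)-1)/2) * q^(k:ℤ) := by
        rw [show ((k:ℤ)+1) * (((k:ℤ)+1) - 1) = ((k:ℤ)+1)*(k:ℤ) from by ring,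
          exp_step (k:ℤ), zpow_add₀ hq]
      rw [e2', zpow_add_one₀ hy']
      ring
  | pred k ih =>
      have hrec := coeff_rec hq0 hy hg heq (-(k:ℤ) - 1)
      rw [show -(k:ℤ) - 1 + 1 = -(k:ℤ) from by ring] at hrec
      have hq' : -y * q ^ (-(k:ℤ)-1) ≠ 0 := mul_ne_zero hy' (zpow_ne_zero _ hq)
      have e1 : (-(k:ℤ)) * ((-(k:ℤ)) - 1) / 2
          = (-(k:ℤ)-1) * ((-(k:ℤ)-1) - 1) / 2 + (-(k:ℤ)-1) := by
        have h := exp_step (-(k:ℤ)-1)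
        rw [show -(k:ℤ)-1+1 = -(k:ℤ) from by ring] at h
        exact h
      have e2 : q ^ ((-(k:ℤ)) * ((-(k:ℤ)) - 1) / 2)
          = q ^ ((-(k:ℤ)-1) * ((-(k:ℤ)-1) - 1) / 2) * q ^ (-(k:ℤ)-1) := by
        rw [e1, zpow_add₀ hq]
      have e3 : (-y) ^ (-(k:ℤ)) = (-y) ^ (-(k:ℤ)-1) * (-y) := by
        rw [← zpow_add_one₀ hy']
        congr 1
        ring
      apply mul_left_cancel₀ hq'
      rw [← hrec, ih, e2, e3]
      ring

end ThetaHelpers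

/-- For `0 < |q| < 1` and `y ≠ 0`, any function holomorphic on `ℂ ∖ {0}` satisfying
`g(qx) = −(x·y)⁻¹·g(x)` is a constant multiple of `x ↦ ϑ(x·y;q)`: the space of global
sections of the degree-one line bundle `Θ(x)⊗L_y⁻¹` on `E_q = ℂ*/q^ℤ` is
one-dimensional, spanned by `x ↦ ϑ(xy)`. -/
theorem sections_degree_one (q y : ℂ)
    (hq0 : 0 < ‖q‖) (hq1 : ‖q‖ < 1) (hy : y ≠ 0)
    (g : ℂ → ℂ)
    (hg : ∀ x : ℂ, x ≠ 0 → DifferentiableAt ℂ g x)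
    (heq : ∀ x : ℂ, x ≠ 0 → g (q * x) = -(x * y)⁻¹ * g x) :
    ∃ c : ℂ, ∀ x : ℂ, x ≠ 0 → g x = c * theta q (x * y) := by
  set A : ℤ → ℂ := fun m => ∮ z in C(0,1), z ^ (-m - 1) * g z with hA
  refine ⟨(2 * π * I)⁻¹ * A 0, ?_⟩
  intro x hx
  have hax : 0 < ‖x‖ := by
    simpa [norm_pos_iff] using hx
  set r : ℝ := ‖x‖ / 2 with hrdef
  set R : ℝ := ‖x‖ + 1 with hRdef
  have hr : 0 < r := by positivity
  have hxr : r < ‖x‖ := by rw [hrdef]; linarith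
  have hxR : ‖x‖ < R := by rw [hRdef]; linarith
  have hR : 0 < R := hax.trans hxR
  have hcont : ∀ ρ : ℝ, 0 < ρ → ContinuousOn g (sphere (0:ℂ) ρ) := by
    intro ρ hρ z hz
    have hz0 : z ≠ 0 := by
      rintro rfl
      rw [mem_sphere_iff_norm, sub_zero, norm_zero] at hz
      exact hρ.ne hz
    exact (hg z hz0).continuousAt.continuousWithinAt
  have habs : ∀ (ρ : ℝ) (z : ℂ), z ∈ sphere (0:ℂ) ρ → ‖z‖ = ρ := by
    intro ρ z hz
    rwa [mem_sphere_iff_norm, sub_zero] at hz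
  have hdint : ∀ m : ℤ, ∀ w : ℂ, w ≠ 0 → DifferentiableAt ℂ (fun z : ℂ => z ^ m * g z) w :=
    fun m w hw => (differentiableAt_zpow.mpr (Or.inl hw)).mul (hg w hw)
  -- outer series
  have houter : HasSum (fun n : ℕ => x ^ (n : ℤ) * A (n : ℤ))
      (∮ z in C(0, R), (z - x)⁻¹ * g z) := by
    have key := hasSum_circleIntegral_pow hR (hcont R hR)
      (c := fun n : ℕ => x ^ (n : ℤ)) (e := fun n : ℕ => -(n : ℤ) - 1)
      (b := fun n : ℕ => (‖x‖ / R) ^ n * R⁻¹) (v := fun z => (z - x)⁻¹)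
      (((summable_geometric_of_lt_one (by positivity)
          ((div_lt_one hR).mpr hxR)).mul_right R⁻¹))
      (fun n z hz => by
        rw [norm_mul, norm_zpow, norm_zpow,
          habs R z hz]
        have e1 : (R:ℝ) ^ (-(n:ℤ) - 1) = (R ^ n * R)⁻¹ := by
          rw [← zpow_natCast R n, ← zpow_add_one₀ hR.ne', ← zpow_neg]
          congr 1
          ring
        rw [e1, zpow_natCast]
        apply le_of_eq
        show ‖x‖ ^ n * (R ^ n * R)⁻¹ = (‖x‖ / R) ^ n * R⁻¹
        rw [div_pow, mul_inv, div_eq_mul_inv]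
        ring)
      (fun z hz => hasSum_inv_sub (by rw [habs R z hz]; exact hxR))
    have hAr : ∀ n : ℕ, (∮ z in C(0, R), z ^ (-(n:ℤ) - 1) * g z) = A (n : ℤ) :=
      fun n => radius_indep (hdint _) one_pos hR
    simpa only [hAr] using key
  -- inner series
  have hinner : HasSum (fun n : ℕ => x ^ (-((n : ℤ) + 1)) * A (-((n : ℤ) + 1)))
      (∮ z in C(0, r), (x - z)⁻¹ * g z) := by
    have key := hasSum_circleIntegral_pow hr (hcont r hr)
      (c := fun n : ℕ => x ^ (-((n : ℤ) + 1))) (e := fun n : ℕ => (n : ℤ))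
      (b := fun n : ℕ => (r / ‖x‖) ^ n * ‖x‖⁻¹)
      (v := fun z => (x - z)⁻¹)
      (((summable_geometric_of_lt_one (by positivity)
          ((div_lt_one hax).mpr hxr)).mul_right ‖x‖⁻¹))
      (fun n z hz => by
        rw [norm_mul, norm_zpow, norm_zpow,
          habs r z hz]
        have e1 : ‖x‖ ^ (-((n:ℤ) + 1)) = (‖x‖ ^ n * ‖x‖)⁻¹ := by
          rw [← zpow_natCast ‖x‖ n, ← zpow_add_one₀ hax.ne', ← zpow_neg]
        rw [e1, zpow_natCast]
        apply le_of_eq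
        show (‖x‖ ^ n * ‖x‖)⁻¹ * r ^ n = (r / ‖x‖) ^ n * ‖x‖⁻¹
        rw [div_pow, mul_inv, div_eq_mul_inv]
        rw [hrdef]
        field_simp
        rw [← mul_pow]; norm_num)
      (fun z hz => by
        have hs := hasSum_inv_sub (z := x) (x := z) (by rw [habs r z hz]; exact hxr)
        have hrw : ∀ n : ℕ, z ^ n * x ^ (-(n:ℤ) - 1) = x ^ (-((n:ℤ) + 1)) * z ^ (n:ℤ) := by
          intro n
          rw [zpow_natCast, show -((n:ℤ) + 1) = -(n:ℤ) - 1 from by ring]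
          ring
        simpa only [hrw] using hs)
    have hAr : ∀ n : ℕ, (∮ z in C(0, r), z ^ ((n:ℤ)) * g z) = A (-((n : ℤ) + 1)) := by
      intro n
      have h1 : A (-((n : ℤ) + 1)) = ∮ z in C(0,1), z ^ ((n:ℤ)) * g z := by
        have h0 : A (-((n : ℤ) + 1)) = ∮ z in C(0,1), z ^ (-(-((n:ℤ) + 1)) - 1) * g z := rfl
        rw [h0, show -(-((n:ℤ) + 1)) - 1 = (n:ℤ) from by ring]
      rw [h1]
      exact (radius_indep (hdint _) hr one_pos).symm
    simpa only [hAr] using key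
  -- flip sign of the inner integral
  have hflip : (∮ z in C(0, r), (x - z)⁻¹ * g z)
      = -(∮ z in C(0, r), (z - x)⁻¹ * g z) := by
    have h1 : (∮ z in C(0, r), (x - z)⁻¹ * g z)
        = ∮ z in C(0, r), (-1 : ℂ) * ((z - x)⁻¹ * g z) := by
      apply circleIntegral.integral_congr hr.le
      intro z _
      show (x - z)⁻¹ * g z = (-1 : ℂ) * ((z - x)⁻¹ * g z)
      rw [show x - z = -(z - x) from by ring, inv_neg]
      ring
    rw [h1, circleIntegral.integral_const_mul]
    ring
  rw [hflip] at hinner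
  -- combine to a HasSum over ℤ
  have hcomb : HasSum (fun m : ℤ => x ^ m * A m) ((2 * π * I) * g x) := by
    have := HasSum.of_nat_of_neg_add_one (f := fun m : ℤ => x ^ m * A m) houter hinner
    rwa [← sub_eq_add_neg, cauchy_annulus hg hr hxr hxR] at this
  -- use the closed form of the coefficients
  have hclosed : ∀ m : ℤ, x ^ m * A m = A 0 * ((-(x * y)) ^ m * q ^ (m * (m - 1) / 2)) := by
    intro m
    have h1 : A m = A 0 * ((-y) ^ m * q ^ (m * (m - 1) / 2)) := by
      have := coeff_closed hq0 hy hg heq m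
      rw [hA]
      simpa using this
    rw [h1, show -(x * y) = (-y) * x from by ring, mul_zpow]
    ring
  rw [funext hclosed] at hcomb
  have h2pi : (2 * ↑π * I : ℂ) ≠ 0 := two_pi_I_ne_zero
  by_cases hA0 : A 0 = 0
  · have : HasSum (fun m : ℤ => (0:ℂ)) ((2 * π * I) * g x) := by
      simpa [hA0] using hcomb
    have hz := this.unique hasSum_zero
    have hgx : g x = 0 := (mul_eq_zero.mp hz).resolve_left h2pi
    rw [hgx, hA0]
    ring
  · have hw : HasSum (fun m : ℤ => (-(x * y)) ^ m * q ^ (m * (m - 1) / 2))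
        ((A 0)⁻¹ * ((2 * π * I) * g x)) := by
      have := hcomb.mul_left (A 0)⁻¹
      simpa [inv_mul_cancel_left₀ hA0] using this
    have htheta : theta q (x * y) = (A 0)⁻¹ * ((2 * π * I) * g x) := by
      rw [theta]
      exact hw.tsum_eq
    rw [htheta]
    field_simp
end

section
/- Let q ∈ ℂ with 0 < |q| < 1. If f : ℂ × ℂ → ℂ is holomorphic on (ℂ ∖ {0}) × (ℂ ∖ {0}) and satisfies both f(qx, y) = −(x·y)^{−1}·f(x, y) and f(x, qy) = −(x·y)^{−1}·f(x, y) for all x, y ∈ ℂ ∖ {0}, then there exists c ∈ ℂ such that f(x, y) = c·ϑ(x·y; q) for all x, y ∈ ℂ ∖ {0}. (In geometric terms: the space of global sections H^0(E × E^∨, Θ(xy)) of the line bundle Θ(xy) on the product of the elliptic curve E_q = ℂ*/q^ℤ and its dual is one-dimensional.) -/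
open Complex Metric Set Filter Finset Bornology
open scoped Real Topology

lemma liouville_split (P Q : ℂ → ℂ) (hP : Differentiable ℂ P) (hQ : Differentiable ℂ Q)
    (hQ0 : Q 0 = 0) (h : ∀ z : ℂ, z ≠ 0 → P z + Q z⁻¹ = 0) :
    (∀ z, P z = 0) ∧ (∀ z, Q z = 0) := by
  have hb : IsBounded (range P) := by
    have h1 : IsBounded (P '' closedBall 0 1) :=
      ((isCompact_closedBall (0:ℂ) 1).image hP.continuous).isBounded
    have h2 : IsBounded ((fun z => -Q z) '' closedBall 0 1) :=
      ((isCompact_closedBall (0:ℂ) 1).image (hQ.continuous.neg)).isBounded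
    refine (h1.union h2).subset ?_
    rintro _ ⟨z, rfl⟩
    by_cases hz : ‖z‖ ≤ 1
    · exact Or.inl ⟨z, by simpa [Complex.dist_eq] using hz, rfl⟩
    · push_neg at hz
      have hz0 : z ≠ 0 := by
        intro h0; rw [h0] at hz; simp at hz; linarith
      have hPz : P z = -Q z⁻¹ := by linear_combination h z hz0
      refine Or.inr ⟨z⁻¹, ?_, hPz.symm⟩
      simp only [mem_closedBall, Complex.dist_eq, sub_zero, norm_inv]
      exact inv_le_one_of_one_le₀ hz.le
  have hconst : ∀ z, P z = P 0 := fun z => hP.apply_eq_apply_of_bounded hb z 0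
  have hP0 : P 0 = 0 := by
    have h1 : Tendsto (fun n : ℕ => ((n : ℂ) + 1)⁻¹) atTop (𝓝 0) := by
      have h2 : Tendsto (fun n : ℕ => ((((n : ℝ) + 1)⁻¹ : ℝ) : ℂ)) atTop (𝓝 ((0:ℝ):ℂ)) := by
        refine (Complex.continuous_ofReal.tendsto _).comp ?_
        simpa only [one_div] using tendsto_one_div_add_atTop_nhds_zero_nat (𝕜 := ℝ)
      simpa using h2.congr (by intro n; push_cast; ring_nf)
    have h3 : Tendsto (fun n : ℕ => -Q (((n : ℂ) + 1)⁻¹)) atTop (𝓝 (-Q 0)) :=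
      ((hQ.continuous.tendsto 0).comp h1).neg
    have h4 : ∀ n : ℕ, -Q (((n : ℂ) + 1)⁻¹) = P 0 := by
      intro n
      have hn : ((n : ℂ) + 1) ≠ 0 := Nat.cast_add_one_ne_zero n
      have := h _ hn
      rw [hconst ((n:ℂ)+1)] at this
      linear_combination -this
    rw [tendsto_congr h4] at h3
    have := tendsto_nhds_unique tendsto_const_nhds h3
    rw [hQ0] at this; simpa using this
  refine ⟨fun z => (hconst z).trans hP0, fun z => ?_⟩
  by_cases hz : z = 0
  · simp [hz, hQ0]
  · have h5 := h z⁻¹ (inv_ne_zero hz)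
    rw [inv_inv] at h5
    have hPz : P z⁻¹ = 0 := (hconst _).trans hP0
    linear_combination h5 - hPz


open Complex Metric Set Filter Finset Bornology
open scoped Real Topology

section Decomp
variable {g : ℂ → ℂ} (hg : ∀ z : ℂ, z ≠ 0 → DifferentiableAt ℂ g z)

/-- The normalized Cauchy integral of `g` over the circle of radius `R`. -/
noncomputable def cint (g : ℂ → ℂ) (R : ℝ) (z : ℂ) : ℂ :=
  (2 * π * I : ℂ)⁻¹ • ∮ w in C(0, R), (w - z)⁻¹ • g w

include hg

lemma gcont {R : ℝ} (hR : 0 < R) : ContinuousOn g (sphere 0 R) := by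
  intro w hw
  have hw' : ‖w‖ = R := by simpa [Complex.dist_eq] using hw
  have hw0 : w ≠ 0 := by
    intro h; rw [h] at hw'; simp at hw'; exact absurd hw'.symm hR.ne'
  exact (hg w hw0).continuousAt.continuousWithinAt

lemma cint_congr_outer {z : ℂ} {R₁ R₂ : ℝ} (h1 : 0 < R₁) (h12 : R₁ ≤ R₂)
    (hz : ‖z‖ < R₁) : cint g R₁ z = cint g R₂ z := by
  unfold cint
  congr 1
  refine (circleIntegral_eq_of_differentiable_on_annulus_off_countable h1 h12
    (s := ∅) countable_empty ?_ ?_).symm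
  · intro w hw
    have hw1 : R₁ ≤ ‖w‖ := by
      simpa [Complex.dist_eq] using hw.2
    have hwz : w ≠ z := fun h => absurd (h ▸ hw1) (not_le.mpr hz)
    have hw0 : w ≠ 0 := fun h => by simp [h] at hw1; linarith
    exact (((differentiableAt_id.sub_const z).inv (sub_ne_zero.mpr hwz)).smul
      (hg w hw0)).continuousAt.continuousWithinAt
  · intro w hw
    have hw1 : R₁ < ‖w‖ := by
      have := hw.1.2; simpa [Complex.dist_eq] using this
    have hwz : w ≠ z := fun h => absurd (h ▸ hw1) (not_lt.mpr hz.le)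
    have hw0 : w ≠ 0 := fun h => by simp [h] at hw1; linarith
    exact ((differentiableAt_id.sub_const z).inv (sub_ne_zero.mpr hwz)).smul (hg w hw0)

lemma cint_congr_inner {z : ℂ} {r₁ r₂ : ℝ} (h1 : 0 < r₁) (h12 : r₁ ≤ r₂)
    (hz : r₂ < ‖z‖) : cint g r₁ z = cint g r₂ z := by
  unfold cint
  congr 1
  refine (circleIntegral_eq_of_differentiable_on_annulus_off_countable h1 h12
    (s := ∅) countable_empty ?_ ?_).symm
  · intro w hw
    have hw2 : ‖w‖ ≤ r₂ := by simpa [Complex.dist_eq] using hw.1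
    have hw1 : r₁ ≤ ‖w‖ := by simpa [Complex.dist_eq] using hw.2
    have hwz : w ≠ z := by
      intro h; rw [h] at hw2; linarith
    have hw0 : w ≠ 0 := fun h => by simp [h] at hw1; linarith
    exact (((differentiableAt_id.sub_const z).inv (sub_ne_zero.mpr hwz)).smul
      (hg w hw0)).continuousAt.continuousWithinAt
  · intro w hw
    have hw2 : ‖w‖ < r₂ := by simpa [Complex.dist_eq] using hw.1.1
    have hw1 : r₁ < ‖w‖ := by simpa [Complex.dist_eq] using hw.1.2
    have hwz : w ≠ z := by intro h; rw [h] at hw2; linarith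
    have hw0 : w ≠ 0 := fun h => by simp [h] at hw1; linarith
    exact ((differentiableAt_id.sub_const z).inv (sub_ne_zero.mpr hwz)).smul (hg w hw0)

lemma cauchy_formula {z : ℂ} {r R : ℝ} (hr : 0 < r) (hrz : r < ‖z‖)
    (hzR : ‖z‖ < R) : g z = cint g R z - cint g r z := by
  have hz0 : z ≠ 0 := by
    intro h; rw [h] at hrz; simp at hrz; linarith
  have hrR : r ≤ R := le_of_lt (lt_trans hrz hzR)
  have hR : 0 < R := lt_of_lt_of_le hr hrR
  -- equality of the two circle integrals of `dslope g z`
  have hIk : (∮ w in C(0,R), dslope g z w) = ∮ w in C(0,r), dslope g z w := by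
    refine circleIntegral_eq_of_differentiable_on_annulus_off_countable hr hrR
      (s := {z}) (countable_singleton z) ?_ ?_
    · intro w hw
      have hw1 : r ≤ ‖w‖ := by simpa [Complex.dist_eq] using hw.2
      have hw0 : w ≠ 0 := fun h => by simp [h] at hw1; linarith
      by_cases hwz : w = z
      · subst hwz; exact (continuousAt_dslope_same.mpr (hg w hw0)).continuousWithinAt
      · exact ((continuousAt_dslope_of_ne hwz).mpr (hg w hw0).continuousAt).continuousWithinAt
    · intro w hw
      have hw1 : r < ‖w‖ := by simpa [Complex.dist_eq] using hw.1.2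
      have hw0 : w ≠ 0 := fun h => by simp [h] at hw1; linarith
      have hwz : w ≠ z := fun h => hw.2 (h ▸ rfl)
      exact (differentiableAt_dslope_of_ne hwz).mpr (hg w hw0)
  have expand : ∀ ρ : ℝ, 0 < ρ → ‖z‖ ≠ ρ →
      (∮ w in C(0,ρ), dslope g z w) =
        (∮ w in C(0,ρ), (w - z)⁻¹ • g w) - (∮ w in C(0,ρ), (w - z)⁻¹) • g z := by
    intro ρ hρ hzρ
    have hzs : ∀ w ∈ sphere (0:ℂ) ρ, w ≠ z := by
      intro w hw h
      have h2 : ‖w‖ = ρ := by simpa [Complex.dist_eq] using hw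
      rw [h] at h2
      exact hzρ h2
    have hinv : ContinuousOn (fun w : ℂ => (w - z)⁻¹) (sphere 0 ρ) := fun w hw =>
      (((continuous_sub_right z).continuousAt).inv₀
        (sub_ne_zero.mpr (hzs w hw))).continuousWithinAt
    have hint1 : CircleIntegrable (fun w => (w - z)⁻¹ • g w) 0 ρ :=
      ContinuousOn.circleIntegrable hρ.le (hinv.smul (gcont hg hρ))
    have hint2 : CircleIntegrable (fun w => (w - z)⁻¹ • g z) 0 ρ :=
      ContinuousOn.circleIntegrable hρ.le (hinv.smul continuousOn_const)
    have hdummy : True := trivial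
    have hcongr : (∮ w in C(0,ρ), dslope g z w) =
        ∮ w in C(0,ρ), ((w - z)⁻¹ • g w - (w - z)⁻¹ • g z) := by
      refine circleIntegral.integral_congr hρ.le ?_
      intro w hw
      rw [dslope_of_ne g (hzs w hw), slope_def_field]
      simp only [smul_eq_mul, div_eq_inv_mul]
      ring
    rw [hcongr, circleIntegral.integral_sub hint1 hint2, circleIntegral.integral_smul_const]
  have houter := expand R hR (ne_of_lt hzR)
  have hinner := expand r hr (ne_of_gt hrz)
  have h2pi : (∮ w in C(0,R), (w - z)⁻¹) = 2 * π * I :=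
    circleIntegral.integral_sub_inv_of_mem_ball (by simpa [Complex.dist_eq] using hzR)
  have h0 : (∮ w in C(0,r), (w - z)⁻¹) = 0 := by
    refine circleIntegral_eq_zero_of_differentiable_on_off_countable hr.le
      (s := ∅) countable_empty ?_ ?_
    · intro w hw
      have hw1 : ‖w‖ ≤ r := by simpa [Complex.dist_eq] using hw
      have hwz : w ≠ z := fun h => by rw [h] at hw1; linarith
      exact (((continuous_sub_right z).continuousAt).inv₀
        (sub_ne_zero.mpr hwz)).continuousWithinAt
    · intro w hw
      have hw1 : ‖w‖ < r := by simpa [Complex.dist_eq] using hw.1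
      have hwz : w ≠ z := fun h => by rw [h] at hw1; linarith
      exact ((differentiableAt_id (𝕜 := ℂ)).sub_const z).inv (sub_ne_zero.mpr hwz)
  rw [houter, hinner, h2pi, h0] at hIk
  simp only [smul_eq_mul, zero_mul, sub_zero] at hIk
  have hne : (2 * π * I : ℂ) ≠ 0 := by
    simp [Real.pi_ne_zero, Complex.I_ne_zero]
  unfold cint
  simp only [smul_eq_mul]
  rw [← mul_sub]
  have hkey : (∮ w in C(0,R), (w - z)⁻¹ • g w) - (∮ w in C(0,r), (w - z)⁻¹ • g w)
      = (2 * π * I) * g z := by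
    simp only [smul_eq_mul]
    linear_combination hIk
  simp only [smul_eq_mul] at hkey
  rw [hkey, inv_mul_cancel_left₀ hne]

lemma exists_decomposition :
    ∃ P Q : ℂ → ℂ, Differentiable ℂ P ∧ Differentiable ℂ Q ∧ Q 0 = 0 ∧
      ∀ z : ℂ, z ≠ 0 → g z = P z + Q z⁻¹ := by
  classical
  set P : ℂ → ℂ := fun z => cint g (‖z‖ + 1) z with hPdef
  have hPagree : ∀ (z : ℂ) (R : ℝ), ‖z‖ < R → P z = cint g R z := by
    intro z R hzR
    have h0 : (0:ℝ) < ‖z‖ + 1 := by positivity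
    rcases le_total (‖z‖ + 1) R with h | h
    · exact cint_congr_outer hg h0 h (by linarith)
    · exact (cint_congr_outer hg ((norm_nonneg z).trans_lt hzR) h hzR).symm
  have hP : Differentiable ℂ P := by
    intro z₀
    set R : ℝ := ‖z₀‖ + 2 with hRdef
    have hR0 : (0:ℝ) < R := by positivity
    set R' : NNReal := ⟨R, hR0.le⟩ with hR'def
    have hR'0 : (0:NNReal) < R' := hR0
    have hint : CircleIntegrable g 0 (R' : ℝ) :=
      (gcont hg hR0).circleIntegrable hR0.le
    have hFdiff := (hasFPowerSeriesOn_cauchy_integral hint hR'0).differentiableOn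
    have hz₀ : z₀ ∈ ball (0:ℂ) R := by
      simp only [mem_ball, Complex.dist_eq, sub_zero]
      linarith
    have hz₀' : z₀ ∈ Metric.eball (0:ℂ) (R' : ENNReal) := by
      rw [Metric.emetric_ball_nnreal]; exact hz₀
    have hFat : DifferentiableAt ℂ
        (fun w => (2 * π * I : ℂ)⁻¹ • ∮ z in C(0, (R':ℝ)), (z - w)⁻¹ • g z) z₀ :=
      hFdiff.differentiableAt (EMetric.isOpen_ball.mem_nhds hz₀')
    refine hFat.congr_of_eventuallyEq ?_
    refine ((isOpen_ball.eventually_mem hz₀).mono fun w hw => ?_)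
    have hwR : ‖w‖ < R := by simpa [Complex.dist_eq] using hw
    exact hPagree w R hwR
  set Q : ℂ → ℂ := Function.update (fun v => g v⁻¹ - P v⁻¹) 0 0 with hQdef
  have hQne : ∀ v : ℂ, v ≠ 0 → Q v = g v⁻¹ - P v⁻¹ := fun v hv => by
    rw [hQdef, Function.update_of_ne hv]
  have hQ0 : Q 0 = 0 := by rw [hQdef, Function.update_self]
  obtain ⟨C₀, hC₀⟩ := (isCompact_sphere (0:ℂ) 1).exists_bound_of_continuousOn (gcont hg one_pos)
  set C : ℝ := max C₀ 0 with hCdef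
  have hC : ∀ w ∈ sphere (0:ℂ) 1, ‖(g w)‖ ≤ C := fun w hw =>
    (hC₀ w hw).trans (le_max_left _ _)
  have hCpos : 0 ≤ C := le_max_right _ _
  -- key bound for `Q` near `0`
  have hQbound : ∀ v : ℂ, v ≠ 0 → ‖v‖ < 1/2 →
      ‖(Q v)‖ ≤ C * ‖v‖ / (1 - ‖v‖) := by
    intro v hv hv2
    have hav : 0 < ‖v‖ := by
      simpa [norm_pos_iff] using hv
    have hvinv : ‖v⁻¹‖ = (‖v‖)⁻¹ := norm_inv _
    have hvinv1 : (1:ℝ) < ‖v⁻¹‖ := by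
      rw [hvinv]
      rw [lt_inv_comm₀ one_pos hav]
      · linarith
    have hQv : Q v = -cint g 1 v⁻¹ := by
      have hgz := cauchy_formula hg (z := v⁻¹) (r := 1) (R := ‖v⁻¹‖ + 1)
        one_pos hvinv1 (by linarith)
      have hPz := hPagree v⁻¹ (‖v⁻¹‖ + 1) (by linarith)
      rw [hQne v hv, hgz, hPz]
      ring
    rw [hQv, norm_neg]
    -- bound the circle integral
    have hbd : ∀ w ∈ sphere (0:ℂ) 1, ‖(w - v⁻¹)⁻¹ • g w‖ ≤ C / (‖v⁻¹‖ - 1) := by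
      intro w hw
      have hw1 : ‖w‖ = 1 := by simpa [Complex.dist_eq] using hw
      have hlow : ‖v⁻¹‖ - 1 ≤ ‖(w - v⁻¹)‖ := by
        calc ‖v⁻¹‖ - 1 = ‖v⁻¹‖ - ‖w‖ := by rw [hw1]
        _ ≤ ‖(v⁻¹ - w)‖ := by
            simpa using norm_sub_norm_le v⁻¹ w
        _ = ‖(w - v⁻¹)‖ := norm_sub_rev v⁻¹ w
      have hpos : (0:ℝ) < ‖v⁻¹‖ - 1 := by linarith
      rw [norm_smul, norm_inv, div_eq_inv_mul]
      have h1 : (‖(w - v⁻¹)‖)⁻¹ ≤ (‖v⁻¹‖ - 1)⁻¹ := by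
        apply inv_anti₀ hpos hlow
      exact mul_le_mul h1 (hC w hw) (norm_nonneg _) (inv_nonneg.2 hpos.le)
    have hnorm := circleIntegral.norm_integral_le_of_norm_le_const (zero_le_one) hbd
    have habs2pi : ‖2 * (π:ℂ) * I‖ = 2 * π := by
      simp [abs_of_pos Real.pi_pos]
    have hpos : (0:ℝ) < ‖v⁻¹‖ - 1 := by linarith
    have hcalc : ‖(cint g 1 v⁻¹)‖ ≤ C / (‖v⁻¹‖ - 1) := by
      unfold cint
      rw [smul_eq_mul, norm_mul, norm_inv, habs2pi]
      calc (2 * π)⁻¹ * ‖∮ w in C(0,1), (w - v⁻¹)⁻¹ • g w‖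
          ≤ (2 * π)⁻¹ * (2 * π * 1 * (C / (‖v⁻¹‖ - 1))) := by
            apply mul_le_mul_of_nonneg_left _ (by positivity)
            simpa using hnorm
        _ = C / (‖v⁻¹‖ - 1) := by
            field_simp
    refine hcalc.trans_eq ?_
    rw [hvinv]
    have h1 : (‖v‖)⁻¹ - 1 = (1 - ‖v‖) / ‖v‖ := by
      field_simp
    rw [h1, div_div_eq_mul_div]
  -- continuity of `Q` at `0`
  have hQtend : Tendsto Q (𝓝 0) (𝓝 0) := by
    have hb : Tendsto (fun v : ℂ => C * ‖v‖ / (1 - ‖v‖)) (𝓝 0) (𝓝 0) := by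
      have h1 : ContinuousAt (fun v : ℂ => C * ‖v‖ / (1 - ‖v‖)) 0 := by
        apply ContinuousAt.div
        · exact (continuous_const.mul continuous_norm).continuousAt
        · exact (continuous_const.sub continuous_norm).continuousAt
        · simp
      have h2 := h1.tendsto
      simpa using h2
    refine squeeze_zero_norm' ?_ hb
    have hball : Metric.ball (0:ℂ) (1/2) ∈ 𝓝 (0:ℂ) := Metric.ball_mem_nhds _ (by norm_num)
    filter_upwards [hball] with v hv
    by_cases hv0 : v = 0
    · simp [hv0, hQ0]
    · have hv' : ‖v‖ < 1/2 := by
        simpa [Complex.dist_eq] using hv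
      have := hQbound v hv0 hv'
      simpa using this
  have hQdiffne : ∀ v : ℂ, v ≠ 0 → DifferentiableAt ℂ Q v := by
    intro v hv
    have hinv : DifferentiableAt ℂ (fun v : ℂ => v⁻¹) v := differentiableAt_id.inv hv
    have h1 : DifferentiableAt ℂ (fun v : ℂ => g v⁻¹ - P v⁻¹) v :=
      ((hg v⁻¹ (inv_ne_zero hv)).comp v hinv).sub ((hP v⁻¹).comp v hinv)
    refine h1.congr_of_eventuallyEq ?_
    filter_upwards [compl_singleton_mem_nhds hv] with z hz
    exact hQne z hz
  have hQdiff : Differentiable ℂ Q := by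
    intro v
    by_cases hv : v = 0
    · subst hv
      refine (Complex.analyticAt_of_differentiable_on_punctured_nhds_of_continuousAt
        ?_ ?_).differentiableAt
      · exact eventually_mem_nhdsWithin.mono fun z hz => hQdiffne z hz
      · rw [ContinuousAt, hQ0]; exact hQtend
    · exact hQdiffne v hv
  refine ⟨P, Q, hP, hQdiff, hQ0, fun z hz => ?_⟩
  rw [hQne z⁻¹ (inv_ne_zero hz), inv_inv]
  ring

end Decomp


open Complex Metric Set Filter Finset Bornology
open scoped Real Topology

lemma summable_of_step (q w : ℂ) (hq1 : ‖q‖ < 1) (u : ℕ → ℂ)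
    (hstep : ∀ n, u (n+1) = u n * (w * q ^ n)) : Summable u := by
  refine summable_of_ratio_norm_eventually_le (r := 1/2) (by norm_num) ?_
  have h0 : Tendsto (fun n : ℕ => ‖w‖ * ‖q‖ ^ n) atTop (𝓝 0) := by
    simpa using (tendsto_pow_atTop_nhds_zero_of_lt_one (norm_nonneg q)
      hq1).const_mul (‖w‖)
  filter_upwards [h0.eventually (eventually_le_nhds (by norm_num : (0:ℝ) < 1/2))] with n hn
  rw [hstep n, norm_mul]
  calc ‖u n‖ * ‖w * q ^ n‖ ≤ ‖u n‖ * (1/2) := by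
        apply mul_le_mul_of_nonneg_left _ (norm_nonneg _)
        simpa [norm_mul, norm_pow] using hn
    _ = 1/2 * ‖u n‖ := by ring

lemma even_int_mul_pred (x : ℤ) : Even (x * (x - 1)) := by
  obtain ⟨k, hk⟩ := Int.even_mul_succ_self (x - 1)
  exact ⟨k, by linear_combination hk⟩

lemma qpow_step (q : ℂ) (hq : q ≠ 0) (a b d : ℤ) (hab : b = a + 2*d) (ha : Even a) :
    q ^ (b/2) = q ^ (a/2) * q ^ d := by
  obtain ⟨k, hk⟩ := ha
  have h1 : a / 2 = k := by omega
  have h2 : b / 2 = k + d := by omega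
  rw [h1, h2, zpow_add₀ hq]

lemma exp_arith1 (n : ℕ) :
    ((n:ℤ) * ((n:ℤ) - 1)) / 2 + (n:ℤ) = (((n:ℕ)+1:ℤ) * (((n:ℕ)+1:ℤ) - 1)) / 2 := by
  obtain ⟨k, hk⟩ := Int.even_mul_succ_self ((n:ℤ) - 1)
  have h1 : (n:ℤ) * ((n:ℤ) - 1) = 2 * k := by linear_combination hk
  have h2 : ((n:ℤ)+1) * (((n:ℤ)+1) - 1) = 2 * (k + n) := by linear_combination h1
  push_cast
  rw [h1, h2, Int.mul_ediv_cancel_left _ two_ne_zero, Int.mul_ediv_cancel_left _ two_ne_zero]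

lemma exp_arith2 (n : ℕ) :
    ((n:ℤ) * ((n:ℤ) + 1)) / 2 + ((n:ℤ)+1) = (((n:ℤ)+1) * ((n:ℤ) + 2)) / 2 := by
  obtain ⟨k, hk⟩ := Int.even_mul_succ_self (n:ℤ)
  have h1 : (n:ℤ) * ((n:ℤ) + 1) = 2 * k := by linear_combination hk
  have h2 : ((n:ℤ)+1) * ((n:ℤ) + 2) = 2 * (k + n + 1) := by linear_combination h1
  rw [h1, h2, Int.mul_ediv_cancel_left _ two_ne_zero, Int.mul_ediv_cancel_left _ two_ne_zero]
  ring

lemma exp_arith3 (m : ℕ) :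
    (-(m:ℤ)-1) * ((-(m:ℤ)-1) - 1) / 2 = ((m:ℤ)+1) * ((m:ℤ) + 2) / 2 := by
  have : (-(m:ℤ)-1) * ((-(m:ℤ)-1) - 1) = ((m:ℤ)+1) * ((m:ℤ) + 2) := by ring
  rw [this]


lemma one_var (q : ℂ) (hq0 : 0 < ‖q‖) (hq1 : ‖q‖ < 1) (g : ℂ → ℂ)
    (hg : ∀ z : ℂ, z ≠ 0 → DifferentiableAt ℂ g z)
    (heq : ∀ z : ℂ, z ≠ 0 → g (q * z) = -z⁻¹ * g z) :
    ∃ c : ℂ, ∀ z : ℂ, z ≠ 0 → g z = c * theta q z := by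
  have hqne : q ≠ 0 := by
    intro h; rw [h] at hq0; simp at hq0
  obtain ⟨P, Q, hP, hQ, hQ0, hdec⟩ := exists_decomposition hg
  set Φ : ℂ → ℂ := fun z => P (q*z) + dslope P 0 z with hΦdef
  set Ψ : ℂ → ℂ := fun v => Q (v/q) + v * (Q v + P 0) with hΨdef
  have hΦdiff : Differentiable ℂ Φ := by
    have h1 : Differentiable ℂ (fun z : ℂ => P (q*z)) :=
      hP.comp ((differentiable_const q).mul differentiable_id)
    have h2 : Differentiable ℂ (dslope P 0) := by
      rw [← differentiableOn_univ]
      exact (Complex.differentiableOn_dslope univ_mem).mpr hP.differentiableOn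
    exact h1.add h2
  have hΨdiff : Differentiable ℂ Ψ := by
    have h1 : Differentiable ℂ (fun v : ℂ => Q (v/q)) :=
      hQ.comp (differentiable_id.div_const q)
    exact h1.add (differentiable_id.mul (hQ.add (differentiable_const (P 0))))
  have hΨ0 : Ψ 0 = 0 := by simp [hΨdef, hQ0]
  have key : ∀ z : ℂ, z ≠ 0 → Φ z + Ψ z⁻¹ = 0 := by
    intro z hz
    have h1 := hdec z hz
    have h2 := hdec (q*z) (mul_ne_zero hqne hz)
    have h3 := heq z hz
    have hds : dslope P 0 z = (P z - P 0) / z := by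
      rw [dslope_of_ne _ hz, slope_def_field, sub_zero]
    have hinv : z⁻¹ / q = (q*z)⁻¹ := by
      rw [mul_inv]; ring
    simp only [hΦdef, hΨdef, hds]
    rw [hinv]
    linear_combination -h2 + h3 - z⁻¹ * h1
  obtain ⟨hΦ0, hΨ0'⟩ := liouville_split Φ Ψ hΦdiff hΨdiff hΨ0 key
  -- functional equations for P and Q
  have hPrec : ∀ z : ℂ, P z = P 0 - z * P (q*z) := by
    intro z
    by_cases hz : z = 0
    · simp [hz]
    · have h := hΦ0 z
      simp only [hΦdef] at h
      rw [dslope_of_ne _ hz, slope_def_field, sub_zero] at h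
      field_simp at h
      linear_combination h
  have hQrec : ∀ u : ℂ, Q u = -(q*u) * Q (q*u) - q * u * P 0 := by
    intro u
    have h := hΨ0' (q*u)
    simp only [hΨdef] at h
    rw [mul_div_cancel_left₀ u hqne] at h
    linear_combination h
  -- the telescoping identities
  have T1 : ∀ (z : ℂ) (N : ℕ), P z =
      (∑ k ∈ Finset.range N, P 0 * ((-z)^k * q^(((k:ℤ) * ((k:ℤ)-1))/2))) +
        (-z)^N * q^(((N:ℤ) * ((N:ℤ)-1))/2) * P (q^N * z) := by
    intro z N
    induction N with
    | zero => simp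
    | succ N ih =>
      rw [Finset.sum_range_succ]
      have hstep := hPrec (q^N * z)
      have hqq : q * (q^N * z) = q^(N+1) * z := by ring
      rw [hqq] at hstep
      rw [ih, hstep]
      have hexp : q^((((N:ℕ)+1:ℤ) * (((N:ℕ)+1:ℤ) - 1))/2)
          = q^(((N:ℤ) * ((N:ℤ)-1))/2) * q^(N:ℤ) := by
        rw [← zpow_add₀ hqne, exp_arith1]
      push_cast at hexp ⊢
      rw [hexp]
      rw [zpow_natCast]
      ring
  have T2 : ∀ (v : ℂ) (N : ℕ), Q v =
      (∑ k ∈ Finset.range N, P 0 * ((-1:ℂ)^(k+1) * q^((((k:ℤ)+1) * ((k:ℤ)+2))/2) * v^(k+1))) +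
        (-1:ℂ)^N * q^(((N:ℤ) * ((N:ℤ)+1))/2) * v^N * Q (q^N * v) := by
    intro v N
    induction N with
    | zero => simp
    | succ N ih =>
      rw [Finset.sum_range_succ]
      have hstep := hQrec (q^N * v)
      have hqq : q * (q^N * v) = q^(N+1) * v := by ring
      rw [hqq] at hstep
      rw [ih, hstep]
      have hee : ((N:ℤ)+1)*((N:ℤ)+1+1) = ((N:ℤ)+1)*((N:ℤ)+2) := by ring
      have hexp : q^(((((N:ℤ)+1)) * (((N:ℤ))+2))/2)
          = q^((((N:ℤ)) * (((N:ℤ))+1))/2) * q^((N:ℤ)+1) := by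
        rw [← zpow_add₀ hqne, exp_arith2]
      push_cast
      rw [hee, hexp]
      have : q ^ ((N:ℤ)+1) = q^(N+1) := by
        rw [← zpow_natCast q (N+1)]; push_cast; ring_nf
      rw [this]
      push_cast
      ring
  -- summability and limits
  refine ⟨P 0, fun z hz => ?_⟩
  set a : ℕ → ℂ := fun n => (-z)^n * q^(((n:ℤ) * ((n:ℤ)-1))/2) with hadef
  have hastep : ∀ n, a (n+1) = a n * ((-z) * q ^ n) := by
    intro n
    simp only [hadef]
    push_cast
    rw [qpow_step q hqne ((n:ℤ)*((n:ℤ)-1)) (((n:ℤ)+1)*((n:ℤ)+1-1)) ((n:ℕ):ℤ)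
      (by ring) (even_int_mul_pred _), zpow_natCast, pow_succ]
    ring
  have hasum : Summable a := summable_of_step q (-z) hq1 a hastep
  have hq3 : Tendsto (fun N : ℕ => q^N * z) atTop (𝓝 0) := by
    have h1 : Tendsto (fun N : ℕ => q^N) atTop (𝓝 0) :=
      tendsto_pow_atTop_nhds_zero_of_norm_lt_one (by simpa using hq1)
    simpa using h1.mul_const z
  have haP : HasSum (fun n => P 0 * a n) (P z) := by
    have hrem : Tendsto (fun N : ℕ => a N * P (q^N * z)) atTop (𝓝 0) := by
      have h2 : Tendsto a atTop (𝓝 0) := hasum.tendsto_atTop_zero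
      have h4 : Tendsto (fun N : ℕ => P (q^N * z)) atTop (𝓝 (P 0)) :=
        (hP.continuous.tendsto 0).comp hq3
      simpa using h2.mul h4
    have h4 : ∀ N, ∑ k ∈ Finset.range N, P 0 * a k = P z - a N * P (q^N * z) := by
      intro N
      have hT := T1 z N
      simp only [hadef]
      linear_combination -hT
    have h1 : Tendsto (fun N => ∑ k ∈ Finset.range N, P 0 * a k) atTop (𝓝 (P z)) := by
      rw [tendsto_congr h4]
      simpa using tendsto_const_nhds.sub hrem
    have h5 := (hasum.mul_left (P 0)).hasSum
    have h6 := h5.tendsto_sum_nat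
    have h7 := tendsto_nhds_unique h6 h1
    rwa [h7] at h5
  -- negative part
  set b : ℕ → ℂ := fun m => (-1:ℂ)^(m+1) * q^((((m:ℤ)+1) * ((m:ℤ)+2))/2) * (z⁻¹)^(m+1) with hbdef
  have hbstep : ∀ m, b (m+1) = b m * ((-z⁻¹ * q^2) * q ^ m) := by
    intro m
    simp only [hbdef]
    push_cast
    have hEv : Even (((m:ℤ)+1) * ((m:ℤ)+2)) := by
      obtain ⟨k, hk⟩ := Int.even_mul_succ_self ((m:ℤ)+1)
      exact ⟨k, by linear_combination hk⟩
    rw [qpow_step q hqne (((m:ℤ)+1)*((m:ℤ)+2)) (((m:ℤ)+1+1)*((m:ℤ)+1+2)) (((m+2:ℕ)):ℤ)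
      (by push_cast; ring) hEv, zpow_natCast]
    ring
  have hbsum : Summable b := summable_of_step q (-z⁻¹ * q^2) hq1 b hbstep
  set r : ℕ → ℂ := fun N => (-1:ℂ)^N * q^((((N:ℤ)) * ((N:ℤ)+1))/2) * (z⁻¹)^N with hrdef
  have hrstep : ∀ N, r (N+1) = r N * ((-z⁻¹ * q) * q ^ N) := by
    intro N
    simp only [hrdef]
    push_cast
    rw [qpow_step q hqne ((N:ℤ)*((N:ℤ)+1)) (((N:ℤ)+1)*((N:ℤ)+1+1)) (((N+1:ℕ)):ℤ)
      (by push_cast; ring) (Int.even_mul_succ_self (N:ℤ)), zpow_natCast]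
    ring
  have hrsum : Summable r := summable_of_step q (-z⁻¹ * q) hq1 r hrstep
  have hbQ : HasSum (fun m => P 0 * b m) (Q z⁻¹) := by
    have hrem : Tendsto (fun N : ℕ => r N * Q (q^N * z⁻¹)) atTop (𝓝 0) := by
      have h2 : Tendsto r atTop (𝓝 0) := hrsum.tendsto_atTop_zero
      have h3 : Tendsto (fun N : ℕ => q^N * z⁻¹) atTop (𝓝 0) := by
        have h1 : Tendsto (fun N : ℕ => q^N) atTop (𝓝 0) :=
          tendsto_pow_atTop_nhds_zero_of_norm_lt_one (by simpa using hq1)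
        simpa using h1.mul_const z⁻¹
      have h4 : Tendsto (fun N : ℕ => Q (q^N * z⁻¹)) atTop (𝓝 0) := by
        have := (hQ.continuous.tendsto 0).comp h3
        rwa [hQ0] at this
      simpa using h2.mul h4
    have h4 : ∀ N, ∑ k ∈ Finset.range N, P 0 * b k = Q z⁻¹ - r N * Q (q^N * z⁻¹) := by
      intro N
      have hT := T2 z⁻¹ N
      simp only [hbdef, hrdef]
      linear_combination -hT
    have h1 : Tendsto (fun N => ∑ k ∈ Finset.range N, P 0 * b k) atTop (𝓝 (Q z⁻¹)) := by
      rw [tendsto_congr h4]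
      simpa using tendsto_const_nhds.sub hrem
    have h5 := (hbsum.mul_left (P 0)).hasSum
    have h6 := h5.tendsto_sum_nat
    have h7 := tendsto_nhds_unique h6 h1
    rwa [h7] at h5
  -- combine into a sum over ℤ
  set F : ℤ → ℂ := fun n => P 0 * ((-z)^n * q^(n * (n - 1) / 2)) with hFdef
  have hFpos : ∀ n : ℕ, F (n:ℤ) = P 0 * a n := by
    intro n
    simp only [hFdef, hadef]
    rw [zpow_natCast]
  have hFneg : ∀ m : ℕ, F (-((m:ℤ)+1)) = P 0 * b m := by
    intro m
    simp only [hFdef, hbdef]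
    have he : (-((m:ℤ)+1)) * ((-((m:ℤ)+1)) - 1) / 2 = ((m:ℤ)+1) * ((m:ℤ)+2) / 2 := by
      have h1 : (-((m:ℤ)+1)) * ((-((m:ℤ)+1)) - 1) = ((m:ℤ)+1) * ((m:ℤ)+2) := by ring
      rw [h1]
    rw [he]
    have hz' : (-z)^(-((m:ℤ)+1)) = (-1:ℂ)^(m+1) * (z⁻¹)^(m+1) := by
      have h1 : (-((m:ℤ)+1)) = -(((m+1:ℕ)):ℤ) := by push_cast; ring
      have h2 : ((-1:ℂ)^(m+1))⁻¹ = (-1:ℂ)^(m+1) := by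
        rcases Nat.even_or_odd (m+1) with h | h
        · rw [h.neg_one_pow]; norm_num
        · rw [h.neg_one_pow]; norm_num
      rw [h1, zpow_neg, zpow_natCast, neg_pow, mul_inv, h2, inv_pow]
    rw [hz']
    ring
  have hFsum : HasSum F (P z + Q z⁻¹) := by
    refine HasSum.of_nat_of_neg_add_one ?_ ?_
    · have : (fun n : ℕ => F (n:ℤ)) = fun n => P 0 * a n := funext hFpos
      rw [this]; exact haP
    · have : (fun m : ℕ => F (-((m:ℤ)+1))) = fun m => P 0 * b m := funext hFneg
      rw [this]; exact hbQ
  have hgz : g z = P z + Q z⁻¹ := hdec z hz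
  by_cases hc : P 0 = 0
  · have hzero : F = fun _ => 0 := by funext n; simp [hFdef, hc]
    rw [hzero] at hFsum
    have := hFsum.unique hasSum_zero
    rw [hgz, this, hc, zero_mul]
  · have hG : HasSum (fun n : ℤ => (-z)^n * q^(n*(n-1)/2)) ((P z + Q z⁻¹)/(P 0)) := by
      have h1 := hFsum.div_const (P 0)
      have h2 : (fun n => F n / P 0) = fun n : ℤ => (-z)^n * q^(n*(n-1)/2) := by
        funext n
        simp only [hFdef]
        rw [mul_div_cancel_left₀ _ hc]
      rwa [h2] at h1
    have h3 : theta q z = (P z + Q z⁻¹)/(P 0) := hG.tsum_eq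
    rw [hgz, h3]
    field_simp


/-- For `0 < |q| < 1`, any `f : ℂ × ℂ → ℂ` holomorphic on `(ℂ ∖ {0}) × (ℂ ∖ {0})`
satisfying `f(qx, y) = −(x·y)⁻¹·f(x, y)` and `f(x, qy) = −(x·y)⁻¹·f(x, y)` is a constant
multiple of `(x,y) ↦ ϑ(x·y;q)`: the space of global sections `H⁰(E × E^∨, Θ(xy))` is
one-dimensional. -/
theorem sections_product_theta (q : ℂ)
    (hq0 : 0 < ‖q‖) (hq1 : ‖q‖ < 1)
    (f : ℂ × ℂ → ℂ)
    (hf : ∀ x y : ℂ, x ≠ 0 → y ≠ 0 → DifferentiableAt ℂ f (x, y))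
    (heq₁ : ∀ x y : ℂ, x ≠ 0 → y ≠ 0 → f (q * x, y) = -(x * y)⁻¹ * f (x, y))
    (heq₂ : ∀ x y : ℂ, x ≠ 0 → y ≠ 0 → f (x, q * y) = -(x * y)⁻¹ * f (x, y)) :
    ∃ c : ℂ, ∀ x y : ℂ, x ≠ 0 → y ≠ 0 → f (x, y) = c * theta q (x * y) := by
  have hqne : q ≠ 0 := by
    intro h; rw [h] at hq0; simp at hq0
  have stepA : ∀ x y : ℂ, x ≠ 0 → y ≠ 0 → f (x, y) = f (x*y, 1) := by
    intro x y hx hy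
    set s : ℂ := x*y with hsdef
    have hs : s ≠ 0 := mul_ne_zero hx hy
    set h : ℂ → ℂ := fun t => f (t, s * t⁻¹) with hhdef
    have hh : ∀ t : ℂ, t ≠ 0 → DifferentiableAt ℂ h t := by
      intro t ht
      have h1 : DifferentiableAt ℂ (fun t : ℂ => (t, s * t⁻¹)) t :=
        DifferentiableAt.prodMk differentiableAt_id
          ((differentiableAt_const s).mul (differentiableAt_id.inv ht))
      exact (hf t (s*t⁻¹) ht (mul_ne_zero hs (inv_ne_zero ht))).comp t h1
    have hper : ∀ t : ℂ, t ≠ 0 → h (q * t) = h t := by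
      intro t ht
      have hqt : q * t ≠ 0 := mul_ne_zero hqne ht
      have hA : s * (q*t)⁻¹ ≠ 0 := mul_ne_zero hs (inv_ne_zero hqt)
      have e1 := heq₁ t (s * (q*t)⁻¹) ht hA
      have e2 := heq₂ t (s * (q*t)⁻¹) ht hA
      have e3 : q * (s * (q*t)⁻¹) = s * t⁻¹ := by
        field_simp
      simp only [hhdef]
      rw [e1, ← e3, e2]
    set H : ℂ → ℂ := fun w => h (Complex.exp w) with hHdef
    have HD : Differentiable ℂ H := fun w =>
      (hh (Complex.exp w) (Complex.exp_ne_zero w)).comp w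
        Complex.differentiable_exp.differentiableAt
    set L : ℂ := Complex.log q with hLdef
    have hLre : L.re = Real.log (‖q‖) := Complex.log_re q
    have hLneg : L.re < 0 := by rw [hLre]; exact Real.log_neg hq0 hq1
    have hperL : Function.Periodic H L := by
      intro w
      simp only [hHdef]
      rw [Complex.exp_add, hLdef, Complex.exp_log hqne, mul_comm]
      exact hper (Complex.exp w) (Complex.exp_ne_zero w)
    have hper2 : Function.Periodic H (2 * π * I) := by
      intro w
      simp only [hHdef]
      rw [Complex.exp_add, Complex.exp_two_pi_mul_I, mul_one]
    set K : Set ℂ := (fun p : ℝ × ℝ => (p.1:ℂ) * L + (p.2:ℂ) * (2*π*I)) ''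
      (Icc (0:ℝ) 1 ×ˢ Icc (0:ℝ) 1) with hKdef
    have hK : IsCompact K := (isCompact_Icc.prod isCompact_Icc).image
      (((Complex.continuous_ofReal.comp continuous_fst).mul continuous_const).add
        ((Complex.continuous_ofReal.comp continuous_snd).mul continuous_const))
    have hsub : range H ⊆ H '' K := by
      rintro _ ⟨w, rfl⟩
      set aa : ℝ := w.re / L.re with haadef
      set bb : ℝ := (w.im - aa * L.im) / (2*π) with hbbdef
      have hw : w = (aa:ℂ) * L + (bb:ℂ) * (2*π*I) := by
        apply Complex.ext
        · simp only [Complex.add_re, Complex.mul_re, Complex.ofReal_re, Complex.ofReal_im,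
            Complex.mul_im, Complex.I_re, Complex.I_im, Complex.re_ofNat, Complex.im_ofNat]
          rw [haadef, div_mul_cancel₀ _ hLneg.ne]
          ring
        · simp only [Complex.add_im, Complex.mul_re, Complex.ofReal_re, Complex.ofReal_im,
            Complex.mul_im, Complex.I_re, Complex.I_im, Complex.re_ofNat, Complex.im_ofNat]
          rw [hbbdef]
          field_simp
          ring
      set m : ℤ := ⌊aa⌋ with hmdef
      set n : ℤ := ⌊bb⌋ with hndef
      refine ⟨w - (m:ℂ)*L - (n:ℂ)*(2*π*I), ?_, ?_⟩
      · refine ⟨(aa - m, bb - n), ⟨⟨?_, ?_⟩, ?_, ?_⟩, ?_⟩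
        · exact sub_nonneg.mpr (Int.floor_le aa)
        · have := Int.fract_lt_one aa
          rw [Int.fract] at this
          exact this.le
        · exact sub_nonneg.mpr (Int.floor_le bb)
        · have := Int.fract_lt_one bb
          rw [Int.fract] at this
          exact this.le
        · push_cast
          linear_combination -hw
      · have p1 : H (w - (m:ℂ)*L) = H w := by
          have := (hperL.int_mul m).sub_eq w
          simpa using this
        have p2 : H (w - (m:ℂ)*L - (n:ℂ)*(2*π*I)) = H (w - (m:ℂ)*L) := by
          have := (hper2.int_mul n).sub_eq (w - (m:ℂ)*L)
          simpa [mul_assoc] using this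
        exact p2.trans p1
    have hbound : IsBounded (range H) := ((hK.image HD.continuous).isBounded).subset hsub
    have hcc : h x = h s := by
      have e1 : h x = H (Complex.log x) := by
        simp only [hHdef]; rw [Complex.exp_log hx]
      have e2 : h s = H (Complex.log s) := by
        simp only [hHdef]; rw [Complex.exp_log hs]
      rw [e1, e2]
      exact HD.apply_eq_apply_of_bounded hbound _ _
    have hx1 : h x = f (x, y) := by
      simp only [hhdef]
      have harg : s * x⁻¹ = y := by
        rw [hsdef]; field_simp
      rw [harg]
    have hs1 : h s = f (s, 1) := by
      simp only [hhdef]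
      rw [mul_inv_cancel₀ hs]
    rw [← hx1, hcc, hs1]
  obtain ⟨c, hcthm⟩ := one_var q hq0 hq1 (fun z => f (z, 1))
    (fun z hz => (hf z 1 hz one_ne_zero).comp z
      (differentiableAt_id.prodMk (differentiableAt_const 1)))
    (fun z hz => by simpa [mul_one] using heq₁ z 1 hz one_ne_zero)
  exact ⟨c, fun x y hx hy => by
    rw [stepA x y hx hy]
    exact hcthm (x*y) (mul_ne_zero hx hy)⟩
end
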